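/- arXiv:2106.03942 — 6 statements merged into one kernel-verified Lean document; each statement's English description precedes it below -/
import Mathlib

section
/- For every integer n ≥ 0 and every complex number q with 0 < |q| < 1, the series ∑_{k=0}^∞ (q^{(n+k)²} − q^{(n+k+1)²}) · q^{−nk} · C_q(2n+k, 2n) converges absolutely and its sum equals q^{n²} / ∏_{j=1}^{n} (1 − q^{n+j}). -/
/-- The q-Pochhammer symbol `(a;q)_m = ∏_{l=0}^{m-1} (1 - a q^l)`. -/
noncomputable def qPoch (a q : ℂ) (m : ℕ) : ℂ := ∏ l ∈ Finset.range m, (1 - a * q ^ l)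

/-- The Gaussian binomial coefficient `C_q(m,r) = (q;q)_m / ((q;q)_r (q;q)_{m-r})`. -/
noncomputable def qBinom (q : ℂ) (m r : ℕ) : ℂ :=
  qPoch q q m / (qPoch q q r * qPoch q q (m - r))

noncomputable def tt (q : ℂ) (n k : ℕ) : ℂ :=
  (1 - q ^ (2*n+2*k+1)) * q ^ (n^2+n*k+k^2) * qBinom q (2*n+k) (2*n)

noncomputable def gg (q : ℂ) (n k : ℕ) : ℂ :=
  q ^ (n^2+n*k+k^2+2*n+1) * (1 - q ^ k) *
    (1 - q ^ (n+1) - q ^ (n+k+1) + q ^ (3*n+2*k+2)) * qBinom q (2*n+k) (2*n)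

section lemmas

variable {q : ℂ}

lemma one_sub_pow_ne (hq1 : ‖q‖ < 1) (m : ℕ) (hm : m ≠ 0) : (1 : ℂ) - q ^ m ≠ 0 := by
  intro h
  rw [sub_eq_zero] at h
  have h2 : ‖q‖ ^ m < 1 := pow_lt_one₀ (norm_nonneg q) hq1 hm
  rw [← norm_pow, ← h] at h2
  simp at h2

lemma qPoch_qq_ne_zero (hq1 : ‖q‖ < 1) (m : ℕ) : qPoch q q m ≠ 0 := by
  refine Finset.prod_ne_zero_iff.2 fun l _ => ?_
  have h := one_sub_pow_ne hq1 (l+1) (Nat.succ_ne_zero l)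
  intro h2; apply h
  rw [← h2]; ring

lemma qPoch_add' (m r : ℕ) :
    qPoch q q (m + r) = qPoch q q m * ∏ i ∈ Finset.range r, (1 - q ^ (m+1+i)) := by
  unfold qPoch
  rw [Finset.prod_range_add]
  congr 1
  exact Finset.prod_congr rfl fun i _ => by ring

lemma qBinom_eq (hq1 : ‖q‖ < 1) (m k : ℕ) :
    qBinom q (2*m+k) (2*m) = (∏ i ∈ Finset.range (2*m), (1 - q ^ (k+1+i))) / qPoch q q (2*m) := by
  unfold qBinom
  rw [show 2*m+k = k+2*m from by ring, Nat.add_sub_cancel, qPoch_add']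
  rw [mul_comm (qPoch q q (2*m)) (qPoch q q k),
    mul_div_mul_left _ _ (qPoch_qq_ne_zero hq1 k)]

lemma norm_one_sub_pow_le (hq1 : ‖q‖ < 1) (m : ℕ) : ‖(1 : ℂ) - q ^ m‖ ≤ 2 := by
  calc ‖(1 : ℂ) - q ^ m‖ ≤ ‖(1:ℂ)‖ + ‖q ^ m‖ := norm_sub_le _ _
  _ ≤ 1 + 1 := by
      rw [norm_one, norm_pow]
      have : ‖q‖ ^ m ≤ 1 := pow_le_one₀ (norm_nonneg q) hq1.le
      linarith
  _ = 2 := by norm_num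

lemma my_norm_mul_le {a b : ℂ} {x y : ℝ} (ha : ‖a‖ ≤ x) (hb : ‖b‖ ≤ y) :
    ‖a * b‖ ≤ x * y := by
  rw [norm_mul]
  exact mul_le_mul ha hb (norm_nonneg _) ((norm_nonneg a).trans ha)

lemma qBinom_norm_le (hq1 : ‖q‖ < 1) (m k : ℕ) :
    ‖qBinom q (2*m+k) (2*m)‖ ≤ 2 ^ (2*m) / ‖qPoch q q (2*m)‖ := by
  rw [qBinom_eq hq1, norm_div]
  have hpos : 0 < ‖qPoch q q (2*m)‖ := norm_pos_iff.2 (qPoch_qq_ne_zero hq1 _)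
  have hA : ‖∏ i ∈ Finset.range (2*m), ((1:ℂ) - q ^ (k+1+i))‖ ≤ 2 ^ (2*m) := by
    calc ‖∏ i ∈ Finset.range (2*m), ((1:ℂ) - q ^ (k+1+i))‖
        = ∏ i ∈ Finset.range (2*m), ‖(1:ℂ) - q ^ (k+1+i)‖ := norm_prod _ _
    _ ≤ ∏ _i ∈ Finset.range (2*m), (2:ℝ) :=
        Finset.prod_le_prod (fun i _ => norm_nonneg _) (fun i _ => norm_one_sub_pow_le hq1 _)
    _ = 2 ^ (2*m) := by simp
  exact div_le_div₀ (by positivity) hA hpos le_rfl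

lemma norm_pow_le_pow (hq1 : ‖q‖ < 1) {e k : ℕ} (hk : k ≤ e) : ‖q ^ e‖ ≤ ‖q‖ ^ k := by
  rw [norm_pow]
  exact pow_le_pow_of_le_one (norm_nonneg q) hq1.le hk

lemma tt_norm_le (hq1 : ‖q‖ < 1) (n k : ℕ) :
    ‖tt q n k‖ ≤ (2 * (2 ^ (2*n) / ‖qPoch q q (2*n)‖)) * ‖q‖ ^ k := by
  have hk : k ≤ n^2+n*k+k^2 :=
    le_trans (Nat.le_self_pow two_ne_zero k) (Nat.le_add_left _ _)
  have h := my_norm_mul_le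
    (my_norm_mul_le (norm_one_sub_pow_le hq1 (2*n+2*k+1)) (norm_pow_le_pow hq1 hk))
    (qBinom_norm_le hq1 n k)
  unfold tt
  calc ‖(1 - q ^ (2*n+2*k+1)) * q ^ (n^2+n*k+k^2) * qBinom q (2*n+k) (2*n)‖
      ≤ 2 * ‖q‖ ^ k * (2 ^ (2*n) / ‖qPoch q q (2*n)‖) := h
  _ = (2 * (2 ^ (2*n) / ‖qPoch q q (2*n)‖)) * ‖q‖ ^ k := by ring

lemma gg_norm_le (hq1 : ‖q‖ < 1) (n k : ℕ) :
    ‖gg q n k‖ ≤ (8 * (2 ^ (2*n) / ‖qPoch q q (2*n)‖)) * ‖q‖ ^ k := by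
  have hk0 : k ≤ n^2+n*k+k^2 :=
    le_trans (Nat.le_self_pow two_ne_zero k) (Nat.le_add_left _ _)
  have hk : k ≤ n^2+n*k+k^2+2*n+1 :=
    (hk0.trans (Nat.le_add_right _ (2*n))).trans (Nat.le_add_right _ 1)
  have s1 : ‖(1:ℂ) - q ^ (n+1)‖ ≤ 2 := norm_one_sub_pow_le hq1 _
  have s2 : ‖q ^ (n+k+1)‖ ≤ 1 := by
    rw [norm_pow]; exact pow_le_one₀ (norm_nonneg q) hq1.le
  have s3 : ‖q ^ (3*n+2*k+2)‖ ≤ 1 := by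
    rw [norm_pow]; exact pow_le_one₀ (norm_nonneg q) hq1.le
  have h4 : ‖(1:ℂ) - q ^ (n+1) - q ^ (n+k+1) + q ^ (3*n+2*k+2)‖ ≤ 4 := by
    calc ‖(1:ℂ) - q ^ (n+1) - q ^ (n+k+1) + q ^ (3*n+2*k+2)‖
        ≤ ‖(1:ℂ) - q ^ (n+1) - q ^ (n+k+1)‖ + ‖q ^ (3*n+2*k+2)‖ := norm_add_le _ _
      _ ≤ (‖(1:ℂ) - q ^ (n+1)‖ + ‖q ^ (n+k+1)‖) + ‖q ^ (3*n+2*k+2)‖ :=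
          add_le_add (norm_sub_le _ _) le_rfl
      _ ≤ (2 + 1) + 1 := add_le_add (add_le_add s1 s2) s3
      _ = 4 := by norm_num
  have h := my_norm_mul_le (my_norm_mul_le
    (my_norm_mul_le (norm_pow_le_pow hq1 hk) (norm_one_sub_pow_le hq1 k)) h4)
    (qBinom_norm_le hq1 n k)
  unfold gg
  calc ‖q ^ (n^2+n*k+k^2+2*n+1) * (1 - q ^ k) *
        (1 - q ^ (n+1) - q ^ (n+k+1) + q ^ (3*n+2*k+2)) * qBinom q (2*n+k) (2*n)‖
      ≤ ‖q‖ ^ k * 2 * 4 * (2 ^ (2*n) / ‖qPoch q q (2*n)‖) := h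
  _ = (8 * (2 ^ (2*n) / ‖qPoch q q (2*n)‖)) * ‖q‖ ^ k := by ring

lemma summable_norm_tt (hq1 : ‖q‖ < 1) (n : ℕ) : Summable (fun k => ‖tt q n k‖) := by
  apply Summable.of_nonneg_of_le (fun k => norm_nonneg _) (tt_norm_le hq1 n)
  exact (summable_geometric_of_lt_one (norm_nonneg q) hq1).mul_left
    (2 * (2 ^ (2*n) / ‖qPoch q q (2*n)‖))

lemma gg_tendsto_zero (hq1 : ‖q‖ < 1) (n : ℕ) :
    Filter.Tendsto (gg q n) Filter.atTop (nhds 0) := by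
  rw [tendsto_zero_iff_norm_tendsto_zero]
  apply squeeze_zero (fun k => norm_nonneg _) (gg_norm_le hq1 n)
  simpa using (tendsto_pow_atTop_nhds_zero_of_lt_one (norm_nonneg q) hq1).const_mul
    (8 * (2 ^ (2*n) / ‖qPoch q q (2*n)‖))

lemma cert (hq1 : ‖q‖ < 1) (n k : ℕ) :
    (1 - q ^ (2*n+1)) * (1 - q ^ (2*n+2)) * tt q (n+1) k
      - q ^ (2*n+1) * (1 - q ^ (n+1)) * tt q n k
    = gg q n (k+1) - gg q n k := by
  have hP : qPoch q q (2*n) ≠ 0 := qPoch_qq_ne_zero hq1 _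
  have h1 : (1:ℂ) - q ^ (2*n+1) ≠ 0 := one_sub_pow_ne hq1 (2*n+1) (by omega)
  have h2 : (1:ℂ) - q ^ (2*n+2) ≠ 0 := one_sub_pow_ne hq1 (2*n+2) (by omega)
  have hk1 : (1:ℂ) - q ^ (k+1) ≠ 0 := one_sub_pow_ne hq1 (k+1) (by omega)
  have e1 : ∏ i ∈ Finset.range (2*(n+1)), ((1:ℂ) - q ^ (k+1+i))
      = (∏ i ∈ Finset.range (2*n), ((1:ℂ) - q ^ (k+1+i)))
        * ((1 - q ^ (k+1+2*n)) * (1 - q ^ (k+2+2*n))) := by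
    rw [show 2*(n+1) = 2*n+1+1 from by ring, Finset.prod_range_succ, Finset.prod_range_succ]
    ring
  have e2 : qPoch q q (2*(n+1))
      = qPoch q q (2*n) * ((1 - q ^ (2*n+1)) * (1 - q ^ (2*n+2))) := by
    rw [show 2*(n+1) = 2*n+2 from by ring, qPoch_add']
    rw [Finset.prod_range_succ, Finset.prod_range_one]
  have e3 : (∏ i ∈ Finset.range (2*n), ((1:ℂ) - q ^ (k+1+1+i)))
      = (∏ i ∈ Finset.range (2*n), ((1:ℂ) - q ^ (k+1+i))) * (1 - q ^ (k+1+2*n))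
        / (1 - q ^ (k+1)) := by
    rw [eq_div_iff hk1]
    have h2' := Finset.prod_range_succ' (fun i => (1:ℂ) - q ^ (k+1+i)) (2*n)
    rw [Finset.prod_range_succ] at h2'
    have hc : (∏ i ∈ Finset.range (2*n), ((1:ℂ) - q ^ (k+1+1+i)))
        = ∏ i ∈ Finset.range (2*n), ((1:ℂ) - q ^ (k+1+(i+1))) :=
      Finset.prod_congr rfl fun i _ => by ring
    rw [hc]
    simp only [Nat.add_zero] at h2'
    linear_combination -h2'
  simp only [tt, gg, qBinom_eq hq1]
  rw [e1, e2, e3]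
  field_simp
  ring

lemma gg_zero (n : ℕ) : gg q n 0 = 0 := by
  simp [gg]

lemma hasSum_tt (hq1 : ‖q‖ < 1) (n : ℕ) :
    HasSum (tt q n) (q ^ (n^2) / ∏ j ∈ Finset.range n, (1 - q ^ (n+j+1))) := by
  induction n with
  | zero =>
    have h0 : (q:ℂ) ^ (0^2) / ∏ j ∈ Finset.range 0, (1 - q ^ (0+j+1)) = 1 := by simp
    rw [h0]
    have hs : Summable (tt q 0) := (summable_norm_tt hq1 0).of_norm
    rw [hs.hasSum_iff_tendsto_nat]
    have htt : ∀ k, tt q 0 k = q ^ (k^2) - q ^ ((k+1)^2) := by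
      intro k
      have hkne := qPoch_qq_ne_zero hq1 k
      have hb : qBinom q (2*0+k) (2*0) = 1 := by
        show qBinom q (0+k) 0 = 1
        unfold qBinom
        rw [Nat.sub_zero, Nat.zero_add]
        rw [show qPoch q q 0 = 1 from by simp [qPoch]]
        rw [one_mul, div_self hkne]
      unfold tt
      rw [hb]
      ring
    have hps : ∀ K, ∑ k ∈ Finset.range K, tt q 0 k = 1 - q ^ (K^2) := by
      intro K
      rw [Finset.sum_congr rfl (fun k _ => htt k),
        Finset.sum_range_sub' (fun k => q ^ (k^2)) K]
      norm_num
    simp only [hps]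
    have hlim : Filter.Tendsto (fun K : ℕ => q ^ (K^2)) Filter.atTop (nhds 0) := by
      rw [tendsto_zero_iff_norm_tendsto_zero]
      apply squeeze_zero (fun K => norm_nonneg _)
        (fun K => norm_pow_le_pow hq1 (Nat.le_self_pow two_ne_zero K))
      exact tendsto_pow_atTop_nhds_zero_of_lt_one (norm_nonneg q) hq1
    simpa using tendsto_const_nhds.sub hlim
  | succ n ih =>
    have hn1 : (1:ℂ) - q ^ (n+1) ≠ 0 := one_sub_pow_ne hq1 (n+1) (by omega)
    have h1 : (1:ℂ) - q ^ (2*n+1) ≠ 0 := one_sub_pow_ne hq1 (2*n+1) (by omega)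
    have h2 : (1:ℂ) - q ^ (2*n+2) ≠ 0 := one_sub_pow_ne hq1 (2*n+2) (by omega)
    have hPn : (∏ j ∈ Finset.range n, ((1:ℂ) - q ^ (n+j+1))) ≠ 0 :=
      Finset.prod_ne_zero_iff.2 fun j _ => one_sub_pow_ne hq1 (n+j+1) (by omega)
    have hP1 : (∏ j ∈ Finset.range (n+1), ((1:ℂ) - q ^ (n+1+j+1))) ≠ 0 :=
      Finset.prod_ne_zero_iff.2 fun j _ => one_sub_pow_ne hq1 (n+1+j+1) (by omega)
    have hrel : (∏ j ∈ Finset.range (n+1), ((1:ℂ) - q ^ (n+1+j+1))) * (1 - q ^ (n+1))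
        = (∏ j ∈ Finset.range n, ((1:ℂ) - q ^ (n+j+1)))
          * ((1 - q ^ (2*n+1)) * (1 - q ^ (2*n+2))) := by
      have hA : ∏ j ∈ Finset.range (n+1+1), ((1:ℂ) - q ^ (n+1+j))
          = (∏ j ∈ Finset.range (n+1), ((1:ℂ) - q ^ (n+1+j+1))) * (1 - q ^ (n+1)) := by
        rw [Finset.prod_range_succ']
        rfl
      have hB : ∏ j ∈ Finset.range (n+1+1), ((1:ℂ) - q ^ (n+1+j))
          = (∏ j ∈ Finset.range n, ((1:ℂ) - q ^ (n+j+1)))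
            * ((1 - q ^ (2*n+1)) * (1 - q ^ (2*n+2))) := by
        rw [Finset.prod_range_succ, Finset.prod_range_succ]
        rw [Finset.prod_congr rfl (fun j _ => show (1:ℂ) - q ^ (n+1+j) = 1 - q ^ (n+j+1)
          from by ring)]
        rw [show n+1+n = 2*n+1 from by ring, show n+1+(n+1) = 2*n+2 from by ring]
        ring
      rw [← hA, hB]
    have hs1 : Summable (tt q (n+1)) := (summable_norm_tt hq1 (n+1)).of_norm
    set S := ∑' k, tt q (n+1) k with hSdef
    have hS : HasSum (tt q (n+1)) S := hs1.hasSum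
    have hfun : (fun k => gg q n (k+1) - gg q n k)
        = fun k => (1 - q ^ (2*n+1)) * (1 - q ^ (2*n+2)) * tt q (n+1) k
            - q ^ (2*n+1) * (1 - q ^ (n+1)) * tt q n k :=
      funext fun k => (cert hq1 n k).symm
    have htel : HasSum (fun k => gg q n (k+1) - gg q n k)
        ((1 - q ^ (2*n+1)) * (1 - q ^ (2*n+2)) * S
          - q ^ (2*n+1) * (1 - q ^ (n+1))
            * (q ^ (n^2) / ∏ j ∈ Finset.range n, (1 - q ^ (n+j+1)))) := by
      rw [hfun]
      exact (hS.mul_left _).sub (ih.mul_left _)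
    have hlim := htel.tendsto_sum_nat
    have hps : ∀ K, ∑ k ∈ Finset.range K, (gg q n (k+1) - gg q n k) = gg q n K := by
      intro K
      rw [Finset.sum_range_sub (gg q n), gg_zero, sub_zero]
    simp only [hps] at hlim
    have heq := tendsto_nhds_unique hlim (gg_tendsto_zero hq1 n)
    have h5 : S * ((1 - q ^ (2*n+1)) * (1 - q ^ (2*n+2)))
        * (∏ j ∈ Finset.range n, ((1:ℂ) - q ^ (n+j+1)))
        = q ^ (2*n+1) * (1 - q ^ (n+1)) * q ^ (n^2) := by
      have e : q ^ (n^2) / (∏ j ∈ Finset.range n, ((1:ℂ) - q ^ (n+j+1)))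
          * (∏ j ∈ Finset.range n, ((1:ℂ) - q ^ (n+j+1))) = q ^ (n^2) :=
        div_mul_cancel₀ _ hPn
      linear_combination (∏ j ∈ Finset.range n, ((1:ℂ) - q ^ (n+j+1))) * heq
        + q ^ (2*n+1) * (1 - q ^ (n+1)) * e
    have hSeq : S = q ^ ((n+1)^2) / ∏ j ∈ Finset.range (n+1), (1 - q ^ (n+1+j+1)) := by
      rw [eq_div_iff hP1]
      apply mul_right_cancel₀ (mul_ne_zero (mul_ne_zero hn1 (mul_ne_zero h1 h2)) hPn)
      linear_combination (S * ((1 - q ^ (2*n+1)) * (1 - q ^ (2*n+2)))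
          * (∏ j ∈ Finset.range n, ((1:ℂ) - q ^ (n+j+1)))) * hrel
        + (((1 - q ^ (2*n+1)) * (1 - q ^ (2*n+2)))
            * (∏ j ∈ Finset.range n, ((1:ℂ) - q ^ (n+j+1)))) * h5
    rw [← hSeq]
    exact hS

lemma term_eq (hq0 : q ≠ 0) (n k : ℕ) :
    (q ^ ((n + k) ^ 2) - q ^ ((n + k + 1) ^ 2)) * q ^ (-(n * k : ℤ)) *
        qBinom q (2 * n + k) (2 * n) = tt q n k := by
  rw [show (-(n * k : ℤ)) = -((n*k : ℕ) : ℤ) from by push_cast; ring,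
    zpow_neg, zpow_natCast]
  unfold tt
  have hpow : (q : ℂ) ^ (n*k) ≠ 0 := pow_ne_zero _ hq0
  field_simp
  ring

end lemmas

/-- Park's `−1`-surgery identity:
`∑_{k≥0} (q^{(n+k)²} − q^{(n+k+1)²}) q^{−nk} C_q(2n+k,2n) = q^{n²} / ∏_{j=1}^n (1 − q^{n+j})`,
the series converging absolutely for `0 < |q| < 1`. -/
theorem minus_one_surgery_identity (n : ℕ) (q : ℂ) (hq0 : 0 < ‖q‖) (hq1 : ‖q‖ < 1) :
    Summable (fun k : ℕ =>
      ‖(q ^ ((n + k) ^ 2) - q ^ ((n + k + 1) ^ 2)) * q ^ (-(n * k : ℤ)) *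
        qBinom q (2 * n + k) (2 * n)‖) ∧
    ∑' k : ℕ, (q ^ ((n + k) ^ 2) - q ^ ((n + k + 1) ^ 2)) * q ^ (-(n * k : ℤ)) *
        qBinom q (2 * n + k) (2 * n)
      = q ^ (n ^ 2) / ∏ j ∈ Finset.range n, (1 - q ^ (n + j + 1)) := by
  have hqne : q ≠ 0 := norm_pos_iff.1 hq0
  have he := term_eq (q := q) hqne n
  constructor
  · exact (summable_norm_tt hq1 n).congr fun k => by rw [he k]
  · rw [tsum_congr he]
    exact (hasSum_tt hq1 n).tsum_eq
end

section
/- For every integer n ≥ 0 and every complex number q with 0 < |q| < 1, the series ∑_{k=0}^∞ (q^{(n+k)²} − q^{(n+k+1)²}) · q^{−nk} · ∏_{l=1}^{2n} (1 − q^{k+l}) converges absolutely and its sum equals q^{n²} · ∏_{l=1}^{n} (1 − q^l). -/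
open Filter Finset

private lemma two_bound {q : ℂ} (hq1 : ‖q‖ < 1) (j : ℕ) : ‖(1 : ℂ) - q ^ j‖ ≤ 2 := by
  calc ‖(1 : ℂ) - q ^ j‖ ≤ ‖(1 : ℂ)‖ + ‖q ^ j‖ := norm_sub_le _ _
    _ ≤ 1 + 1 := by
        rw [norm_one, norm_pow]
        have := pow_le_one₀ (norm_nonneg q) hq1.le (n := j)
        linarith
    _ = 2 := by norm_num

private lemma prod_bound {q : ℂ} (hq1 : ‖q‖ < 1) (m k : ℕ) :
    ‖∏ l ∈ Finset.range m, (1 - q ^ (k + l + 1))‖ ≤ 2 ^ m := by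
  rw [norm_prod]
  calc ∏ l ∈ Finset.range m, ‖(1 : ℂ) - q ^ (k + l + 1)‖
      ≤ ∏ _l ∈ Finset.range m, (2 : ℝ) :=
        Finset.prod_le_prod (fun _ _ => norm_nonneg _) (fun i _ => two_bound hq1 _)
    _ = 2 ^ m := by simp

private lemma piece_bound {q : ℂ} (hq1 : ‖q‖ < 1) (e j m k : ℕ) (he : k ≤ e) :
    ‖q ^ e * ((1 - q ^ j) * ∏ l ∈ Finset.range m, (1 - q ^ (k + l + 1)))‖
      ≤ ‖q‖ ^ k * (2 * 2 ^ m) := by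
  rw [norm_mul, norm_mul, norm_pow]
  have h1 : ‖q‖ ^ e ≤ ‖q‖ ^ k := pow_le_pow_of_le_one (norm_nonneg q) hq1.le he
  have h2 := two_bound hq1 j
  have h3 := prod_bound hq1 m k
  have h4 : ‖(1 : ℂ) - q ^ j‖ * ‖∏ l ∈ Finset.range m, (1 - q ^ (k + l + 1))‖
      ≤ 2 * 2 ^ m :=
    mul_le_mul h2 h3 (norm_nonneg _) (by norm_num)
  exact mul_le_mul h1 h4 (mul_nonneg (norm_nonneg _) (norm_nonneg _))
    (pow_nonneg (norm_nonneg q) k)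

private lemma master_summable {q : ℂ} (hq1 : ‖q‖ < 1) {f : ℕ → ℂ} {C : ℝ}
    (h : ∀ k, ‖f k‖ ≤ ‖q‖ ^ k * C) : Summable fun k => ‖f k‖ :=
  Summable.of_nonneg_of_le (fun _ => norm_nonneg _) h
    (((summable_geometric_of_lt_one (norm_nonneg q) hq1)).mul_right C)

private lemma master_tendsto {q : ℂ} (hq1 : ‖q‖ < 1) {f : ℕ → ℂ} {C : ℝ}
    (h : ∀ k, ‖f k‖ ≤ ‖q‖ ^ k * C) : Tendsto f atTop (nhds 0) :=
  squeeze_zero_norm h (by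
    simpa using (tendsto_pow_atTop_nhds_zero_of_lt_one (norm_nonneg q) hq1).mul_const C)

private lemma telescope {g : ℕ → ℂ} (h0 : Tendsto g atTop (nhds 0))
    (hs : Summable fun k => g k - g (k + 1)) :
    HasSum (fun k => g k - g (k + 1)) (g 0) := by
  have h1 := hs.hasSum
  have h2 := h1.tendsto_sum_nat
  have h3 : (fun N => ∑ i ∈ Finset.range N, (g i - g (i + 1))) = fun N => g 0 - g N := by
    funext N; exact Finset.sum_range_sub' g N
  rw [h3] at h2
  have h4 : Tendsto (fun N => g 0 - g N) atTop (nhds (g 0 - 0)) :=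
    tendsto_const_nhds.sub h0
  rw [sub_zero] at h4
  rwa [tendsto_nhds_unique h2 h4] at h1

private lemma le_mul_add (k c : ℕ) : k ≤ k * (k + c) := by
  rcases Nat.eq_zero_or_pos k with h | h
  · simp [h]
  · calc k = k * 1 := (mul_one k).symm
      _ ≤ k * (k + c) := Nat.mul_le_mul_left k (by omega)

/-- Shifting a product of the form `∏_{l<m} (1 - q^{k+1+l+1})`. -/
private lemma prod_shift (q : ℂ) (m k : ℕ) :
    (1 - q ^ (k + 1)) * ∏ l ∈ Finset.range m, (1 - q ^ (k + 1 + l + 1))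
      = ∏ l ∈ Finset.range (m + 1), (1 - q ^ (k + l + 1)) := by
  rw [Finset.prod_range_succ' (fun l => 1 - q ^ (k + l + 1)) m]
  rw [mul_comm]
  congr 1
  · apply Finset.prod_congr rfl
    intro l _
    congr 2
    omega


private noncomputable def Gfun (q : ℂ) (n k : ℕ) : ℂ :=
  q ^ (n + 1 + k * (k + n + 1)) *
      ((1 - q ^ k) * ∏ l ∈ Finset.range (2 * n + 1), (1 - q ^ (k + l + 1)))
    - (1 - q ^ (n + 1)) *
      (q ^ (k * (k + n)) *
        ((1 - q ^ k) * ∏ l ∈ Finset.range (2 * n), (1 - q ^ (k + l + 1))))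

private lemma Gfun_succ (q : ℂ) (n k : ℕ) : Gfun q n (k + 1) =
    q ^ (n + 1 + (k + 1) * (k + 1 + n + 1)) *
        ∏ l ∈ Finset.range (2 * n + 1 + 1), (1 - q ^ (k + l + 1))
      - (1 - q ^ (n + 1)) *
        (q ^ ((k + 1) * (k + 1 + n)) *
          ∏ l ∈ Finset.range (2 * n + 1), (1 - q ^ (k + l + 1))) := by
  unfold Gfun
  rw [← prod_shift q (2 * n + 1) k, ← prod_shift q (2 * n) k]

private lemma step_id (q : ℂ) (n k : ℕ) :
    q ^ (k * (k + (n + 1))) * (1 - q ^ (2 * (n + 1) + 2 * k + 1)) *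
        ∏ l ∈ Finset.range (2 * (n + 1)), (1 - q ^ (k + l + 1))
      = (1 - q ^ (n + 1)) *
          (q ^ (k * (k + n)) * (1 - q ^ (2 * n + 2 * k + 1)) *
            ∏ l ∈ Finset.range (2 * n), (1 - q ^ (k + l + 1)))
        + (Gfun q n k - Gfun q n (k + 1)) := by
  rw [Gfun_succ]
  unfold Gfun
  rw [show 2 * (n + 1) = 2 * n + 1 + 1 by ring]
  rw [Finset.prod_range_succ (fun l => 1 - q ^ (k + l + 1)) (2 * n + 1),
      Finset.prod_range_succ (fun l => 1 - q ^ (k + l + 1)) (2 * n)]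
  ring

private lemma key {q : ℂ} (hq1 : ‖q‖ < 1) : ∀ n : ℕ,
    HasSum (fun k => q ^ (k * (k + n)) * (1 - q ^ (2 * n + 2 * k + 1)) *
        ∏ l ∈ Finset.range (2 * n), (1 - q ^ (k + l + 1)))
      (∏ l ∈ Finset.range n, (1 - q ^ (l + 1))) := by
  intro n
  induction n with
  | zero =>
      have hg : Tendsto (fun k : ℕ => q ^ (k * k)) atTop (nhds 0) := by
        apply master_tendsto hq1 (C := 1)
        intro k
        rw [norm_pow, mul_one]
        exact pow_le_pow_of_le_one (norm_nonneg q) hq1.le (le_mul_add k 0)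
      have hs : Summable fun k : ℕ => q ^ (k * k) - q ^ ((k + 1) * (k + 1)) := by
        apply Summable.of_norm
        apply master_summable hq1 (C := 2)
        intro k
        calc ‖q ^ (k * k) - q ^ ((k + 1) * (k + 1))‖
            ≤ ‖q ^ (k * k)‖ + ‖q ^ ((k + 1) * (k + 1))‖ := norm_sub_le _ _
          _ ≤ ‖q‖ ^ k + ‖q‖ ^ k := by
              rw [norm_pow, norm_pow]
              exact add_le_add
                (pow_le_pow_of_le_one (norm_nonneg q) hq1.le (le_mul_add k 0))
                (pow_le_pow_of_le_one (norm_nonneg q) hq1.le (by nlinarith))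
          _ = ‖q‖ ^ k * 2 := by ring
      have htel := telescope hg hs
      have hfeq : (fun k : ℕ => q ^ (k * (k + 0)) * (1 - q ^ (2 * 0 + 2 * k + 1)) *
          ∏ l ∈ Finset.range (2 * 0), (1 - q ^ (k + l + 1)))
          = fun k : ℕ => q ^ (k * k) - q ^ ((k + 1) * (k + 1)) := by
        funext k
        rw [show 2 * 0 = 0 from rfl, Finset.range_zero, Finset.prod_empty]
        ring
      rw [hfeq, Finset.range_zero, Finset.prod_empty]
      simpa using htel
  | succ n ih =>
      have hGbound : ∀ k, ‖Gfun q n k‖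
          ≤ ‖q‖ ^ k * (2 * 2 ^ (2 * n + 1) + 2 * (2 * 2 ^ (2 * n))) := by
        intro k
        refine le_trans (norm_sub_le _ _) ?_
        have h1 := piece_bound hq1 (n + 1 + k * (k + n + 1)) k (2 * n + 1) k
          (by have h := le_mul_add k (n + 1); rw [show k + (n + 1) = k + n + 1 from by omega] at h; omega)
        have h2' := piece_bound hq1 (k * (k + n)) k (2 * n) k (le_mul_add k n)
        have h2 : ‖(1 - q ^ (n + 1)) *
            (q ^ (k * (k + n)) *
              ((1 - q ^ k) * ∏ l ∈ Finset.range (2 * n), (1 - q ^ (k + l + 1))))‖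
            ≤ 2 * (‖q‖ ^ k * (2 * 2 ^ (2 * n))) := by
          rw [norm_mul]
          exact mul_le_mul (two_bound hq1 (n + 1)) h2' (norm_nonneg _) (by norm_num)
        refine le_trans (add_le_add h1 h2) (le_of_eq (by ring))
      have hGsum : Summable (Gfun q n) := (master_summable hq1 hGbound).of_norm
      have hGt : Tendsto (Gfun q n) atTop (nhds 0) := master_tendsto hq1 hGbound
      have hG0 : Gfun q n 0 = 0 := by simp [Gfun]
      have htel : HasSum (fun k => Gfun q n k - Gfun q n (k + 1)) 0 := by
        have := telescope hGt (hGsum.sub ((summable_nat_add_iff 1).2 hGsum))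
        rwa [hG0] at this
      have hsum := (ih.mul_left (1 - q ^ (n + 1))).add htel
      rw [add_zero] at hsum
      have hfe : (fun k => (1 - q ^ (n + 1)) *
            (q ^ (k * (k + n)) * (1 - q ^ (2 * n + 2 * k + 1)) *
              ∏ l ∈ Finset.range (2 * n), (1 - q ^ (k + l + 1)))
            + (Gfun q n k - Gfun q n (k + 1)))
          = fun k => q ^ (k * (k + (n + 1))) * (1 - q ^ (2 * (n + 1) + 2 * k + 1)) *
              ∏ l ∈ Finset.range (2 * (n + 1)), (1 - q ^ (k + l + 1)) := by
        funext k
        exact (step_id q n k).symm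
      rw [hfe] at hsum
      rw [Finset.prod_range_succ,
        mul_comm (∏ l ∈ Finset.range n, (1 - q ^ (l + 1))) (1 - q ^ (n + 1))]
      exact hsum

/-- Normalized `−1`-surgery identity (multiplied through by `(q;q)_{2n}`):
`∑_{k≥0} (q^{(n+k)²} − q^{(n+k+1)²}) q^{−nk} ∏_{l=1}^{2n}(1 − q^{k+l})
  = q^{n²} ∏_{l=1}^{n}(1 − q^l)`, converging absolutely for `0 < |q| < 1`. -/
theorem minus_one_surgery_identity_normalized (n : ℕ) (q : ℂ)
    (hq0 : 0 < ‖q‖) (hq1 : ‖q‖ < 1) :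
    Summable (fun k : ℕ =>
      ‖(q ^ ((n + k) ^ 2) - q ^ ((n + k + 1) ^ 2)) * q ^ (-(n * k : ℤ)) *
        ∏ l ∈ Finset.range (2 * n), (1 - q ^ (k + l + 1))‖) ∧
    ∑' k : ℕ, (q ^ ((n + k) ^ 2) - q ^ ((n + k + 1) ^ 2)) * q ^ (-(n * k : ℤ)) *
        ∏ l ∈ Finset.range (2 * n), (1 - q ^ (k + l + 1))
      = q ^ (n ^ 2) * ∏ l ∈ Finset.range n, (1 - q ^ (l + 1)) := by
  have hqne : q ≠ 0 := norm_pos_iff.mp hq0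
  have hfb : ∀ k, ‖q ^ (k * (k + n)) * (1 - q ^ (2 * n + 2 * k + 1)) *
      ∏ l ∈ Finset.range (2 * n), (1 - q ^ (k + l + 1))‖ ≤ ‖q‖ ^ k * (2 * 2 ^ (2 * n)) := by
    intro k
    rw [mul_assoc]
    exact piece_bound hq1 _ _ _ _ (le_mul_add k n)
  have htk : ∀ k : ℕ, (q ^ ((n + k) ^ 2) - q ^ ((n + k + 1) ^ 2)) * q ^ (-(n * k : ℤ)) *
      ∏ l ∈ Finset.range (2 * n), (1 - q ^ (k + l + 1))
      = q ^ (n ^ 2) * (q ^ (k * (k + n)) * (1 - q ^ (2 * n + 2 * k + 1)) *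
          ∏ l ∈ Finset.range (2 * n), (1 - q ^ (k + l + 1))) := by
    intro k
    have h1 : (n + k) ^ 2 = n ^ 2 + k * (k + n) + n * k := by ring
    have h2 : (n + k + 1) ^ 2 = n ^ 2 + k * (k + n) + (2 * n + 2 * k + 1) + n * k := by ring
    have hz : q ^ (n * k) * q ^ (-(n * k : ℤ)) = 1 := by
      rw [← zpow_natCast q (n * k), ← zpow_add₀ hqne]
      simp
    have h3 : (q ^ ((n + k) ^ 2) - q ^ ((n + k + 1) ^ 2)) * q ^ (-(n * k : ℤ))
        = (q ^ (n ^ 2) * (q ^ (k * (k + n)) * (1 - q ^ (2 * n + 2 * k + 1)))) *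
          (q ^ (n * k) * q ^ (-(n * k : ℤ))) := by
      rw [h1, h2]
      ring
    rw [h3, hz, mul_one]
    ring
  constructor
  · have : (fun k : ℕ => ‖(q ^ ((n + k) ^ 2) - q ^ ((n + k + 1) ^ 2)) * q ^ (-(n * k : ℤ)) *
        ∏ l ∈ Finset.range (2 * n), (1 - q ^ (k + l + 1))‖)
        = fun k : ℕ => ‖q‖ ^ (n ^ 2) * ‖q ^ (k * (k + n)) * (1 - q ^ (2 * n + 2 * k + 1)) *
          ∏ l ∈ Finset.range (2 * n), (1 - q ^ (k + l + 1))‖ := by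
      funext k
      rw [htk k, norm_mul, norm_pow]
    rw [this]
    exact (master_summable hq1 hfb).mul_left _
  · have h := (key hq1 n).mul_left (q ^ (n ^ 2))
    have hfe : (fun k : ℕ => q ^ (n ^ 2) * (q ^ (k * (k + n)) * (1 - q ^ (2 * n + 2 * k + 1)) *
        ∏ l ∈ Finset.range (2 * n), (1 - q ^ (k + l + 1))))
        = fun k : ℕ => (q ^ ((n + k) ^ 2) - q ^ ((n + k + 1) ^ 2)) * q ^ (-(n * k : ℤ)) *
          ∏ l ∈ Finset.range (2 * n), (1 - q ^ (k + l + 1)) := by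
      funext k
      exact (htk k).symm
    rw [hfe] at h
    exact h.tsum_eq
end

section
/- For every integer n ≥ 0 and every complex number q with |q| > 1, the series ∑_{k=0}^∞ (q^{−(n+k)²} − q^{−(n+k+1)²}) · q^{−nk} · C_q(2n+k, 2n) converges absolutely and its sum equals (−1)^n q^{n(n+1)/2} / ∏_{j=1}^{n} (1 − q^{n+j}). -/
namespace PlusOneAux

set_option maxHeartbeats 4000000 in
lemma key_abstract (a X Y Z CB CBp : ℂ) (ha : a ≠ 0) (hX : X ≠ 0) (hY : Y ≠ 0)
    (hZ : Z ≠ 0) (hYa : 1 - Y*a ≠ 0) (hC : CBp * (1 - Y*a) = CB * (1 - X^2*Y*a)) :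
    (Z*X^2*Y^3*a)⁻¹ * (1 - (X^2*Y^2*a^3)⁻¹) * ((1-X^2*Y*a)*((1-X^2*Y*a^2)*CB))
    + X*a*(1-X*a) * (Z⁻¹ * (1 - (X^2*Y^2*a)⁻¹) * CB)
    = CB * Z⁻¹ * X^2*a^2 * ((X*a)⁻¹*(1-(Y^2)⁻¹) - (1-Y⁻¹)*(1+(Y^2*X^3*a^2)⁻¹))
      - CBp * (Z*X^3*Y^2*a)⁻¹ * X^2*a^2 *
          ((X*a)⁻¹*(1-(Y^2*a^2)⁻¹) - (1-(Y*a)⁻¹)*(1+(Y^2*X^3*a^4)⁻¹)) := by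
  have ra : a * a⁻¹ = 1 := mul_inv_cancel₀ ha
  have rX : X * X⁻¹ = 1 := mul_inv_cancel₀ hX
  have rY : Y * Y⁻¹ = 1 := mul_inv_cancel₀ hY
  have rZ : Z * Z⁻¹ = 1 := mul_inv_cancel₀ hZ
  apply mul_left_cancel₀ hYa
  linear_combination
    ((-1)*a^2*a⁻¹*X^2*X⁻¹^3*Y⁻¹^2*Z⁻¹ + a^2*a⁻¹^2*X^2*X⁻¹^3*Y⁻¹^3*Z⁻¹ + a^2*a⁻¹^2*X^2*X⁻¹^4*Y⁻¹^2*Z⁻¹ + (-1)*a^2*a⁻¹^4*X^2*X⁻¹^4*Y⁻¹^4*Z⁻¹ + (-1)*a^2*a⁻¹^5*X^2*X⁻¹^6*Y⁻¹^4*Z⁻¹ + a^2*a⁻¹^6*X^2*X⁻¹^6*Y⁻¹^5*Z⁻¹) * hC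
    + ((-1)*X⁻¹^2*Y*Y⁻¹^3*Z⁻¹*CB + (-1)*X*X⁻¹^2*Y⁻¹^2*Z⁻¹*CB + (-1)*X^2*X⁻¹^2*Y*Y⁻¹^3*Z⁻¹*CB + X^2*X⁻¹^3*Y⁻¹^2*Z⁻¹*CB + X^2*X⁻¹^4*Y⁻¹^2*Z⁻¹*CB + X^4*X⁻¹^4*Y^3*Y⁻¹^5*Z⁻¹*CB + (-1)*a⁻¹*X^2*X⁻¹^4*Y^2*Y⁻¹^5*Z⁻¹*CB + a⁻¹*X^4*X⁻¹^4*Y*Y⁻¹^4*Z⁻¹*CB + (-1)*a⁻¹*X^4*X⁻¹^4*Y^2*Y⁻¹^5*Z⁻¹*CB + (-1)*a⁻¹^2*X^2*X⁻¹^4*Y⁻¹^4*Z⁻¹*CB + a⁻¹^2*X^2*X⁻¹^4*Y*Y⁻¹^5*Z⁻¹*CB + (-1)*a⁻¹^2*X^2*X⁻¹^4*Y^2*Y⁻¹^5*Z⁻¹*CB + a⁻¹^2*X^4*X⁻¹^6*Y*Y⁻¹^4*Z⁻¹*CB + a⁻¹^3*X⁻¹^4*Y*Y⁻¹^5*Z⁻¹*CB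 + a⁻¹^3*X^2*X⁻¹^4*Y*Y⁻¹^5*Z⁻¹*CB + (-1)*a⁻¹^3*X^2*X⁻¹^6*Y⁻¹^4*Z⁻¹*CB + (-1)*a⁻¹^3*X^4*X⁻¹^6*Y*Y⁻¹^5*Z⁻¹*CB + a⁻¹^4*X^2*X⁻¹^6*Y⁻¹^5*Z⁻¹*CB + a*X*X⁻¹^2*Y*Y⁻¹^2*Z⁻¹*CB + (-1)*a*X^2*X⁻¹*Z⁻¹*CB + a*X^2*X⁻¹*Y⁻¹^2*Z⁻¹*CB + a*X^2*X⁻¹^2*Y⁻¹^2*Z⁻¹*CB + (-1)*a*X^2*X⁻¹^2*Y*Y⁻¹^3*Z⁻¹*CB + a*X^2*X⁻¹^2*Y^2*Y⁻¹^3*Z⁻¹*CB + (-1)*a*X^2*X⁻¹^3*Y⁻¹^2*Z⁻¹*CB + (-1)*a*X^2*X⁻¹^3*Y*Y⁻¹^2*Z⁻¹*CB + a*X^2*X⁻¹^3*Y*Y⁻¹^3*Z⁻¹*CB + (-1)*a*X^4*X⁻¹^3*Y*Y⁻¹^3*Z⁻¹*CB + (-1)*a*X^4*X⁻¹^4*Y*Y⁻¹^2*Z⁻¹*CB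 + a*a⁻¹*X^2*X⁻¹^3*Y⁻¹^2*Z⁻¹*CB + a*a⁻¹*X^2*X⁻¹^4*Y⁻¹^2*Z⁻¹*CB + a*a⁻¹*X^4*X⁻¹^4*Y^3*Y⁻¹^5*Z⁻¹*CB + (-1)*a*a⁻¹^2*X^2*X⁻¹^4*Y^2*Y⁻¹^5*Z⁻¹*CB + a*a⁻¹^2*X^4*X⁻¹^4*Y*Y⁻¹^4*Z⁻¹*CB + (-1)*a*a⁻¹^2*X^4*X⁻¹^4*Y^2*Y⁻¹^5*Z⁻¹*CB + (-1)*a*a⁻¹^3*X^2*X⁻¹^4*Y⁻¹^4*Z⁻¹*CB + a*a⁻¹^3*X^2*X⁻¹^4*Y*Y⁻¹^5*Z⁻¹*CB + (-1)*a*a⁻¹^3*X^2*X⁻¹^4*Y^2*Y⁻¹^5*Z⁻¹*CB + a*a⁻¹^3*X^4*X⁻¹^6*Y*Y⁻¹^4*Z⁻¹*CB + (-1)*a*a⁻¹^4*X^2*X⁻¹^6*Y⁻¹^4*Z⁻¹*CB + (-1)*a*a⁻¹^4*X^4*X⁻¹^6*Y*Y⁻¹^5*Z⁻¹*CB + a*a⁻¹^5*X^2*X⁻¹^6*Y⁻¹^5*Z⁻¹*CB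 + a^2*X^2*X⁻¹*Y*Z⁻¹*CB + (-1)*a^2*X^2*X⁻¹*Y*Y⁻¹^2*Z⁻¹*CB + (-1)*a^2*X^2*X⁻¹^2*Y*Y⁻¹^2*Z⁻¹*CB + a^2*X^2*X⁻¹^2*Y^2*Y⁻¹^3*Z⁻¹*CB + a^2*X^4*X⁻¹^2*Y^2*Y⁻¹^3*Z⁻¹*CB + a^2*X^4*X⁻¹^3*Y*Y⁻¹^2*Z⁻¹*CB + (-1)*a^2*a⁻¹*X^2*X⁻¹^3*Y*Y⁻¹^2*Z⁻¹*CB + a^2*a⁻¹*X^2*X⁻¹^3*Y*Y⁻¹^3*Z⁻¹*CB + (-1)*a^2*a⁻¹*X^4*X⁻¹^3*Y*Y⁻¹^3*Z⁻¹*CB + (-1)*a^2*a⁻¹*X^4*X⁻¹^4*Y*Y⁻¹^2*Z⁻¹*CB + a^2*a⁻¹^2*X^4*X⁻¹^4*Y^3*Y⁻¹^5*Z⁻¹*CB + (-1)*a^2*a⁻¹^3*X^2*X⁻¹^4*Y^2*Y⁻¹^5*Z⁻¹*CB + a^2*a⁻¹^3*X^4*X⁻¹^4*Y*Y⁻¹^4*Z⁻¹*CB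 + (-1)*a^2*a⁻¹^3*X^4*X⁻¹^4*Y^2*Y⁻¹^5*Z⁻¹*CB + a^2*a⁻¹^4*X^4*X⁻¹^6*Y*Y⁻¹^4*Z⁻¹*CB + (-1)*a^2*a⁻¹^5*X^4*X⁻¹^6*Y*Y⁻¹^5*Z⁻¹*CB + (-1)*a^3*X^4*X⁻¹^2*Y^3*Y⁻¹^3*Z⁻¹*CB + a^3*a⁻¹^3*X^4*X⁻¹^4*Y^3*Y⁻¹^5*Z⁻¹*CB) * ra
    + ((-1)*Y*Y⁻¹^3*Z⁻¹*CB + Y^3*Y⁻¹^5*Z⁻¹*CB + (0)*X⁻¹*Y⁻¹^2*Z⁻¹*CB + X⁻¹^2*Y⁻¹^2*Z⁻¹*CB + (-1)*X*X⁻¹*Y*Y⁻¹^3*Z⁻¹*CB + X*X⁻¹*Y^3*Y⁻¹^5*Z⁻¹*CB + X*X⁻¹^2*Y⁻¹^2*Z⁻¹*CB + X*X⁻¹^3*Y⁻¹^2*Z⁻¹*CB + X^2*X⁻¹^2*Y^3*Y⁻¹^5*Z⁻¹*CB + X^3*X⁻¹^3*Y^3*Y⁻¹^5*Z⁻¹*CB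 + a⁻¹*Y*Y⁻¹^4*Z⁻¹*CB + (-1)*a⁻¹*Y^2*Y⁻¹^5*Z⁻¹*CB + (-1)*a⁻¹*X⁻¹^2*Y^2*Y⁻¹^5*Z⁻¹*CB + a⁻¹*X*X⁻¹*Y*Y⁻¹^4*Z⁻¹*CB + (-1)*a⁻¹*X*X⁻¹*Y^2*Y⁻¹^5*Z⁻¹*CB + (-1)*a⁻¹*X*X⁻¹^3*Y^2*Y⁻¹^5*Z⁻¹*CB + a⁻¹*X^2*X⁻¹^2*Y*Y⁻¹^4*Z⁻¹*CB + (-1)*a⁻¹*X^2*X⁻¹^2*Y^2*Y⁻¹^5*Z⁻¹*CB + a⁻¹*X^3*X⁻¹^3*Y*Y⁻¹^4*Z⁻¹*CB + (-1)*a⁻¹*X^3*X⁻¹^3*Y^2*Y⁻¹^5*Z⁻¹*CB + (-1)*a⁻¹^2*X⁻¹^2*Y⁻¹^4*Z⁻¹*CB + a⁻¹^2*X⁻¹^2*Y*Y⁻¹^4*Z⁻¹*CB + a⁻¹^2*X⁻¹^2*Y*Y⁻¹^5*Z⁻¹*CB + (-1)*a⁻¹^2*X⁻¹^2*Y^2*Y⁻¹^5*Z⁻¹*CB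 + (-1)*a⁻¹^2*X*X⁻¹^3*Y⁻¹^4*Z⁻¹*CB + a⁻¹^2*X*X⁻¹^3*Y*Y⁻¹^4*Z⁻¹*CB + a⁻¹^2*X*X⁻¹^3*Y*Y⁻¹^5*Z⁻¹*CB + (-1)*a⁻¹^2*X*X⁻¹^3*Y^2*Y⁻¹^5*Z⁻¹*CB + a⁻¹^2*X^2*X⁻¹^4*Y*Y⁻¹^4*Z⁻¹*CB + a⁻¹^2*X^3*X⁻¹^5*Y*Y⁻¹^4*Z⁻¹*CB + (0)*a⁻¹^3*X⁻¹^2*Y*Y⁻¹^5*Z⁻¹*CB + (-1)*a⁻¹^3*X⁻¹^4*Y⁻¹^4*Z⁻¹*CB + (0)*a⁻¹^3*X*X⁻¹^3*Y*Y⁻¹^5*Z⁻¹*CB + (-1)*a⁻¹^3*X*X⁻¹^5*Y⁻¹^4*Z⁻¹*CB + (-1)*a⁻¹^3*X^2*X⁻¹^4*Y*Y⁻¹^5*Z⁻¹*CB + (-1)*a⁻¹^3*X^3*X⁻¹^5*Y*Y⁻¹^5*Z⁻¹*CB + a⁻¹^4*X⁻¹^4*Y⁻¹^5*Z⁻¹*CB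 + a⁻¹^4*X*X⁻¹^5*Y⁻¹^5*Z⁻¹*CB + a*Y⁻¹^2*Z⁻¹*CB + (-1)*a*Y*Y⁻¹^2*Z⁻¹*CB + (-1)*a*Y*Y⁻¹^3*Z⁻¹*CB + a*Y^2*Y⁻¹^3*Z⁻¹*CB + (-1)*a*X⁻¹*Y⁻¹^2*Z⁻¹*CB + (0)*a*X⁻¹*Y*Y⁻¹^2*Z⁻¹*CB + a*X⁻¹*Y*Y⁻¹^3*Z⁻¹*CB + (-1)*a*X*Z⁻¹*CB + a*X*Y⁻¹^2*Z⁻¹*CB + (-1)*a*X*Y*Y⁻¹^3*Z⁻¹*CB + a*X*X⁻¹*Y⁻¹^2*Z⁻¹*CB + (-1)*a*X*X⁻¹*Y*Y⁻¹^2*Z⁻¹*CB + (-1)*a*X*X⁻¹*Y*Y⁻¹^3*Z⁻¹*CB + a*X*X⁻¹*Y^2*Y⁻¹^3*Z⁻¹*CB + (-1)*a*X*X⁻¹^2*Y⁻¹^2*Z⁻¹*CB + (-1)*a*X*X⁻¹^2*Y*Y⁻¹^2*Z⁻¹*CB + a*X*X⁻¹^2*Y*Y⁻¹^3*Z⁻¹*CB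 + (-1)*a*X^2*X⁻¹*Y*Y⁻¹^3*Z⁻¹*CB + (-1)*a*X^2*X⁻¹^2*Y*Y⁻¹^2*Z⁻¹*CB + (-1)*a*X^3*X⁻¹^2*Y*Y⁻¹^3*Z⁻¹*CB + (-1)*a*X^3*X⁻¹^3*Y*Y⁻¹^2*Z⁻¹*CB + (-1)*a^2*Y*Y⁻¹^2*Z⁻¹*CB + a^2*Y^2*Y⁻¹^3*Z⁻¹*CB + a^2*X*Y*Z⁻¹*CB + (0)*a^2*X*Y*Y⁻¹^2*Z⁻¹*CB + (-1)*a^2*X*X⁻¹*Y*Y⁻¹^2*Z⁻¹*CB + a^2*X*X⁻¹*Y^2*Y⁻¹^3*Z⁻¹*CB + a^2*X^2*Y^2*Y⁻¹^3*Z⁻¹*CB + a^2*X^2*X⁻¹*Y*Y⁻¹^2*Z⁻¹*CB + a^2*X^3*X⁻¹*Y^2*Y⁻¹^3*Z⁻¹*CB + a^2*X^3*X⁻¹^2*Y*Y⁻¹^2*Z⁻¹*CB + (-1)*a^3*X^2*Y^3*Y⁻¹^3*Z⁻¹*CB + (-1)*a^3*X^3*X⁻¹*Y^3*Y⁻¹^3*Z⁻¹*CB)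 * rX
    + ((0)*Y⁻¹^2*Z⁻¹*CB + Y*Y⁻¹^3*Z⁻¹*CB + Y^2*Y⁻¹^4*Z⁻¹*CB + (-1)*X⁻¹^2*Y⁻¹^2*Z⁻¹*CB + (-1)*a⁻¹*Y*Y⁻¹^4*Z⁻¹*CB + (-1)*a⁻¹*X⁻¹^2*Y⁻¹^3*Z⁻¹*CB + (-1)*a⁻¹*X⁻¹^2*Y*Y⁻¹^4*Z⁻¹*CB + a⁻¹^2*X⁻¹^2*Y⁻¹^4*Z⁻¹*CB + (-1)*a⁻¹^2*X⁻¹^2*Y*Y⁻¹^4*Z⁻¹*CB + a⁻¹^3*X⁻¹^4*Y⁻¹^4*Z⁻¹*CB + (-1)*a*Y⁻¹^2*Z⁻¹*CB + a*Y*Y⁻¹^2*Z⁻¹*CB + a*X⁻¹*Y⁻¹^2*Z⁻¹*CB + (-1)*a*X*Y⁻¹^2*Z⁻¹*CB + a^2*Y*Y⁻¹^2*Z⁻¹*CB + a^2*X^2*Y⁻¹*Z⁻¹*CB + a^2*X^2*Y*Y⁻¹^2*Z⁻¹*CB + (0)*a^3*X^2*Z⁻¹*CB + (-1)*a^3*X^2*Y*Y⁻¹*Z⁻¹*CB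 + (-1)*a^3*X^2*Y^2*Y⁻¹^2*Z⁻¹*CB) * rY
    + (0:ℂ) * rZ

noncomputable def tt (q : ℂ) (n k : ℕ) : ℂ :=
  (q ^ (-((n + k : ℤ) ^ 2)) - q ^ (-((n + k + 1 : ℤ) ^ 2))) * q ^ (-(n * k : ℤ)) *
    qBinom q (2 * n + k) (2 * n)

noncomputable def uu (q : ℂ) (n k : ℕ) : ℂ :=
  qBinom q (2*n+k) (2*n) * (q ^ (n^2+3*n*k+k^2))⁻¹ * q ^ (2*n+2) *
    ((q ^ (n+1))⁻¹ * (1 - (q ^ (2*k))⁻¹) - (1 - (q ^ k)⁻¹) * (1 + (q ^ (2*k+3*n+2))⁻¹))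

variable {q : ℂ}

lemma hq0 (hq : 1 < ‖q‖) : q ≠ 0 := by
  intro h; rw [h, norm_zero] at hq; linarith

lemma fac_ne (hq : 1 < ‖q‖) (m : ℕ) : (1 : ℂ) - q ^ (m+1) ≠ 0 := by
  have h1 : 1 < ‖q ^ (m+1)‖ := by
    rw [norm_pow]; exact one_lt_pow₀ hq (Nat.succ_ne_zero m)
  intro h
  have : (1:ℂ) = q ^ (m+1) := by linear_combination h
  rw [← this] at h1; simp at h1

lemma qPoch_succ (m : ℕ) : qPoch q q (m+1) = qPoch q q m * (1 - q ^ (m+1)) := by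
  rw [qPoch, qPoch, Finset.prod_range_succ, pow_succ']

lemma qPoch_ne (hq : 1 < ‖q‖) (m : ℕ) : qPoch q q m ≠ 0 := by
  rw [qPoch]
  apply Finset.prod_ne_zero_iff.mpr
  intro l _
  have := fac_ne hq l
  rwa [pow_succ'] at this

lemma qBinom_eq' (m r s : ℕ) (h : m = r + s) :
    qBinom q m r = qPoch q q m / (qPoch q q r * qPoch q q s) := by
  subst h; rw [qBinom, Nat.add_sub_cancel_left]

lemma qBinom_ne (hq : 1 < ‖q‖) (n k : ℕ) : qBinom q (2*n+k) (2*n) ≠ 0 := by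
  rw [qBinom_eq' (2*n+k) (2*n) k rfl]
  exact div_ne_zero (qPoch_ne hq _) (mul_ne_zero (qPoch_ne hq _) (qPoch_ne hq _))

lemma pascal (hq : 1 < ‖q‖) (n k : ℕ) :
    qBinom q (2*n+(k+1)) (2*n) * (1 - q^(k+1))
      = qBinom q (2*n+k) (2*n) * (1 - q^(2*n+k+1)) := by
  rw [qBinom_eq' (2*n+(k+1)) (2*n) (k+1) (by ring), qBinom_eq' (2*n+k) (2*n) k rfl]
  rw [show 2*n+(k+1) = (2*n+k)+1 from rfl, qPoch_succ, qPoch_succ]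
  have h1 := qPoch_ne hq (2*n); have h2 := qPoch_ne hq k
  have h3 := fac_ne hq k
  field_simp

lemma cb2 (hq : 1 < ‖q‖) (n k : ℕ) :
    (1-q^(2*n+1)) * (1-q^(2*n+2)) * qBinom q (2*(n+1)+k) (2*(n+1))
      = (1 - q^(2*n+k+1)) * ((1 - q^(2*n+k+2)) * qBinom q (2*n+k) (2*n)) := by
  rw [qBinom_eq' (2*(n+1)+k) (2*(n+1)) k (by ring), qBinom_eq' (2*n+k) (2*n) k rfl]
  rw [show 2*(n+1)+k = ((2*n+k)+1)+1 from by ring, qPoch_succ, qPoch_succ]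
  rw [show 2*(n+1) = (2*n+1)+1 from by ring, qPoch_succ, qPoch_succ]
  have h1 := qPoch_ne hq (2*n); have h2 := qPoch_ne hq k
  have h3 := fac_ne hq (2*n); have h4 := fac_ne hq (2*n+1)
  have h5 : 2*n+1+1 = 2*n+2 := rfl
  rw [h5]
  field_simp

lemma tform (hq : 1 < ‖q‖) (m j : ℕ) :
    tt q m j = (q ^ ((m+j)^2 + m*j))⁻¹ * (1 - (q ^ (2*m+2*j+1))⁻¹) *
      qBinom q (2*m+j) (2*m) := by
  have h0 : q ≠ 0 := hq0 hq
  rw [tt]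
  have e1 : -((m + j : ℤ)^2) = -((((m+j)^2 : ℕ)) : ℤ) := by push_cast; ring
  have e2 : -((m + j + 1 : ℤ)^2) = -((((m+j+1)^2 : ℕ)) : ℤ) := by push_cast; ring
  have e3 : -((m : ℤ) * j) = -(((m*j : ℕ)) : ℤ) := by push_cast; ring
  rw [e1, e2, e3, zpow_neg, zpow_neg, zpow_neg, zpow_natCast, zpow_natCast, zpow_natCast]
  have hp : ∀ s : ℕ, (q:ℂ)^s ≠ 0 := fun s => pow_ne_zero s h0
  field_simp
  ring

lemma key_step (hq : 1 < ‖q‖) (n k : ℕ) :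
    (1-q^(2*n+1))*(1-q^(2*n+2)) * tt q (n+1) k + q^(n+1)*(1-q^(n+1)) * tt q n k
      = uu q n k - uu q n (k+1) := by
  have h0 : q ≠ 0 := hq0 hq
  have hX : (q:ℂ)^n ≠ 0 := pow_ne_zero _ h0
  have hY : (q:ℂ)^k ≠ 0 := pow_ne_zero _ h0
  have hZ : (q:ℂ)^(n^2+3*n*k+k^2) ≠ 0 := pow_ne_zero _ h0
  have hYa : (1:ℂ) - q^k * q ≠ 0 := by
    have := fac_ne hq k; rwa [pow_succ] at this
  have hC : qBinom q (2*n+(k+1)) (2*n) * (1 - q^k*q)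
      = qBinom q (2*n+k) (2*n) * (1 - (q^n)^2*q^k*q) := by
    linear_combination pascal hq n k
  have KA := key_abstract q (q^n) (q^k) (q^(n^2+3*n*k+k^2)) (qBinom q (2*n+k) (2*n))
    (qBinom q (2*n+(k+1)) (2*n)) h0 hX hY hZ hYa hC
  rw [tform hq (n+1) k, tform hq n k, uu, uu]
  linear_combination KA +
    ((q ^ (((n+1)+k)^2+(n+1)*k))⁻¹ * (1 - (q ^ (2*(n+1)+2*k+1))⁻¹)) * cb2 hq n k


/-- triangular numbers -/
def tri : ℕ → ℕ
  | 0 => 0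
  | (m+1) => tri m + (m+1)

lemma tri_add (n k : ℕ) : tri (2*n+k) = tri (2*n) + tri k + 2*n*k := by
  induction k with
  | zero => simp [tri]
  | succ k ih =>
      have : 2*n+(k+1) = (2*n+k)+1 := rfl
      rw [this, tri, tri, ih]
      ring

variable {q : ℂ}

lemma qPoch_succ' (m : ℕ) : qPoch q q (m+1) = qPoch q q m * (1 - q ^ (m+1)) := by
  rw [qPoch, qPoch, Finset.prod_range_succ, pow_succ']

lemma norm_factor_le (hq : 1 < ‖q‖) (m : ℕ) : ‖(1:ℂ) - q^(m+1)‖ ≤ 2 * ‖q‖^(m+1) := by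
  have h1 : (1:ℝ) ≤ ‖q‖^(m+1) := one_le_pow₀ hq.le
  calc ‖(1:ℂ) - q^(m+1)‖ ≤ ‖(1:ℂ)‖ + ‖q^(m+1)‖ := norm_sub_le _ _
    _ = 1 + ‖q‖^(m+1) := by rw [norm_one, norm_pow]
    _ ≤ 2 * ‖q‖^(m+1) := by linarith

lemma norm_factor_ge (hq : 1 < ‖q‖) (m : ℕ) :
    (1 - ‖q‖⁻¹) * ‖q‖^(m+1) ≤ ‖(1:ℂ) - q^(m+1)‖ := by
  have h0 : (0:ℝ) < ‖q‖ := lt_trans one_pos hq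
  have h1 : (1:ℝ) ≤ ‖q‖^m := one_le_pow₀ hq.le
  have hqm : ‖q‖⁻¹ * ‖q‖^(m+1) = ‖q‖^m := by
    rw [pow_succ, mul_comm, mul_assoc, mul_inv_cancel₀ (ne_of_gt h0), mul_one]
  have key : (1 - ‖q‖⁻¹) * ‖q‖^(m+1) = ‖q‖^(m+1) - ‖q‖^m := by
    rw [sub_mul, one_mul, hqm]
  rw [key]
  calc ‖q‖^(m+1) - ‖q‖^m ≤ ‖q‖^(m+1) - 1 := by linarith
    _ = ‖q^(m+1)‖ - ‖(1:ℂ)‖ := by rw [norm_pow, norm_one]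
    _ ≤ ‖q^(m+1) - 1‖ := norm_sub_norm_le _ _
    _ = ‖(1:ℂ) - q^(m+1)‖ := by rw [norm_sub_rev]

lemma qPoch_norm_le (hq : 1 < ‖q‖) (m : ℕ) : ‖qPoch q q m‖ ≤ 2^m * ‖q‖^(tri m) := by
  induction m with
  | zero => simp [qPoch, tri]
  | succ m ih =>
      rw [qPoch_succ', norm_mul, show tri (m+1) = tri m + (m+1) from rfl]
      have h1 := norm_factor_le hq m
      have h3 : (0:ℝ) ≤ 2^m * ‖q‖^(tri m) := by positivity
      calc ‖qPoch q q m‖ * ‖1 - q^(m+1)‖ ≤ (2^m * ‖q‖^(tri m)) * (2 * ‖q‖^(m+1)) := by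
            apply mul_le_mul ih h1 (norm_nonneg _) h3
        _ = 2^(m+1) * ‖q‖^(tri m + (m+1)) := by ring

lemma qPoch_norm_ge (hq : 1 < ‖q‖) (m : ℕ) :
    (1 - ‖q‖⁻¹)^m * ‖q‖^(tri m) ≤ ‖qPoch q q m‖ := by
  have h0 : (0:ℝ) < ‖q‖ := lt_trans one_pos hq
  have hc : (0:ℝ) < 1 - ‖q‖⁻¹ := by
    have : ‖q‖⁻¹ < 1 := inv_lt_one_of_one_lt₀ hq
    linarith
  induction m with
  | zero => simp [qPoch, tri]
  | succ m ih =>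
      rw [qPoch_succ', norm_mul, show tri (m+1) = tri m + (m+1) from rfl]
      have h1 := norm_factor_ge hq m
      calc (1-‖q‖⁻¹)^(m+1) * ‖q‖^(tri m + (m+1))
            = ((1-‖q‖⁻¹)^m * ‖q‖^(tri m)) * ((1-‖q‖⁻¹) * ‖q‖^(m+1)) := by ring
        _ ≤ ‖qPoch q q m‖ * ‖1 - q^(m+1)‖ := by
            apply mul_le_mul ih h1 (by positivity) (norm_nonneg _)

lemma qBinom_eq'2 (m r s : ℕ) (h : m = r + s) :
    qBinom q m r = qPoch q q m / (qPoch q q r * qPoch q q s) := by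
  subst h; rw [qBinom, Nat.add_sub_cancel_left]

lemma binom_norm_le (hq : 1 < ‖q‖) (n k : ℕ) :
    ‖qBinom q (2*n+k) (2*n)‖ ≤ (2/(1-‖q‖⁻¹))^(2*n+k) * ‖q‖^(2*n*k) := by
  have h0 : (0:ℝ) < ‖q‖ := lt_trans one_pos hq
  have hc : (0:ℝ) < 1 - ‖q‖⁻¹ := by
    have : ‖q‖⁻¹ < 1 := inv_lt_one_of_one_lt₀ hq
    linarith
  rw [qBinom_eq'2 (2*n+k) (2*n) k rfl, norm_div, norm_mul]
  have hden : (0:ℝ) < (1-‖q‖⁻¹)^(2*n) * ‖q‖^(tri (2*n)) * ((1-‖q‖⁻¹)^k * ‖q‖^(tri k)) := by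
    positivity
  have hge : (1-‖q‖⁻¹)^(2*n) * ‖q‖^(tri (2*n)) * ((1-‖q‖⁻¹)^k * ‖q‖^(tri k))
      ≤ ‖qPoch q q (2*n)‖ * ‖qPoch q q k‖ := by
    apply mul_le_mul (qPoch_norm_ge hq _) (qPoch_norm_ge hq _) (by positivity) (norm_nonneg _)
  have step1 : ‖qPoch q q (2*n+k)‖ / (‖qPoch q q (2*n)‖ * ‖qPoch q q k‖)
      ≤ (2^(2*n+k) * ‖q‖^(tri (2*n+k))) /
        ((1-‖q‖⁻¹)^(2*n) * ‖q‖^(tri (2*n)) * ((1-‖q‖⁻¹)^k * ‖q‖^(tri k))) := by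
    apply div_le_div₀ (by positivity) (qPoch_norm_le hq _) hden hge
  refine le_trans step1 (le_of_eq ?_)
  rw [div_eq_iff (ne_of_gt hden), tri_add]
  have hcc : (2:ℝ)^(2*n+k)
      = (2/(1-‖q‖⁻¹))^(2*n+k) * ((1-‖q‖⁻¹)^(2*n) * (1-‖q‖⁻¹)^k) := by
    rw [← pow_add, div_pow, div_mul_cancel₀]
    exact pow_ne_zero _ (ne_of_gt hc)
  linear_combination (‖q‖^(2*n*k) * ‖q‖^(tri (2*n)) * ‖q‖^(tri k)) * hcc


lemma cpos (hq : 1 < ‖q‖) : (0:ℝ) < 1 - ‖q‖⁻¹ := by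
  have : ‖q‖⁻¹ < 1 := inv_lt_one_of_one_lt₀ hq
  linarith

lemma Bpos (hq : 1 < ‖q‖) : (0:ℝ) < 2/(1-‖q‖⁻¹) := by
  have := cpos hq; positivity

lemma one_le_B (hq : 1 < ‖q‖) : (1:ℝ) ≤ 2/(1-‖q‖⁻¹) := by
  have hc := cpos hq
  rw [le_div_iff₀ hc]
  have : (0:ℝ) ≤ ‖q‖⁻¹ := by positivity
  linarith

lemma g_le (hq : 1 < ‖q‖) (N k : ℕ) :
    (2/(1-‖q‖⁻¹))^k * (‖q‖^(k^2))⁻¹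
      ≤ ‖q‖^(N^2) * ((2/(1-‖q‖⁻¹))/‖q‖^N)^k := by
  have hr : (0:ℝ) < ‖q‖ := lt_trans one_pos hq
  have hB := Bpos hq
  have h1 : ((2/(1-‖q‖⁻¹))/‖q‖^N)^k = (2/(1-‖q‖⁻¹))^k * (‖q‖^(N*k))⁻¹ := by
    rw [div_pow, ← pow_mul, div_eq_mul_inv]
  rw [h1]
  have h2 : (‖q‖^(k^2))⁻¹ ≤ ‖q‖^(N^2) * (‖q‖^(N*k))⁻¹ := by
    have h3 : ‖q‖^(N*k) ≤ ‖q‖^(N^2+k^2) :=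
      pow_le_pow_right₀ hq.le (by nlinarith)
    calc (‖q‖^(k^2))⁻¹ = ‖q‖^(N^2) / (‖q‖^(N^2) * ‖q‖^(k^2)) := by
          rw [div_mul_eq_div_div, div_self (by positivity), one_div]
      _ = ‖q‖^(N^2) / ‖q‖^(N^2+k^2) := by rw [pow_add]
      _ ≤ ‖q‖^(N^2) / ‖q‖^(N*k) := by
          apply div_le_div_of_nonneg_left (by positivity) (by positivity) h3
      _ = ‖q‖^(N^2) * (‖q‖^(N*k))⁻¹ := div_eq_mul_inv _ _
  calc (2/(1-‖q‖⁻¹))^k * (‖q‖^(k^2))⁻¹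
      ≤ (2/(1-‖q‖⁻¹))^k * (‖q‖^(N^2) * (‖q‖^(N*k))⁻¹) := by
        apply mul_le_mul_of_nonneg_left h2 (by positivity)
    _ = ‖q‖^(N^2) * ((2/(1-‖q‖⁻¹))^k * (‖q‖^(N*k))⁻¹) := by ring

lemma g_summable (hq : 1 < ‖q‖) :
    Summable (fun k : ℕ => (2/(1-‖q‖⁻¹))^k * (‖q‖^(k^2))⁻¹) := by
  obtain ⟨N, hN⟩ := pow_unbounded_of_one_lt (2/(1-‖q‖⁻¹)) hq
  have hρ0 : (0:ℝ) ≤ (2/(1-‖q‖⁻¹))/‖q‖^N := by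
    have := Bpos hq
    have hr : (0:ℝ) < ‖q‖ := lt_trans one_pos hq
    positivity
  have hρ1 : (2/(1-‖q‖⁻¹))/‖q‖^N < 1 := by
    rw [div_lt_one (by positivity)]
    exact hN
  exact Summable.of_nonneg_of_le (fun k => by have := Bpos hq; positivity)
    (g_le hq N) (((summable_geometric_of_lt_one hρ0 hρ1)).mul_left _)

lemma g_tendsto (hq : 1 < ‖q‖) :
    Filter.Tendsto (fun k : ℕ => (2/(1-‖q‖⁻¹))^k * (‖q‖^(k^2))⁻¹)
      Filter.atTop (nhds 0) := by
  obtain ⟨N, hN⟩ := pow_unbounded_of_one_lt (2/(1-‖q‖⁻¹)) hq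
  have hρ0 : (0:ℝ) ≤ (2/(1-‖q‖⁻¹))/‖q‖^N := by
    have := Bpos hq
    have hr : (0:ℝ) < ‖q‖ := lt_trans one_pos hq
    positivity
  have hρ1 : (2/(1-‖q‖⁻¹))/‖q‖^N < 1 := by
    rw [div_lt_one (by positivity)]
    exact hN
  apply squeeze_zero (fun k => by have := Bpos hq; positivity) (g_le hq N)
  simpa using ((tendsto_pow_atTop_nhds_zero_of_lt_one hρ0 hρ1).const_mul (‖q‖^(N^2)))

lemma inv_pow_norm_le_one (hq : 1 < ‖q‖) (m : ℕ) : ‖((q^m)⁻¹ : ℂ)‖ ≤ 1 := by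
  rw [norm_inv, norm_pow]
  exact inv_le_one_of_one_le₀ (one_le_pow₀ hq.le)

lemma tt_norm_le (hq : 1 < ‖q‖) (n k : ℕ) :
    ‖tt q n k‖ ≤ (2*(2/(1-‖q‖⁻¹))^(2*n)) * ((2/(1-‖q‖⁻¹))^k * (‖q‖^(k^2))⁻¹) := by
  have hr : (0:ℝ) < ‖q‖ := lt_trans one_pos hq
  have hB := Bpos hq
  rw [tform hq n k, norm_mul, norm_mul, norm_inv, norm_pow]
  have h2 : ‖(1:ℂ) - (q ^ (2*n+2*k+1))⁻¹‖ ≤ 2 := by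
    calc ‖(1:ℂ) - (q ^ (2*n+2*k+1))⁻¹‖ ≤ ‖(1:ℂ)‖ + ‖((q ^ (2*n+2*k+1))⁻¹ : ℂ)‖ := norm_sub_le _ _
      _ ≤ 1 + 1 := by
          rw [norm_one]
          have := inv_pow_norm_le_one hq (2*n+2*k+1)
          linarith
      _ = 2 := by norm_num
  have step : (‖q‖^((n+k)^2+n*k))⁻¹ * ‖(1:ℂ) - (q ^ (2*n+2*k+1))⁻¹‖ * ‖qBinom q (2*n+k) (2*n)‖
      ≤ (‖q‖^((n+k)^2+n*k))⁻¹ * 2 * ((2/(1-‖q‖⁻¹))^(2*n+k) * ‖q‖^(2*n*k)) := by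
    gcongr
    · exact binom_norm_le hq n k
  refine le_trans step ?_
  have hkey : ‖q‖^(2*n*k) * (‖q‖^((n+k)^2+n*k))⁻¹ ≤ (‖q‖^(k^2))⁻¹ := by
    rw [← div_eq_mul_inv, div_le_iff₀ (by positivity)]
    rw [← one_div, div_mul_eq_mul_div, one_mul, le_div_iff₀ (by positivity)]
    rw [← pow_add]
    exact pow_le_pow_right₀ hq.le (by nlinarith)
  calc (‖q‖^((n+k)^2+n*k))⁻¹ * 2 * ((2/(1-‖q‖⁻¹))^(2*n+k) * ‖q‖^(2*n*k))
      = (2*(2/(1-‖q‖⁻¹))^(2*n)) * (2/(1-‖q‖⁻¹))^k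
          * (‖q‖^(2*n*k) * (‖q‖^((n+k)^2+n*k))⁻¹) := by
        rw [pow_add]; ring
    _ ≤ (2*(2/(1-‖q‖⁻¹))^(2*n)) * (2/(1-‖q‖⁻¹))^k * (‖q‖^(k^2))⁻¹ := by
        apply mul_le_mul_of_nonneg_left hkey (by positivity)
    _ = (2*(2/(1-‖q‖⁻¹))^(2*n)) * ((2/(1-‖q‖⁻¹))^k * (‖q‖^(k^2))⁻¹) := by ring

lemma uu_norm_le (hq : 1 < ‖q‖) (n k : ℕ) :
    ‖uu q n k‖ ≤ (6*‖q‖^(2*n+2)*(2/(1-‖q‖⁻¹))^(2*n))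
      * ((2/(1-‖q‖⁻¹))^k * (‖q‖^(k^2))⁻¹) := by
  have hr : (0:ℝ) < ‖q‖ := lt_trans one_pos hq
  have hB := Bpos hq
  rw [uu, norm_mul, norm_mul, norm_mul, norm_inv, norm_pow, norm_pow]
  have hbr : ‖(q ^ (n+1))⁻¹ * (1 - (q ^ (2*k))⁻¹)
      - (1 - (q ^ k)⁻¹) * (1 + (q ^ (2*k+3*n+2))⁻¹)‖ ≤ 6 := by
    have i1 := inv_pow_norm_le_one hq (n+1)
    have i2 := inv_pow_norm_le_one hq (2*k)
    have i3 := inv_pow_norm_le_one hq k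
    have i4 := inv_pow_norm_le_one hq (2*k+3*n+2)
    have b1 : ‖(1:ℂ) - (q ^ (2*k))⁻¹‖ ≤ 2 := by
      calc ‖(1:ℂ) - (q ^ (2*k))⁻¹‖ ≤ ‖(1:ℂ)‖ + ‖((q ^ (2*k))⁻¹:ℂ)‖ := norm_sub_le _ _
        _ ≤ 2 := by rw [norm_one]; linarith
    have b2 : ‖(1:ℂ) - (q ^ k)⁻¹‖ ≤ 2 := by
      calc ‖(1:ℂ) - (q ^ k)⁻¹‖ ≤ ‖(1:ℂ)‖ + ‖((q ^ k)⁻¹:ℂ)‖ := norm_sub_le _ _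
        _ ≤ 2 := by rw [norm_one]; linarith
    have b3 : ‖(1:ℂ) + (q ^ (2*k+3*n+2))⁻¹‖ ≤ 2 := by
      calc ‖(1:ℂ) + (q ^ (2*k+3*n+2))⁻¹‖ ≤ ‖(1:ℂ)‖ + ‖((q ^ (2*k+3*n+2))⁻¹:ℂ)‖ := norm_add_le _ _
        _ ≤ 2 := by rw [norm_one]; linarith
    calc ‖(q ^ (n+1))⁻¹ * (1 - (q ^ (2*k))⁻¹) - (1 - (q ^ k)⁻¹) * (1 + (q ^ (2*k+3*n+2))⁻¹)‖
        ≤ ‖(q ^ (n+1))⁻¹ * (1 - (q ^ (2*k))⁻¹)‖ + ‖(1 - (q ^ k)⁻¹) * (1 + (q ^ (2*k+3*n+2))⁻¹)‖ :=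
          norm_sub_le _ _
      _ = ‖((q ^ (n+1))⁻¹:ℂ)‖ * ‖(1:ℂ) - (q ^ (2*k))⁻¹‖
          + ‖(1:ℂ) - (q ^ k)⁻¹‖ * ‖(1:ℂ) + (q ^ (2*k+3*n+2))⁻¹‖ := by rw [norm_mul, norm_mul]
      _ ≤ 1 * 2 + 2 * 2 := by
          exact add_le_add (mul_le_mul i1 b1 (norm_nonneg _) zero_le_one)
            (mul_le_mul b2 b3 (norm_nonneg _) zero_le_two)
      _ = 6 := by norm_num
  have step : ‖qBinom q (2*n+k) (2*n)‖ * (‖q‖^(n^2+3*n*k+k^2))⁻¹ * ‖q‖^(2*n+2) *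
        ‖(q ^ (n+1))⁻¹ * (1 - (q ^ (2*k))⁻¹) - (1 - (q ^ k)⁻¹) * (1 + (q ^ (2*k+3*n+2))⁻¹)‖
      ≤ ((2/(1-‖q‖⁻¹))^(2*n+k) * ‖q‖^(2*n*k)) * (‖q‖^(n^2+3*n*k+k^2))⁻¹ * ‖q‖^(2*n+2) * 6 := by
    gcongr
    · exact binom_norm_le hq n k
  refine le_trans step ?_
  have hkey : ‖q‖^(2*n*k) * (‖q‖^(n^2+3*n*k+k^2))⁻¹ ≤ (‖q‖^(k^2))⁻¹ := by
    rw [← div_eq_mul_inv, div_le_iff₀ (by positivity)]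
    rw [← one_div, div_mul_eq_mul_div, one_mul, le_div_iff₀ (by positivity)]
    rw [← pow_add]
    exact pow_le_pow_right₀ hq.le (by nlinarith)
  calc ((2/(1-‖q‖⁻¹))^(2*n+k) * ‖q‖^(2*n*k)) * (‖q‖^(n^2+3*n*k+k^2))⁻¹ * ‖q‖^(2*n+2) * 6
      = (6*‖q‖^(2*n+2)*(2/(1-‖q‖⁻¹))^(2*n)) * (2/(1-‖q‖⁻¹))^k
        * (‖q‖^(2*n*k) * (‖q‖^(n^2+3*n*k+k^2))⁻¹) := by rw [pow_add]; ring
    _ ≤ (6*‖q‖^(2*n+2)*(2/(1-‖q‖⁻¹))^(2*n)) * (2/(1-‖q‖⁻¹))^k * (‖q‖^(k^2))⁻¹ := by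
        apply mul_le_mul_of_nonneg_left hkey (by positivity)
    _ = (6*‖q‖^(2*n+2)*(2/(1-‖q‖⁻¹))^(2*n)) * ((2/(1-‖q‖⁻¹))^k * (‖q‖^(k^2))⁻¹) := by ring

lemma tt_summable_norm (hq : 1 < ‖q‖) (n : ℕ) : Summable (fun k => ‖tt q n k‖) :=
  Summable.of_nonneg_of_le (fun k => norm_nonneg _) (tt_norm_le hq n)
    ((g_summable hq).mul_left _)

lemma uu_tendsto (hq : 1 < ‖q‖) (n : ℕ) :
    Filter.Tendsto (fun k => uu q n k) Filter.atTop (nhds 0) := by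
  apply squeeze_zero_norm (uu_norm_le hq n)
  simpa using (g_tendsto hq).const_mul (6*‖q‖^(2*n+2)*(2/(1-‖q‖⁻¹))^(2*n))


lemma uu_zero (n : ℕ) : uu q n 0 = 0 := by
  simp [uu]

lemma qBinom_zero (hq : 1 < ‖q‖) (m : ℕ) : qBinom q m 0 = 1 := by
  rw [qBinom, Nat.sub_zero]
  rw [show qPoch q q 0 = 1 from by simp [qPoch], one_mul]
  exact div_self (qPoch_ne hq m)

lemma tt_zero_eq (hq : 1 < ‖q‖) (k : ℕ) :
    tt q 0 k = q ^ (-((k:ℤ))^2) - q ^ (-(((k:ℤ))+1)^2) := by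
  rw [tt, show 2*0+k = k from by omega, show 2*0 = 0 from rfl, qBinom_zero hq]
  push_cast
  simp

lemma f_tendsto (hq : 1 < ‖q‖) :
    Filter.Tendsto (fun k : ℕ => q ^ (-((k:ℤ))^2)) Filter.atTop (nhds 0) := by
  refine squeeze_zero_norm (a := fun k : ℕ => (2/(1-‖q‖⁻¹))^k * (‖q‖^(k^2))⁻¹)
    (fun k => ?_) (g_tendsto hq)
  ·
    have e1 : -((k:ℤ))^2 = -(((k^2 : ℕ)) : ℤ) := by push_cast; ring
    rw [norm_zpow, e1, zpow_neg, zpow_natCast]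
    have h1 : (1:ℝ) ≤ (2/(1-‖q‖⁻¹))^k := one_le_pow₀ (one_le_B hq)
    have h2 : (0:ℝ) ≤ (‖q‖^(k^2))⁻¹ := by positivity
    calc (‖q‖^(k^2))⁻¹ = 1 * (‖q‖^(k^2))⁻¹ := (one_mul _).symm
      _ ≤ (2/(1-‖q‖⁻¹))^k * (‖q‖^(k^2))⁻¹ := mul_le_mul_of_nonneg_right h1 h2

lemma tsum_tt (hq : 1 < ‖q‖) (n : ℕ) :
    ∑' k, tt q n k
      = (-1)^n * q^(n*(n+1)/2) / ∏ j ∈ Finset.range n, (1 - q^(n+j+1)) := by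
  induction n with
  | zero =>
      have hs : Summable (fun k => tt q 0 k) := (tt_summable_norm hq 0).of_norm
      have h1 := hs.hasSum.tendsto_sum_nat
      have heq : ∀ K, ∑ i ∈ Finset.range K, tt q 0 i
          = q ^ (-((0:ℤ))^2) - q ^ (-((K:ℤ))^2) := by
        intro K
        rw [Finset.sum_congr rfl (fun i _ => by
          rw [tt_zero_eq hq i, show -(((i:ℤ))+1)^2 = -(((i+1:ℕ):ℤ))^2 from by push_cast; ring])]
        exact Finset.sum_range_sub' (fun i : ℕ => q ^ (-((i:ℤ))^2)) K
      have h2 : Filter.Tendsto (fun K => ∑ i ∈ Finset.range K, tt q 0 i)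
          Filter.atTop (nhds 1) := by
        simp only [heq]
        have h3 : q ^ (-((0:ℤ))^2) = 1 := by norm_num
        rw [h3]
        have := (tendsto_const_nhds (x := (1:ℂ)) (f := Filter.atTop)).sub (f_tendsto hq)
        simpa using this
      have := tendsto_nhds_unique h1 h2
      simpa using this
  | succ n ih =>
      set A := (1-q^(2*n+1))*(1-q^(2*n+2)) with hAdef
      set Bc := q^(n+1)*(1-q^(n+1)) with hBdef
      have hsum1 : Summable (fun k => tt q (n+1) k) := (tt_summable_norm hq (n+1)).of_norm
      have hsumn : Summable (fun k => tt q n k) := (tt_summable_norm hq n).of_norm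
      have hsumD : Summable (fun k => A * tt q (n+1) k + Bc * tt q n k) :=
        (hsum1.mul_left A).add (hsumn.mul_left Bc)
      have htsumD : ∑' k, (A * tt q (n+1) k + Bc * tt q n k)
          = A * ∑' k, tt q (n+1) k + Bc * ∑' k, tt q n k := by
        rw [Summable.tsum_add (hsum1.mul_left A) (hsumn.mul_left Bc), tsum_mul_left, tsum_mul_left]
      have hzero : ∑' k, (A * tt q (n+1) k + Bc * tt q n k) = 0 := by
        have h1 := hsumD.hasSum.tendsto_sum_nat
        have heq : ∀ K, ∑ i ∈ Finset.range K, (A * tt q (n+1) i + Bc * tt q n i)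
            = uu q n 0 - uu q n K := by
          intro K
          rw [Finset.sum_congr rfl (fun i _ => key_step hq n i)]
          exact Finset.sum_range_sub' (uu q n) K
        have h2 : Filter.Tendsto (fun K => ∑ i ∈ Finset.range K, (A * tt q (n+1) i + Bc * tt q n i))
            Filter.atTop (nhds 0) := by
          simp only [heq, uu_zero, zero_sub]
          simpa using (uu_tendsto hq n).neg
        exact tendsto_nhds_unique h1 h2
      have hrec : A * (∑' k, tt q (n+1) k) = -(Bc * ∑' k, tt q n k) := by
        have h := htsumD.symm.trans hzero
        linear_combination h
      have hA : A ≠ 0 := mul_ne_zero (fac_ne hq (2*n)) (fac_ne hq (2*n+1))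
      have hDn : (∏ j ∈ Finset.range n, (1 - q^(n+j+1))) ≠ 0 :=
        Finset.prod_ne_zero_iff.mpr (fun j _ => fac_ne hq (n+j))
      have hDn1 : (∏ j ∈ Finset.range (n+1), (1 - q^((n+1)+j+1))) ≠ 0 :=
        Finset.prod_ne_zero_iff.mpr (fun j _ => fac_ne hq ((n+1)+j))
      have hE : (n+1)*((n+1)+1)/2 = n*(n+1)/2 + (n+1) := by
        obtain ⟨a, ha⟩ := Nat.even_mul_succ_self n
        obtain ⟨b, hb⟩ := Nat.even_mul_succ_self (n+1)
        have h3 : (n+1)*((n+1)+1) = n*(n+1) + 2*(n+1) := by ring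
        rw [ha, hb] at h3 ⊢
        omega
      have hprod : (∏ j ∈ Finset.range (n+1), (1 - q^((n+1)+j+1))) * (1 - q^(n+1))
          = (∏ j ∈ Finset.range n, (1 - q^(n+j+1))) * A := by
        have e1 : ∏ j ∈ Finset.range (n+1), (1 - q^((n+1)+j+1))
            = ∏ j ∈ Finset.range (n+1), (1 - q^(n+(j+1)+1)) :=
          Finset.prod_congr rfl (fun j _ => by rw [show (n+1)+j+1 = n+(j+1)+1 from by omega])
        have e2 : ∏ j ∈ Finset.range (n+1), (1 - q^(n+(j+1)+1))
            = (∏ j ∈ Finset.range n, (1 - q^(n+(j+1)+1))) * (1 - q^(n+(n+1)+1)) :=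
          Finset.prod_range_succ _ n
        have e3 : ∏ j ∈ Finset.range (n+1), (1 - q^(n+j+1))
            = (∏ j ∈ Finset.range n, (1 - q^(n+(j+1)+1))) * (1 - q^(n+0+1)) :=
          (Finset.prod_range_succ' (fun j => 1 - q^(n+j+1)) n)
        have e4 : ∏ j ∈ Finset.range (n+1), (1 - q^(n+j+1))
            = (∏ j ∈ Finset.range n, (1 - q^(n+j+1))) * (1 - q^(n+n+1)) :=
          Finset.prod_range_succ _ n
        rw [e1, e2]
        rw [show n+(n+1)+1 = 2*n+2 from by ring, show n+0+1 = n+1 from by ring] at *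
        rw [show n+n+1 = 2*n+1 from by ring] at e4
        rw [hAdef]
        linear_combination (1 - q^(2*n+2)) * (e3.symm.trans e4)
      apply mul_left_cancel₀ hA
      rw [hrec, ih, hE]
      rw [← mul_div_assoc, ← mul_div_assoc, ← neg_div, div_eq_div_iff hDn hDn1]
      linear_combination (-((-1:ℂ)^n * q^(n*(n+1)/2) * q^(n+1))) * hprod
  

end PlusOneAux

/-- Regularized `+1`-surgery evaluation: for `|q| > 1`,
`∑_{k≥0} (q^{−(n+k)²} − q^{−(n+k+1)²}) q^{−nk} C_q(2n+k,2n)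
  = (−1)^n q^{n(n+1)/2} / ∏_{j=1}^n (1 − q^{n+j+1})`, converging absolutely. -/
theorem plus_one_surgery_identity (n : ℕ) (q : ℂ) (hq : 1 < ‖q‖) :
    Summable (fun k : ℕ =>
      ‖(q ^ (-((n + k : ℤ) ^ 2)) - q ^ (-((n + k + 1 : ℤ) ^ 2))) * q ^ (-(n * k : ℤ)) *
        qBinom q (2 * n + k) (2 * n)‖) ∧
    ∑' k : ℕ, (q ^ (-((n + k : ℤ) ^ 2)) - q ^ (-((n + k + 1 : ℤ) ^ 2))) * q ^ (-(n * k : ℤ)) *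
        qBinom q (2 * n + k) (2 * n)
      = (-1) ^ n * q ^ (n * (n + 1) / 2) / ∏ j ∈ Finset.range n, (1 - q ^ (n + j + 1)) := by
  constructor
  · have := PlusOneAux.tt_summable_norm hq n
    simpa only [PlusOneAux.tt] using this
  · have := PlusOneAux.tsum_tt hq n
    simpa only [PlusOneAux.tt] using this
end

section
/- Fix a complex number q with 0 < |q| < 1, and let (a_i)_{i≥0} and (f_j)_{j≥0} be sequences of complex numbers. Then the following two conditions are equivalent: (1) for every j ≥ 0, f_j = ∑_{i=0}^{j} q^{−i(j−i)} C_q(j+i, 2i) · a_i; (2) for every i ≥ 0, a_i = ∑_{j=0}^{i} (−1)^{i+j} q^{−(i−j)(i+j−1)/2} C_q(2i, i−j) · ([2j+1]_q / [i+j+1]_q) · f_j. (Note (i−j)(i+j−1) is always even, so all exponents of q are integers.) -/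
/-- The q-integer `[m]_q = (1 - q^m)/(1 - q)`. -/
noncomputable def qInt (q : ℂ) (m : ℕ) : ℂ := (1 - q ^ m) / (1 - q)

namespace HabiroAux

variable {q : ℂ}

/-- hypothesis package -/
structure Good (q : ℂ) : Prop where
  ne : q ≠ 0
  pow_ne : ∀ n : ℕ, 1 ≤ n → q ^ n ≠ 1

theorem Good.zpow_ne (h : Good q) (z : ℤ) : q ^ z ≠ 0 := zpow_ne_zero z h.ne

theorem good_of_norm (hq0 : 0 < ‖q‖) (hq1 : ‖q‖ < 1) : Good q := by
  constructor
  · intro h; rw [h] at hq0; simp at hq0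
  · intro n hn h
    have : ‖q ^ n‖ < 1 := by
      rw [norm_pow]
      calc ‖q‖ ^ n ≤ ‖q‖ ^ 1 := pow_le_pow_of_le_one (norm_nonneg q) hq1.le hn
        _ < 1 := by simpa using hq1
    rw [h] at this; simp at this

theorem qPoch_succ (m : ℕ) : qPoch q q (m + 1) = qPoch q q m * (1 - q ^ (m + 1)) := by
  rw [qPoch, Finset.prod_range_succ, ← qPoch, pow_succ']

theorem Good.qPoch_ne (h : Good q) (m : ℕ) : qPoch q q m ≠ 0 := by
  rw [qPoch]
  apply Finset.prod_ne_zero_iff.2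
  intro l _
  have := h.pow_ne (l + 1) (by omega)
  rw [pow_succ'] at this
  intro hc
  apply this
  linear_combination -hc

theorem qPoch_zero : qPoch q q 0 = 1 := by simp [qPoch]

theorem Good.qInt_ne (h : Good q) (n : ℕ) (hn : 1 ≤ n) : qInt q n ≠ 0 := by
  rw [qInt]
  apply div_ne_zero
  · intro hc
    exact h.pow_ne n hn (by linear_combination -hc)
  · intro hc
    exact h.pow_ne 1 le_rfl (by linear_combination -hc)

theorem Good.qBinom_zero (h : Good q) (n : ℕ) : qBinom q n 0 = 1 := by
  rw [qBinom, qPoch_zero]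
  rw [one_mul, Nat.sub_zero, div_self (h.qPoch_ne n)]

theorem Good.qBinom_self (h : Good q) (n : ℕ) : qBinom q n n = 1 := by
  rw [qBinom, Nat.sub_self, qPoch_zero, mul_one, div_self (h.qPoch_ne n)]

theorem Good.qBinom_symm (h : Good q) (n r : ℕ) (hr : r ≤ n) :
    qBinom q n (n - r) = qBinom q n r := by
  rw [qBinom, qBinom, Nat.sub_sub_self hr, mul_comm]

end HabiroAux

namespace HabiroAux
variable {q : ℂ}

theorem Good.qPascal (h : Good q) (s t : ℕ) :
    qBinom q (t + s + 2) (t + 1) =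
      qBinom q (t + s + 1) (t + 1) + q ^ (s + 1) * qBinom q (t + s + 1) t := by
  have e1 : t + s + 2 - (t + 1) = s + 1 := by omega
  have e2 : t + s + 1 - (t + 1) = s := by omega
  have e3 : t + s + 1 - t = s + 1 := by omega
  rw [qBinom, qBinom, qBinom, e1, e2, e3]
  rw [show t + s + 2 = (t + s + 1) + 1 by omega, qPoch_succ, qPoch_succ s, qPoch_succ t]
  have P1 := h.qPoch_ne (t + s + 1)
  have P2 := h.qPoch_ne t
  have P3 := h.qPoch_ne s
  have n1 : (1 : ℂ) - q ^ (t + 1) ≠ 0 := fun hc => h.pow_ne (t+1) (by omega) (by linear_combination -hc)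
  have n2 : (1 : ℂ) - q ^ (s + 1) ≠ 0 := fun hc => h.pow_ne (s+1) (by omega) (by linear_combination -hc)
  field_simp
  ring_nf

theorem Good.qPascal' (h : Good q) (n t : ℕ) (ht : t < n) :
    qBinom q (n + 1) (t + 1) = qBinom q n (t + 1) + q ^ (n - t) * qBinom q n t := by
  obtain ⟨s, rfl⟩ : ∃ s, n = t + s + 1 := ⟨n - t - 1, by omega⟩
  have e : t + s + 1 - t = s + 1 := by omega
  rw [e]
  exact h.qPascal s t

/-- q-binomial theorem -/
theorem Good.qBinomThm (h : Good q) (x : ℂ) (n : ℕ) :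
    ∏ l ∈ Finset.range n, (1 - x * q ^ l) =
      ∑ t ∈ Finset.range (n + 1), (-1 : ℂ) ^ t * q ^ (t.choose 2) * qBinom q n t * x ^ t := by
  induction n with
  | zero => simp [h.qBinom_zero]
  | succ n ih =>
    rw [Finset.prod_range_succ, ih,
      Finset.sum_range_succ' (fun t => (-1 : ℂ) ^ t * q ^ (t.choose 2) * qBinom q (n+1) t * x ^ t) (n+1)]
    have hch : ∀ t : ℕ, ((t+1).choose 2) = t.choose 2 + t := by
      intro t
      rw [Nat.choose_succ_succ]
      simp [Nat.choose_one_right, Nat.add_comm]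
    have key : ∀ t ∈ Finset.range (n + 1),
        (-1 : ℂ) ^ (t+1) * q ^ ((t+1).choose 2) * qBinom q (n+1) (t+1) * x ^ (t+1) =
        (if t = n then 0 else (-1 : ℂ) ^ (t+1) * q ^ ((t+1).choose 2) * qBinom q n (t+1) * x ^ (t+1))
          + (-(q ^ n * x)) * ((-1 : ℂ) ^ t * q ^ (t.choose 2) * qBinom q n t * x ^ t) := by
      intro t ht
      rw [Finset.mem_range] at ht
      rcases Nat.lt_or_ge t n with hlt | hge
      · rw [if_neg (by omega), h.qPascal' n t hlt, hch t, pow_add]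
        have hq2 : q ^ t * q ^ (n - t) = q ^ n := by rw [← pow_add]; congr 1; omega
        linear_combination ((-1:ℂ)^(t+1) * q^(Nat.choose t 2) * x^(t+1) * qBinom q n t) * hq2
      · have ht' : t = n := by omega
        subst ht'
        rw [if_pos rfl, h.qBinom_self, h.qBinom_self, hch t, pow_add]
        ring
    rw [Finset.sum_congr rfl key, Finset.sum_add_distrib]
    have h1 : ∑ t ∈ Finset.range (n+1),
        (if t = n then (0:ℂ) else (-1 : ℂ) ^ (t+1) * q ^ ((t+1).choose 2) * qBinom q n (t+1) * x ^ (t+1))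
        = ∑ t ∈ Finset.range n, (-1 : ℂ) ^ (t+1) * q ^ ((t+1).choose 2) * qBinom q n (t+1) * x ^ (t+1) := by
      rw [Finset.sum_range_succ, if_pos rfl, add_zero]
      exact Finset.sum_congr rfl fun t ht => if_neg (by rw [Finset.mem_range] at ht; omega)
    rw [h1]
    have h2 := Finset.sum_range_succ' (fun t => (-1 : ℂ) ^ t * q ^ (t.choose 2) * qBinom q n t * x ^ t) n
    rw [show ∑ t ∈ Finset.range n, (-1 : ℂ) ^ (t+1) * q ^ ((t+1).choose 2) * qBinom q n (t+1) * x ^ (t+1)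
        = (∑ t ∈ Finset.range (n+1), (-1 : ℂ) ^ t * q ^ (t.choose 2) * qBinom q n t * x ^ t)
          - (-1 : ℂ) ^ 0 * q ^ (Nat.choose 0 2) * qBinom q n 0 * x ^ 0 by rw [h2]; ring]
    rw [← Finset.mul_sum, h.qBinom_zero, h.qBinom_zero]
    ring
end HabiroAux

namespace HabiroAux
variable {q : ℂ}

/-- the matrix M -/
noncomputable def Mc (q : ℂ) (j k : ℕ) : ℂ :=
  q ^ (-(k * (j - k) : ℤ)) * qBinom q (j + k) (2 * k)

/-- the matrix N -/
noncomputable def Nc (q : ℂ) (i j : ℕ) : ℂ :=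
  (-1 : ℂ) ^ (i + j) * q ^ (-(((i : ℤ) - j) * ((i : ℤ) + j - 1) / 2)) *
    qBinom q (2 * i) (i - j) * (qInt q (2 * j + 1) / qInt q (i + j + 1))

/-- symmetric monomial functions -/
noncomputable def mf (q : ℂ) (d : ℕ) : ℕ → ℂ :=
  fun j => q ^ ((j : ℤ) * d) + q ^ ((-(j : ℤ) - 1) * d)

/-- the factor function -/
noncomputable def wf (q : ℂ) (k : ℕ) : ℕ → ℂ :=
  fun j => q ^ (-(j : ℤ)) * ((1 - q ^ (j + k + 1)) * (1 - q ^ ((j : ℤ) - k)))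

/-- the polynomial basis function -/
noncomputable def phi (q : ℂ) (k : ℕ) : ℕ → ℂ :=
  fun j => ∏ m ∈ Finset.range k, wf q m j

theorem qz (h : q ≠ 0) {A B C : ℤ} (hABC : A + B = C) : q ^ A * q ^ B = q ^ C := by
  rw [← zpow_add₀ h, hABC]

theorem phi_eq_zero (k j : ℕ) (hjk : j < k) : phi q k j = 0 := by
  apply Finset.prod_eq_zero (Finset.mem_range.2 hjk)
  rw [wf]
  simp

theorem qPoch_add (j k : ℕ) : qPoch q q (j + k) = qPoch q q j * ∏ m ∈ Finset.range k, (1 - q ^ (j + m + 1)) := by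
  rw [qPoch, qPoch, Finset.prod_range_add]
  congr 1
  exact Finset.prod_congr rfl fun m _ => by rw [← pow_succ']

theorem prod_B (h : Good q) (j k : ℕ) (hkj : k ≤ j) :
    ∏ m ∈ Finset.range k, (1 - q ^ ((j : ℤ) - m)) = qPoch q q j / qPoch q q (j - k) := by
  have h2 : qPoch q q j = qPoch q q (j - k) * ∏ m ∈ Finset.range k, (1 - q ^ (j - k + m + 1)) := by
    rw [← qPoch_add]; congr 1; omega
  rw [h2, mul_comm (qPoch q q (j-k)) _, mul_div_assoc, div_self (h.qPoch_ne (j-k)), mul_one]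
  rw [← Finset.prod_range_reflect (fun m => 1 - q ^ (j - k + m + 1)) k]
  apply Finset.prod_congr rfl
  intro m hm
  rw [Finset.mem_range] at hm
  congr 1
  rw [show j - k + (k - 1 - m) + 1 = j - m by omega, show (j:ℤ) - m = ((j - m : ℕ) : ℤ) by omega,
    zpow_natCast]

end HabiroAux

namespace HabiroAux
variable {q : ℂ}

theorem phi_closed (h : Good q) (k j : ℕ) (hkj : k ≤ j) :
    phi q k j = q ^ (-((j : ℤ) * k)) * (qPoch q q (j + k) / (qPoch q q j)) *
      (qPoch q q j / qPoch q q (j - k)) := by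
  rw [phi]
  simp only [wf]
  rw [Finset.prod_mul_distrib, Finset.prod_mul_distrib, Finset.prod_const, Finset.card_range, prod_B h j k hkj]
  have hA : ∏ m ∈ Finset.range k, (1 - q ^ (j + m + 1)) = qPoch q q (j + k) / qPoch q q j := by
    rw [qPoch_add, mul_comm, mul_div_assoc, div_self (h.qPoch_ne j), mul_one]
  have hP : (q ^ (-(j : ℤ))) ^ k = q ^ (-((j : ℤ) * k)) := by
    rw [← zpow_natCast (q ^ (-(j : ℤ))) k, ← zpow_mul]
    congr 1
    ring
  rw [hA, hP]
  ring

theorem Mc_eq_phi (h : Good q) (k j : ℕ) (hkj : k ≤ j) :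
    Mc q j k = (q ^ ((k * k : ℕ)) / qPoch q q (2 * k)) * phi q k j := by
  rw [phi_closed h k j hkj, Mc, qBinom, show j + k - 2 * k = j - k by omega]
  have h1 := h.qPoch_ne j
  have h2 := h.qPoch_ne (j - k)
  have h3 := h.qPoch_ne (2 * k)
  have hx : q ^ (-((k:ℤ) * ((j:ℤ) - k))) = q ^ ((k*k : ℕ)) * q ^ (-((j:ℤ) * k)) := by
    rw [← zpow_natCast q (k*k), qz h.ne]
    push_cast
    ring
  rw [hx]
  have hz1 : q ^ (-((j:ℤ) * k)) ≠ 0 := h.zpow_ne _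
  field_simp

end HabiroAux

namespace HabiroAux
variable {q : ℂ}

noncomputable def V (q : ℂ) (s : ℕ) : Submodule ℂ (ℕ → ℂ) :=
  Submodule.span ℂ (mf q '' {d | d ≤ s})

theorem mf_mem {d s : ℕ} (hd : d ≤ s) : mf q d ∈ V q s :=
  Submodule.subset_span ⟨d, hd, rfl⟩

theorem V_mono {s t : ℕ} (hst : s ≤ t) : V q s ≤ V q t :=
  Submodule.span_mono (Set.image_mono fun d hd => le_trans hd hst)

theorem mul_key (h : q ≠ 0) (d j : ℕ) :
    mf q d j * (q ^ ((j:ℤ) + 1) + q ^ (-(j:ℤ))) =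
      q * mf q (d+1) j + (if d = 0 then q * mf q 1 j else mf q (d-1) j) := by
  rcases d with _ | e
  · rw [if_pos rfl]
    simp only [mf, Nat.cast_zero, mul_zero, zpow_zero, Nat.cast_one, mul_one, Nat.zero_add]
    have hq1 : q * q ^ (j:ℤ) = q ^ ((j:ℤ) + 1) := by
      rw [← zpow_one_add₀ h]; congr 1; ring
    have hq2 : q * q ^ (-(j:ℤ) - 1) = q ^ (-(j:ℤ)) := by
      rw [← zpow_one_add₀ h]; congr 1; ring
    linear_combination (-2:ℂ) * hq1 - 2 * hq2
  · rw [if_neg (Nat.succ_ne_zero e)]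
    simp only [mf, Nat.add_sub_cancel]
    push_cast
    have a1 : q ^ ((j:ℤ) * ((e:ℤ)+1)) * q ^ ((j:ℤ)+1) = q * q ^ ((j:ℤ) * ((e:ℤ)+1+1)) := by
      rw [qz h (by ring : (j:ℤ) * ((e:ℤ)+1) + ((j:ℤ)+1) = 1 + (j:ℤ)*((e:ℤ)+1+1)), zpow_one_add₀ h]
    have a2 : q ^ ((j:ℤ) * ((e:ℤ)+1)) * q ^ (-(j:ℤ)) = q ^ ((j:ℤ) * (e:ℤ)) := by
      exact qz h (by ring)
    have a3 : q ^ ((-(j:ℤ) - 1) * ((e:ℤ)+1)) * q ^ ((j:ℤ)+1) = q ^ ((-(j:ℤ)-1) * (e:ℤ)) := by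
      exact qz h (by ring)
    have a4 : q ^ ((-(j:ℤ) - 1) * ((e:ℤ)+1)) * q ^ (-(j:ℤ)) = q * q ^ ((-(j:ℤ)-1) * ((e:ℤ)+1+1)) := by
      rw [qz h (by ring : (-(j:ℤ)-1) * ((e:ℤ)+1) + (-(j:ℤ)) = 1 + (-(j:ℤ)-1)*((e:ℤ)+1+1)), zpow_one_add₀ h]
    linear_combination a1 + a2 + a3 + a4

theorem y_mul_mem (h : Good q) (s : ℕ) {g : ℕ → ℂ} (hg : g ∈ V q s) :
    (fun j => g j * (q ^ ((j:ℤ) + 1) + q ^ (-(j:ℤ)))) ∈ V q (s + 1) := by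
  induction hg using Submodule.span_induction with
  | mem g hg =>
    obtain ⟨d, hd, rfl⟩ := hg
    simp only [Set.mem_setOf_eq] at hd
    have he : (fun j => mf q d j * (q ^ ((j:ℤ) + 1) + q ^ (-(j:ℤ))))
        = q • mf q (d+1) + (if d = 0 then q • mf q 1 else mf q (d-1)) := by
      funext j
      rw [mul_key h.ne d j]
      rcases eq_or_ne d 0 with hd0 | hd0 <;> simp [hd0]
    rw [he]
    apply add_mem (Submodule.smul_mem _ _ (mf_mem (Nat.succ_le_succ hd)))
    rcases eq_or_ne d 0 with hd0 | hd0
    · rw [if_pos hd0]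
      exact Submodule.smul_mem _ _ (mf_mem (Nat.succ_le_succ (Nat.zero_le s)))
    · rw [if_neg hd0]
      exact mf_mem (by omega : d - 1 ≤ s + 1)
  | zero =>
    have : (fun j => (0 : ℕ → ℂ) j * (q ^ ((j:ℤ) + 1) + q ^ (-(j:ℤ)))) = (0 : ℕ → ℂ) := by
      funext j; simp
    rw [this]; exact zero_mem _
  | add g g' _ _ ihg ihg' =>
    have : (fun j => (g + g') j * (q ^ ((j:ℤ) + 1) + q ^ (-(j:ℤ))))
        = (fun j => g j * (q ^ ((j:ℤ) + 1) + q ^ (-(j:ℤ))))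
          + (fun j => g' j * (q ^ ((j:ℤ) + 1) + q ^ (-(j:ℤ)))) := by
      funext j; simp [add_mul]
    rw [this]; exact add_mem ihg ihg'
  | smul c g _ ihg =>
    have : (fun j => (c • g) j * (q ^ ((j:ℤ) + 1) + q ^ (-(j:ℤ))))
        = c • (fun j => g j * (q ^ ((j:ℤ) + 1) + q ^ (-(j:ℤ)))) := by
      funext j; simp [mul_assoc]
    rw [this]; exact Submodule.smul_mem _ _ ihg

theorem wf_eq (h : q ≠ 0) (k j : ℕ) :
    wf q k j = (q ^ ((j:ℤ) + 1) + q ^ (-(j:ℤ))) - (q ^ ((k:ℤ) + 1) + q ^ (-(k:ℤ))) := by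
  rw [wf]
  have e1 : q ^ (j + k + 1) = q ^ ((j:ℤ) + k + 1) := by
    rw [← zpow_natCast]; norm_cast
  rw [e1]
  have c2 : q ^ (-(j:ℤ)) * q ^ ((j:ℤ) + k + 1) = q ^ ((k:ℤ) + 1) := qz h (by ring)
  have c3 : q ^ (-(j:ℤ)) * q ^ ((j:ℤ) - k) = q ^ (-(k:ℤ)) := qz h (by ring)
  have c6 : q ^ ((k:ℤ) + 1) * q ^ ((j:ℤ) - k) = q ^ ((j:ℤ) + 1) := qz h (by ring)
  linear_combination (-1 + q ^ ((j:ℤ) - (k:ℤ))) * c2 - c3 + c6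

theorem phi_mem (h : Good q) (k : ℕ) : phi q k ∈ V q k := by
  induction k with
  | zero =>
    have : phi q 0 = (2⁻¹ : ℂ) • mf q 0 := by
      funext j
      simp [phi, mf]
      norm_num
    rw [this]
    exact Submodule.smul_mem _ _ (mf_mem le_rfl)
  | succ k ih =>
    have he : phi q (k+1) = (fun j => phi q k j * (q ^ ((j:ℤ) + 1) + q ^ (-(j:ℤ))))
        - (q ^ ((k:ℤ) + 1) + q ^ (-(k:ℤ))) • phi q k := by
      funext j
      simp only [phi, Finset.prod_range_succ, Pi.sub_apply, Pi.smul_apply, smul_eq_mul]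
      rw [← phi, wf_eq h.ne k j]
      ring
    rw [he]
    exact sub_mem (y_mul_mem h k ih) (Submodule.smul_mem _ _ (V_mono (Nat.le_succ k) ih))

end HabiroAux

namespace HabiroAux
variable {q : ℂ}

def βz (i t : ℕ) : ℤ := (t.choose 2 : ℤ) + t * (1 - i)

theorem choose2_cast (t : ℕ) : ((t.choose 2 : ℕ) : ℤ) * 2 = (t : ℤ) * ((t : ℤ) - 1) := by
  induction t with
  | zero => simp
  | succ t ih =>
    have : (t+1).choose 2 = t.choose 2 + t := by
      rw [Nat.choose_succ_succ]
      simp [Nat.choose_one_right, Nat.add_comm]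
    rw [this]
    push_cast
    push_cast at ih
    linarith

theorem beta_reflect (i t : ℕ) (ht : t ≤ 2*i+1) :
    βz i (2*i+1-t) = βz i t + 2*(i:ℤ) + 1 - 2*t := by
  have hcast : ((2*i+1-t : ℕ) : ℤ) = 2*(i:ℤ)+1-t := by omega
  have c1 := choose2_cast (2*i+1-t)
  have c2 := choose2_cast t
  rw [hcast] at c1
  have h2 : 2 * βz i (2*i+1-t) = 2 * (βz i t + 2*(i:ℤ) + 1 - 2*t) := by
    simp only [βz]
    rw [hcast]
    linear_combination c1 - c2
  linarith

theorem negpow_eq (a b : ℕ) (hab : Even (a + b)) : (-1 : ℂ)^a = (-1 : ℂ)^b := by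
  rcases Nat.even_or_odd a with ha | ha
  · have hb : Even b := by
      simp only [Nat.even_iff, Nat.even_add] at *
      omega
    rw [ha.neg_one_pow, hb.neg_one_pow]
  · have hb : Odd b := by
      simp only [Nat.even_iff, Nat.odd_iff, Nat.even_add] at *
      omega
    rw [ha.neg_one_pow, hb.neg_one_pow]

theorem prod_vanish (h : Good q) (n : ℕ) (e : ℤ) (hl : ∃ l ∈ Finset.range n, e + l = 0) :
    ∏ l ∈ Finset.range n, (1 - q ^ e * q ^ l) = 0 := by
  obtain ⟨l, hl1, hl2⟩ := hl
  apply Finset.prod_eq_zero hl1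
  rw [← zpow_natCast q l, qz h.ne hl2, zpow_zero, sub_self]

/-- the reflected summand -/
noncomputable def Gf (q : ℂ) (i d t : ℕ) : ℂ :=
  (-1 : ℂ)^t * qBinom q (2*i+1) t *
    (q ^ (βz i t + ((i:ℤ) - t)*d) + q ^ (βz i t + (-((i:ℤ) - t) - 1)*d))

theorem sum_Gf (h : Good q) (i d : ℕ) (hdi : d < i) :
    ∑ t ∈ Finset.range (2*i+1+1), Gf q i d t = 0 := by
  have split : ∀ t ∈ Finset.range (2*i+1+1), Gf q i d t =
      q ^ ((i:ℤ)*d) * ((-1:ℂ)^t * q ^ (t.choose 2) * qBinom q (2*i+1) t * (q ^ (1 - (i:ℤ) - d)) ^ t)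
      + q ^ ((-(i:ℤ)-1)*d) * ((-1:ℂ)^t * q ^ (t.choose 2) * qBinom q (2*i+1) t * (q ^ (1 - (i:ℤ) + d)) ^ t) := by
    intro t _
    rw [Gf]
    have e1 : (q ^ (1 - (i:ℤ) - d)) ^ t = q ^ ((1 - (i:ℤ) - d) * t) := by
      rw [← zpow_natCast (q ^ (1 - (i:ℤ) - d)) t, ← zpow_mul]
    have e2 : (q ^ (1 - (i:ℤ) + d)) ^ t = q ^ ((1 - (i:ℤ) + d) * t) := by
      rw [← zpow_natCast (q ^ (1 - (i:ℤ) + d)) t, ← zpow_mul]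
    have e3 : q ^ (t.choose 2) = q ^ ((t.choose 2 : ℕ) : ℤ) := by rw [zpow_natCast]
    rw [e1, e2, e3]
    have m1 : q ^ ((i:ℤ)*d) * (q ^ ((t.choose 2 : ℕ) : ℤ) * q ^ ((1 - (i:ℤ) - d) * t))
        = q ^ (βz i t + ((i:ℤ) - t)*d) := by
      rw [qz h.ne rfl, qz h.ne (show (i:ℤ)*d + (((t.choose 2 : ℕ) : ℤ) + (1 - (i:ℤ) - d) * t)
        = βz i t + ((i:ℤ) - t)*d by simp only [βz]; ring)]
    have m2 : q ^ ((-(i:ℤ)-1)*d) * (q ^ ((t.choose 2 : ℕ) : ℤ) * q ^ ((1 - (i:ℤ) + d) * t))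
        = q ^ (βz i t + (-((i:ℤ) - t) - 1)*d) := by
      rw [qz h.ne rfl, qz h.ne (show (-(i:ℤ)-1)*d + (((t.choose 2 : ℕ) : ℤ) + (1 - (i:ℤ) + d) * t)
        = βz i t + (-((i:ℤ) - t) - 1)*d by simp only [βz]; ring)]
    linear_combination (-(-1:ℂ)^t * qBinom q (2*i+1) t) * (m1 + m2)
  rw [Finset.sum_congr rfl split, Finset.sum_add_distrib, ← Finset.mul_sum, ← Finset.mul_sum,
    ← h.qBinomThm (q ^ (1 - (i:ℤ) - d)) (2*i+1), ← h.qBinomThm (q ^ (1 - (i:ℤ) + d)) (2*i+1)]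
  have v1 : ∏ l ∈ Finset.range (2*i+1), (1 - q ^ (1 - (i:ℤ) - d) * q ^ l) = 0 :=
    prod_vanish h _ _ ⟨i - 1 + d, Finset.mem_range.2 (by omega), by omega⟩
  have v2 : ∏ l ∈ Finset.range (2*i+1), (1 - q ^ (1 - (i:ℤ) + d) * q ^ l) = 0 :=
    prod_vanish h _ _ ⟨i - 1 - d, Finset.mem_range.2 (by omega), by omega⟩
  rw [v1, v2]
  ring

end HabiroAux

namespace HabiroAux
variable {q : ℂ}

theorem Nc_mul (h : Good q) (i j : ℕ) (hj : j ≤ i) :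
    Nc q i j * (1 - q ^ (2*i+1)) =
      (-1 : ℂ)^(i+j) * q ^ (-(((i:ℤ)-j)*((i:ℤ)+j-1)/2)) * qBinom q (2*i+1) (i-j)
        * (1 - q ^ (2*j+1)) := by
  rw [Nc, qInt, qInt, qBinom, qBinom, show 2*i - (i-j) = i + j by omega,
    show 2*i+1 - (i-j) = i+j+1 by omega,
    show 2*i+1 = (2*i)+1 from rfl, qPoch_succ (2*i),
    show i+j+1 = (i+j)+1 from rfl, qPoch_succ (i+j)]
  have h1 := h.qPoch_ne (2*i)
  have h2 := h.qPoch_ne (i+j)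
  have h3 := h.qPoch_ne (i-j)
  have n1 : (1:ℂ) - q ≠ 0 := fun hc => h.pow_ne 1 le_rfl (by rw [pow_one]; linear_combination -hc)
  have n2 : (1:ℂ) - q ^ ((i+j)+1) ≠ 0 := fun hc => h.pow_ne ((i+j)+1) (by omega) (by linear_combination -hc)
  field_simp

/-- The exponent in Nc equals βz. -/
theorem E_eq (i t : ℕ) (ht : t ≤ i) :
    -(((i:ℤ) - (i - t : ℕ)) * ((i:ℤ) + (i - t : ℕ) - 1) / 2) = βz i t := by
  have hc : ((i - t : ℕ) : ℤ) = (i:ℤ) - t := by omega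
  rw [hc]
  have h2 : ((i:ℤ) - ((i:ℤ) - t)) * ((i:ℤ) + ((i:ℤ) - t) - 1) = 2 * (-(βz i t)) := by
    simp only [βz]
    linear_combination choose2_cast t
  rw [h2, Int.mul_ediv_cancel_left _ (by norm_num : (2:ℤ) ≠ 0), neg_neg]

theorem key_vanish (h : Good q) (i d : ℕ) (hdi : d < i) :
    ∑ j ∈ Finset.range (i+1), Nc q i j * mf q d j = 0 := by
  have hne : (1 : ℂ) - q ^ (2*i+1) ≠ 0 :=
    fun hc => h.pow_ne (2*i+1) (by omega) (by linear_combination -hc)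
  have main : (∑ j ∈ Finset.range (i+1), Nc q i j * mf q d j) * (1 - q ^ (2*i+1)) = 0 := by
    rw [Finset.sum_mul]
    have step1 : ∀ j ∈ Finset.range (i+1), Nc q i j * mf q d j * (1 - q ^ (2*i+1)) =
        (-1 : ℂ)^(i+j) * q ^ (-(((i:ℤ)-j)*((i:ℤ)+j-1)/2)) * qBinom q (2*i+1) (i-j)
          * ((1 - q ^ (2*j+1)) * mf q d j) := by
      intro j hj
      rw [Finset.mem_range] at hj
      rw [mul_right_comm, Nc_mul h i j (by omega)]
      ring
    rw [Finset.sum_congr rfl step1]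
    -- reflect : j = i - t
    rw [← Finset.sum_range_reflect]
    have step2 : ∀ t ∈ Finset.range (i+1),
        (-1 : ℂ)^(i+(i+1-1-t)) * q ^ (-(((i:ℤ)-(i+1-1-t:ℕ))*((i:ℤ)+(i+1-1-t:ℕ)-1)/2))
          * qBinom q (2*i+1) (i-(i+1-1-t)) * ((1 - q ^ (2*(i+1-1-t)+1)) * mf q d (i+1-1-t)) =
        Gf q i d t + Gf q i d (2*i+1-t) := by
      intro t ht
      rw [Finset.mem_range] at ht
      have h1 : i + 1 - 1 - t = i - t := by omega
      have h2 : i - (i - t) = t := by omega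
      rw [h1, h2, E_eq i t (by omega)]
      -- signs
      have s1 : (-1 : ℂ)^(i+(i-t)) = (-1 : ℂ)^t := negpow_eq _ _ (by
        rcases Nat.even_or_odd t with h | h <;>
          simp only [Nat.even_add, Nat.even_iff, Nat.odd_iff] at * <;> omega)
      have s2 : (-1 : ℂ)^(2*i+1-t) = -(-1 : ℂ)^t := by
        rw [negpow_eq (2*i+1-t) (t+1) (by
          rcases Nat.even_or_odd t with h | h <;>
            simp only [Nat.even_add, Nat.even_iff, Nat.odd_iff] at * <;> omega), pow_succ]
        ring
      -- binomial symmetry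
      have s3 : qBinom q (2*i+1) (2*i+1-t) = qBinom q (2*i+1) t :=
        h.qBinom_symm (2*i+1) t (by omega)
      -- nat pow → zpow and merges
      have hcast : ((i - t : ℕ) : ℤ) = (i:ℤ) - t := by omega
      have hcast2 : ((2*i+1-t : ℕ) : ℤ) = 2*(i:ℤ)+1-t := by omega
      have hbr := beta_reflect i t (by omega)
      have p1 : q ^ (2*(i-t)+1) = q ^ ((2*((i:ℤ)-t)+1)) := by
        rw [← zpow_natCast]; congr 1; omega
      -- mf q d (i-t) expansion
      have mfx : mf q d (i-t) = q ^ (((i:ℤ)-t)*d) + q ^ ((-((i:ℤ)-t)-1)*d) := by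
        rw [mf, hcast]
      -- merges for the reflected terms
      have m3 : q ^ (βz i t) * (q ^ ((2*((i:ℤ)-t)+1)) * q ^ (((i:ℤ)-t)*d))
          = q ^ (βz i (2*i+1-t) + (-((i:ℤ) - (2*i+1-t:ℕ)) - 1)*d) := by
        rw [qz h.ne rfl, qz h.ne (show βz i t + ((2*((i:ℤ)-t)+1) + ((i:ℤ)-t)*d)
          = βz i (2*i+1-t) + (-((i:ℤ) - (2*i+1-t:ℕ)) - 1)*d by rw [hbr, hcast2]; ring)]
      have m4 : q ^ (βz i t) * (q ^ ((2*((i:ℤ)-t)+1)) * q ^ ((-((i:ℤ)-t)-1)*d))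
          = q ^ (βz i (2*i+1-t) + ((i:ℤ) - (2*i+1-t:ℕ))*d) := by
        rw [qz h.ne rfl, qz h.ne (show βz i t + ((2*((i:ℤ)-t)+1) + (-((i:ℤ)-t)-1)*d)
          = βz i (2*i+1-t) + ((i:ℤ) - (2*i+1-t:ℕ))*d by rw [hbr, hcast2]; ring)]
      have m1 : q ^ (βz i t) * q ^ (((i:ℤ)-t)*d) = q ^ (βz i t + ((i:ℤ)-t)*d) := qz h.ne rfl
      have m2 : q ^ (βz i t) * q ^ ((-((i:ℤ)-t)-1)*d) = q ^ (βz i t + (-((i:ℤ)-t)-1)*d) :=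
        qz h.ne rfl
      rw [mfx, s1, Gf, Gf, s2, s3, p1]
      linear_combination ((-1:ℂ)^t * qBinom q (2*i+1) t) * (m1 + m2 - m3 - m4)
    rw [Finset.sum_congr rfl step2, Finset.sum_add_distrib]
    have step4 : ∑ t ∈ Finset.range (i+1), Gf q i d (2*i+1-t)
        = ∑ t ∈ Finset.range (i+1), Gf q i d (i+1+t) := by
      rw [← Finset.sum_range_reflect (fun t => Gf q i d (i+1+t)) (i+1)]
      exact Finset.sum_congr rfl fun t ht => by
        rw [Finset.mem_range] at ht; congr 1; omega
    rw [step4, ← Finset.sum_range_add (Gf q i d) (i+1) (i+1),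
      show (i+1)+(i+1) = 2*i+1+1 by omega]
    exact sum_Gf h i d hdi
  rcases mul_eq_zero.1 main with h0 | h0
  · exact h0
  · exact absurd h0 hne

end HabiroAux

namespace HabiroAux
variable {q : ℂ}

theorem sum_vanish_of_mem (h : Good q) (i s : ℕ) (hs : s < i) {g : ℕ → ℂ} (hg : g ∈ V q s) :
    ∑ j ∈ Finset.range (i+1), Nc q i j * g j = 0 := by
  induction hg using Submodule.span_induction with
  | mem g hg =>
    obtain ⟨d, hd, rfl⟩ := hg
    simp only [Set.mem_setOf_eq] at hd
    exact key_vanish h i d (lt_of_le_of_lt hd hs)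
  | zero => simp
  | add x y _ _ hx hy =>
    rw [Finset.sum_congr rfl (fun j _ => by
      show Nc q i j * (x j + y j) = Nc q i j * x j + Nc q i j * y j; ring),
      Finset.sum_add_distrib, hx, hy, add_zero]
  | smul c x _ hx =>
    rw [Finset.sum_congr rfl (fun j _ => by
      show Nc q i j * (c * x j) = c * (Nc q i j * x j); ring), ← Finset.mul_sum, hx, mul_zero]

theorem Nc_diag (h : Good q) (i : ℕ) : Nc q i i = 1 := by
  rw [Nc, sub_self, zero_mul, Int.zero_ediv, neg_zero, zpow_zero, Nat.sub_self, h.qBinom_zero,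
    show i + i + 1 = 2 * i + 1 by omega, div_self (h.qInt_ne (2*i+1) (by omega))]
  have : Even (i + i) := ⟨i, rfl⟩
  rw [this.neg_one_pow]
  ring

theorem Mc_diag (h : Good q) (i : ℕ) : Mc q i i = 1 := by
  rw [Mc, sub_self, mul_zero, neg_zero, zpow_zero, show i + i = 2 * i by omega, h.qBinom_self]
  ring

theorem ortho (h : Good q) (i k : ℕ) (hk : k ≤ i) :
    ∑ j ∈ Finset.Ico k (i+1), Nc q i j * Mc q j k = if k = i then 1 else 0 := by
  rcases eq_or_ne k i with rfl | hki
  · rw [if_pos rfl, show k + 1 = k + 1 from rfl, Finset.sum_Ico_eq_sum_range]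
    simp [Nc_diag h, Mc_diag h]
  · rw [if_neg hki]
    have hki' : k < i := by omega
    calc ∑ j ∈ Finset.Ico k (i+1), Nc q i j * Mc q j k
        = ∑ j ∈ Finset.Ico k (i+1), Nc q i j * ((q ^ ((k*k : ℕ)) / qPoch q q (2*k)) * phi q k j) := by
          refine Finset.sum_congr rfl fun j hj => ?_
          rw [Finset.mem_Ico] at hj
          rw [Mc_eq_phi h k j hj.1]
      _ = ∑ j ∈ Finset.range (i+1), Nc q i j * ((q ^ ((k*k : ℕ)) / qPoch q q (2*k)) * phi q k j) := by
          rw [Finset.range_eq_Ico, ← Finset.sum_Ico_consecutive _ (Nat.zero_le k) (by omega : k ≤ i+1)]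
          have : ∑ j ∈ Finset.Ico 0 k, Nc q i j * ((q ^ ((k*k : ℕ)) / qPoch q q (2*k)) * phi q k j) = 0 := by
            apply Finset.sum_eq_zero
            intro j hj
            rw [Finset.mem_Ico] at hj
            rw [phi_eq_zero k j hj.2]
            ring
          rw [this, zero_add]
      _ = (q ^ ((k*k : ℕ)) / qPoch q q (2*k)) * ∑ j ∈ Finset.range (i+1), Nc q i j * phi q k j := by
          rw [Finset.mul_sum]
          exact Finset.sum_congr rfl fun j _ => by ring
      _ = 0 := by
          rw [sum_vanish_of_mem h i k hki' (phi_mem h k), mul_zero]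

end HabiroAux

namespace HabiroAux
variable {q : ℂ}

noncomputable def Nmat (q : ℂ) (n : ℕ) : Matrix (Fin n) (Fin n) ℂ :=
  fun i j => if (j : ℕ) ≤ i then Nc q i j else 0

noncomputable def Mmat (q : ℂ) (n : ℕ) : Matrix (Fin n) (Fin n) ℂ :=
  fun j k => if (k : ℕ) ≤ j then Mc q j k else 0

theorem NM_eq_one (h : Good q) (n : ℕ) : Nmat q n * Mmat q n = 1 := by
  ext i k
  rw [Matrix.mul_apply]
  have hconv : ∑ j : Fin n, Nmat q n i j * Mmat q n j k
      = ∑ j ∈ Finset.range n,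
          ((if (j:ℕ) ≤ (i:ℕ) then Nc q i j else 0) * (if (k:ℕ) ≤ (j:ℕ) then Mc q j k else 0)) := by
    rw [← Fin.sum_univ_eq_sum_range (fun j =>
      ((if j ≤ (i:ℕ) then Nc q i j else 0) * (if (k:ℕ) ≤ j then Mc q j k else 0))) n]
    exact Finset.sum_congr rfl fun j _ => rfl
  rw [hconv]
  rcases le_or_gt (k : ℕ) (i : ℕ) with hki | hki
  · have hsub : Finset.Ico (k:ℕ) ((i:ℕ)+1) ⊆ Finset.range n := by
      intro x hx
      rw [Finset.mem_Ico] at hx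
      rw [Finset.mem_range]
      omega
    have hz : ∀ x ∈ Finset.range n, x ∉ Finset.Ico (k:ℕ) ((i:ℕ)+1) →
        ((if x ≤ (i:ℕ) then Nc q i x else 0) * (if (k:ℕ) ≤ x then Mc q x k else 0)) = 0 := by
      intro x _ hnx
      simp only [Finset.mem_Ico, not_and, not_lt] at hnx
      rcases Nat.lt_or_ge x (k:ℕ) with hc | hc
      · rw [if_neg (show ¬ (k:ℕ) ≤ x by omega)]; ring
      · rw [if_neg (show ¬ x ≤ (i:ℕ) by omega)]; ring
    rw [← Finset.sum_subset hsub hz]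
    have hred : ∑ x ∈ Finset.Ico (k:ℕ) ((i:ℕ)+1),
        ((if x ≤ (i:ℕ) then Nc q i x else 0) * (if (k:ℕ) ≤ x then Mc q x k else 0))
        = ∑ x ∈ Finset.Ico (k:ℕ) ((i:ℕ)+1), Nc q i x * Mc q x k := by
      refine Finset.sum_congr rfl fun x hx => ?_
      rw [Finset.mem_Ico] at hx
      rw [if_pos (show x ≤ (i:ℕ) by omega), if_pos (show (k:ℕ) ≤ x by omega)]
    rw [hred, ortho h i k hki, Matrix.one_apply]
    by_cases hik : (k:ℕ) = (i:ℕ)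
    · rw [if_pos hik, if_pos (by simp [Fin.ext_iff]; omega)]
    · rw [if_neg hik, if_neg (by simp [Fin.ext_iff]; omega)]
  · rw [Finset.sum_eq_zero (fun j hj => by
      rcases Nat.lt_or_ge (j:ℕ) (k:ℕ) with hc | hc
      · rw [if_neg (show ¬ (k:ℕ) ≤ j by omega)]; ring
      · rw [if_neg (show ¬ j ≤ (i:ℕ) by omega)]; ring)]
    rw [Matrix.one_apply, if_neg (by simp [Fin.ext_iff]; omega)]

theorem ortho2 (h : Good q) (j k : ℕ) (hk : k ≤ j) :
    ∑ l ∈ Finset.Ico k (j+1), Mc q j l * Nc q l k = if j = k then 1 else 0 := by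
  have hmn := mul_eq_one_comm.mp (NM_eq_one h (j+1))
  have hent := congrFun (congrFun hmn ⟨j, by omega⟩) ⟨k, by omega⟩
  rw [Matrix.mul_apply] at hent
  have hconv : ∑ l : Fin (j+1), Mmat q (j+1) ⟨j, by omega⟩ l * Nmat q (j+1) l ⟨k, by omega⟩
      = ∑ l ∈ Finset.range (j+1),
          ((if l ≤ j then Mc q j l else 0) * (if (k:ℕ) ≤ l then Nc q l k else 0)) := by
    rw [← Fin.sum_univ_eq_sum_range (fun l =>
      ((if l ≤ j then Mc q j l else 0) * (if (k:ℕ) ≤ l then Nc q l k else 0))) (j+1)]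
    exact Finset.sum_congr rfl fun l _ => rfl
  rw [hconv] at hent
  have hsub : Finset.Ico (k:ℕ) (j+1) ⊆ Finset.range (j+1) := by
    intro x hx
    rw [Finset.mem_Ico] at hx
    rw [Finset.mem_range]
    omega
  have hz : ∀ x ∈ Finset.range (j+1), x ∉ Finset.Ico (k:ℕ) (j+1) →
      ((if x ≤ j then Mc q j x else 0) * (if (k:ℕ) ≤ x then Nc q x k else 0)) = 0 := by
    intro x hx hnx
    simp only [Finset.mem_Ico, not_and, not_lt] at hnx
    rw [Finset.mem_range] at hx
    rw [if_neg (show ¬ (k:ℕ) ≤ x by omega)]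
    ring
  rw [← Finset.sum_subset hsub hz] at hent
  have hred : ∑ x ∈ Finset.Ico (k:ℕ) (j+1),
      ((if x ≤ j then Mc q j x else 0) * (if (k:ℕ) ≤ x then Nc q x k else 0))
      = ∑ x ∈ Finset.Ico (k:ℕ) (j+1), Mc q j x * Nc q x k := by
    refine Finset.sum_congr rfl fun x hx => ?_
    rw [Finset.mem_Ico] at hx
    rw [if_pos (show x ≤ j by omega), if_pos (show (k:ℕ) ≤ x by omega)]
  rw [hred] at hent
  rw [hent, Matrix.one_apply]
  by_cases hjk : j = k
  · rw [if_pos (by simp [Fin.ext_iff, hjk]), if_pos hjk]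
  · rw [if_neg (by simp [Fin.ext_iff]; omega), if_neg hjk]

end HabiroAux


open HabiroAux

/-- The transforms `f_j = ∑_{i=0}^{j} q^{−i(j−i)} C_q(j+i,2i) a_i` and
`a_i = ∑_{j=0}^{i} (−1)^{i+j} q^{−(i−j)(i+j−1)/2} C_q(2i,i−j) ([2j+1]_q/[i+j+1]_q) f_j`
are mutually inverse. -/
theorem habiro_inversion_pair (q : ℂ) (hq0 : 0 < ‖q‖) (hq1 : ‖q‖ < 1)
    (a f : ℕ → ℂ) :
    (∀ j : ℕ, f j = ∑ i ∈ Finset.range (j + 1),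
        q ^ (-(i * (j - i) : ℤ)) * qBinom q (j + i) (2 * i) * a i) ↔
    (∀ i : ℕ, a i = ∑ j ∈ Finset.range (i + 1),
        (-1 : ℂ) ^ (i + j) * q ^ (-(((i : ℤ) - j) * ((i : ℤ) + j - 1) / 2)) *
          qBinom q (2 * i) (i - j) * (qInt q (2 * j + 1) / qInt q (i + j + 1)) * f j) := by
  have h : Good q := good_of_norm hq0 hq1
  constructor
  · intro H1 i
    have Hf : ∀ jj : ℕ, f jj = ∑ l ∈ Finset.range (jj + 1), Mc q jj l * a l := fun jj => H1 jj
    have key : ∑ j ∈ Finset.range (i + 1), Nc q i j * f j = a i := by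
      calc ∑ j ∈ Finset.range (i + 1), Nc q i j * f j
          = ∑ j ∈ Finset.range (i + 1), ∑ l ∈ Finset.range (j + 1),
              Nc q i j * (Mc q j l * a l) := by
            refine Finset.sum_congr rfl fun j _ => ?_
            rw [Hf j, Finset.mul_sum]
        _ = ∑ l ∈ Finset.range (i + 1), ∑ j ∈ Finset.Ico l (i + 1),
              Nc q i j * (Mc q j l * a l) := by
            simp only [Finset.range_eq_Ico]
            exact (Finset.sum_Ico_Ico_comm 0 (i + 1)
              (fun l j => Nc q i j * (Mc q j l * a l))).symm
        _ = ∑ l ∈ Finset.range (i + 1),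
              (∑ j ∈ Finset.Ico l (i + 1), Nc q i j * Mc q j l) * a l := by
            refine Finset.sum_congr rfl fun l _ => ?_
            rw [Finset.sum_mul]
            exact Finset.sum_congr rfl fun j _ => by ring
        _ = ∑ l ∈ Finset.range (i + 1), (if l = i then 1 else 0) * a l := by
            refine Finset.sum_congr rfl fun l hl => ?_
            rw [Finset.mem_range] at hl
            rw [ortho h i l (by omega)]
        _ = a i := by
            simp only [ite_mul, one_mul, zero_mul]
            rw [Finset.sum_ite_eq' (Finset.range (i + 1)) i a,
              if_pos (Finset.self_mem_range_succ i)]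
    exact key.symm
  · intro H2 j
    have Ha : ∀ ii : ℕ, a ii = ∑ l ∈ Finset.range (ii + 1), Nc q ii l * f l := fun ii => H2 ii
    have key : ∑ i ∈ Finset.range (j + 1), Mc q j i * a i = f j := by
      calc ∑ i ∈ Finset.range (j + 1), Mc q j i * a i
          = ∑ i ∈ Finset.range (j + 1), ∑ l ∈ Finset.range (i + 1),
              Mc q j i * (Nc q i l * f l) := by
            refine Finset.sum_congr rfl fun i _ => ?_
            rw [Ha i, Finset.mul_sum]
        _ = ∑ l ∈ Finset.range (j + 1), ∑ i ∈ Finset.Ico l (j + 1),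
              Mc q j i * (Nc q i l * f l) := by
            simp only [Finset.range_eq_Ico]
            exact (Finset.sum_Ico_Ico_comm 0 (j + 1)
              (fun l i => Mc q j i * (Nc q i l * f l))).symm
        _ = ∑ l ∈ Finset.range (j + 1),
              (∑ i ∈ Finset.Ico l (j + 1), Mc q j i * Nc q i l) * f l := by
            refine Finset.sum_congr rfl fun l _ => ?_
            rw [Finset.sum_mul]
            exact Finset.sum_congr rfl fun i _ => by ring
        _ = ∑ l ∈ Finset.range (j + 1), (if j = l then 1 else 0) * f l := by
            refine Finset.sum_congr rfl fun l hl => ?_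
            rw [Finset.mem_range] at hl
            rw [ortho2 h j l (by omega)]
        _ = f j := by
            simp only [ite_mul, one_mul, zero_mul]
            rw [Finset.sum_ite_eq (Finset.range (j + 1)) j f,
              if_pos (Finset.self_mem_range_succ j)]
    exact key.symm
end

section
/- Let n ≥ 0, p ≥ 1, and b be integers. Then there exists a Laurent polynomial P ∈ ℤ[t, t^{−1}] such that: (a) for every complex t with 0 < |t| < 1, setting q := t^p, the series ∑_{k≥0, k≡b−n (mod p)} t^{(n+k)²} q^{−nk} (q^{k+1};q)_{2n} − ∑_{k≥0, k≡b−n−1 (mod p)} t^{(n+k+1)²} q^{−nk} (q^{k+1};q)_{2n} converges absolutely and equals P(t); and (b) for every complex t with |t| > 1, setting q := t^p, the series ∑_{k≥0, k≡b−n (mod p)} t^{−(n+k)²} q^{−nk} (q^{k+1};q)_{2n} − ∑_{k≥0, k≡b−n−1 (mod p)} t^{−(n+k+1)²} q^{−nk} (q^{k+1};q)_{2n} converges absolutely and equals q^{n(2n+1)} P(t^{−1}). -/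
open Finset

/-! ### Auxiliary lemmas -/

lemma laurent_pack {ι : Type*} (I : Finset ι) (ε : ι → ℤ) (e : ι → ℤ) :
    ∃ (P : Polynomial ℤ) (d : ℕ), ∀ t : ℂ, t ≠ 0 →
      ∑ i ∈ I, (ε i : ℂ) * t ^ (e i) = Polynomial.aeval t P / t ^ d := by
  classical
  set d := I.sup (fun j => (-(e j)).toNat) with hd
  refine ⟨∑ i ∈ I, Polynomial.C (ε i) * Polynomial.X ^ (e i + d).toNat, d, fun t ht => ?_⟩
  rw [map_sum, eq_div_iff (pow_ne_zero _ ht), Finset.sum_mul]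
  refine Finset.sum_congr rfl fun i hi => ?_
  have hle : (-(e i)).toNat ≤ d := Finset.le_sup (f := fun j => (-(e j)).toNat) hi
  have h1 : ((e i + d).toNat : ℤ) = e i + d := by
    rw [Int.toNat_of_nonneg]
    have := Int.self_le_toNat (-(e i))
    omega
  rw [map_mul, map_pow, Polynomial.aeval_X, Polynomial.aeval_C]
  have : t ^ ((e i + d).toNat) = t ^ (e i) * t ^ (d:ℤ) := by
    rw [← zpow_natCast t, h1, zpow_add₀ ht]
  rw [this]
  simp [mul_assoc, zpow_natCast]

lemma quad_lb (c₁ c₀ : ℤ) (k : ℕ) :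
    (k:ℤ) - ((c₁.natAbs + 1)^2 + c₀.natAbs) ≤ (k:ℤ)^2 + c₁*k + c₀ := by
  have h1 : (c₁ : ℤ) ≤ c₁.natAbs := Int.le_natAbs
  have h2 : -(c₁.natAbs : ℤ) ≤ c₁ := by omega
  have h3 : -(c₀.natAbs : ℤ) ≤ c₀ := by omega
  have hk : (0:ℤ) ≤ k := Int.natCast_nonneg k
  nlinarith [sq_nonneg (2*(k:ℤ) + c₁ - 1), sq_nonneg ((c₁:ℤ) - 1)]

lemma summable_quad_norm (t : ℂ) (ht0 : t ≠ 0) (ht1 : ‖t‖ < 1) (c₁ c₀ : ℤ) :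
    Summable (fun k : ℕ => ‖t‖ ^ ((k:ℤ)^2 + c₁ * k + c₀)) := by
  have hx0 : 0 < ‖t‖ := norm_pos_iff.mpr ht0
  set C : ℤ := (((c₁.natAbs + 1)^2 + c₀.natAbs : ℕ) : ℤ) with hC
  have hb : ∀ k : ℕ, ‖t‖ ^ ((k:ℤ)^2 + c₁ * k + c₀) ≤ ‖t‖ ^ (-C) * ‖t‖ ^ k := by
    intro k
    have hle : (k:ℤ) - C ≤ (k:ℤ)^2 + c₁*k + c₀ := by
      have := quad_lb c₁ c₀ k
      push_cast [hC] at this ⊢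
      linarith
    calc ‖t‖ ^ ((k:ℤ)^2 + c₁ * k + c₀) ≤ ‖t‖ ^ ((k:ℤ) - C) :=
          zpow_le_zpow_right_of_le_one₀ hx0 ht1.le hle
      _ = ‖t‖ ^ (-C) * ‖t‖ ^ k := by
          rw [sub_eq_add_neg, add_comm, zpow_add₀ (ne_of_gt hx0), zpow_natCast]
  refine Summable.of_nonneg_of_le (fun k => zpow_nonneg hx0.le _) hb ?_
  exact (summable_geometric_of_lt_one hx0.le ht1).mul_left _

lemma summable_quad_of_le (t : ℂ) (ht0 : t ≠ 0) (ht1 : ‖t‖ < 1) (c₁ c₀ : ℤ) (C : ℝ)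
    (f : ℕ → ℂ) (hb : ∀ k, ‖f k‖ ≤ C * ‖t‖ ^ ((k:ℤ)^2 + c₁ * k + c₀)) :
    Summable (fun k => ‖f k‖) :=
  Summable.of_nonneg_of_le (fun k => norm_nonneg _) hb
    ((summable_quad_norm t ht0 ht1 c₁ c₀).mul_left C)

lemma summable_indicator_quad (t : ℂ) (ht0 : t ≠ 0) (ht1 : ‖t‖ < 1) (c₁ c₀ a : ℤ)
    (F : ℤ → ℂ) (hF : ∀ m, ‖F m‖ ≤ ‖t‖ ^ (m^2 + c₁*m + c₀)) :
    Summable (fun m : ℤ => if a ≤ m then F m else 0) := by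
  have hx0 : 0 < ‖t‖ := norm_pos_iff.mpr ht0
  have hinj : Function.Injective (fun k : ℕ => a + (k:ℤ)) := fun x y h => by simpa using h
  have hvan : ∀ x ∉ Set.range (fun k : ℕ => a + (k:ℤ)),
      (if a ≤ x then F x else 0) = 0 := by
    intro x hx
    rw [if_neg]
    intro hle
    exact hx ⟨(x - a).toNat, by simp; omega⟩
  rw [← hinj.summable_iff hvan]
  apply Summable.of_norm
  apply summable_quad_of_le t ht0 ht1 (2*a + c₁) (a^2 + c₁*a + c₀) 1
  intro k
  simp only [Function.comp, one_mul]
  by_cases h : a ≤ a + (k:ℤ)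
  · rw [if_pos h]
    calc ‖F (a+(k:ℤ))‖ ≤ ‖t‖ ^ ((a+(k:ℤ))^2 + c₁*(a+(k:ℤ)) + c₀) := hF _
      _ = ‖t‖ ^ ((k:ℤ)^2 + (2*a+c₁)*(k:ℤ) + (a^2 + c₁*a + c₀)) := by congr 1; ring
  · rw [if_neg h]
    simpa using zpow_nonneg hx0.le _

lemma tsum_shift_sub (f : ℤ → ℂ)
    (hs : ∀ a : ℤ, Summable (fun m => if a ≤ m then f m else 0)) (a a' : ℤ) (h : a ≤ a') :
    (∑' m : ℤ, if a ≤ m then f m else 0) = (∑' m : ℤ, if a' ≤ m then f m else 0)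
      + ∑ m ∈ Finset.Ico a a', f m := by
  classical
  have hsplit : ∀ m : ℤ, (if a ≤ m then f m else 0)
      = (if a' ≤ m then f m else 0) + (if m ∈ Finset.Ico a a' then f m else 0) := by
    intro m
    simp only [Finset.mem_Ico]
    split_ifs <;> first | (exfalso; omega) | ring
  have hico : Summable (fun m : ℤ => if m ∈ Finset.Ico a a' then f m else 0) :=
    summable_of_ne_finset_zero (s := Finset.Ico a a') (fun m hm => if_neg hm)
  rw [tsum_congr hsplit, Summable.tsum_add (hs a') hico,
    tsum_eq_sum (s := Finset.Ico a a') (fun m hm => if_neg hm)]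
  congr 1
  exact Finset.sum_congr rfl fun m hm => if_pos hm

lemma tsum_shift_diff (f : ℤ → ℂ)
    (hs : ∀ a : ℤ, Summable (fun m => if a ≤ m then f m else 0)) (a a' : ℤ) :
    (∑' m : ℤ, if a ≤ m then f m else 0) - (∑' m : ℤ, if a' ≤ m then f m else 0)
      = ∑ m ∈ Finset.Ico a a', f m - ∑ m ∈ Finset.Ico a' a, f m := by
  rcases le_total a a' with h | h
  · rw [tsum_shift_sub f hs a a' h, Finset.Ico_eq_empty (show ¬ a' < a by omega)]
    simp
  · rw [tsum_shift_sub f hs a' a h, Finset.Ico_eq_empty (show ¬ a < a' by omega)]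
    simp

lemma prod_zpow_eq_zpow_sum {t : ℂ} (ht : t ≠ 0) {ι : Type*} (s : Finset ι) (f : ι → ℤ) :
    ∏ i ∈ s, t ^ (f i) = t ^ (∑ i ∈ s, f i) := by
  classical
  induction s using Finset.induction with
  | empty => simp
  | @insert a s' h ih => rw [prod_insert h, sum_insert h, zpow_add₀ ht, ih]

/-! ### Exponents -/

def Aexp (n p : ℕ) (S : Finset ℕ) (k : ℕ) : ℤ :=
  ((n:ℤ)+k)^2 - p*n*k + p*(S.card*((k:ℤ)+1) + ∑ l ∈ S, (l:ℤ))

def Bexp (n p : ℕ) (S : Finset ℕ) (k : ℕ) : ℤ :=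
  ((n:ℤ)+k+1)^2 - p*n*k + p*(S.card*((k:ℤ)+1) + ∑ l ∈ S, (l:ℤ))

def Eexp (n p : ℕ) (S : Finset ℕ) (m : ℤ) : ℤ :=
  m^2 + p*((S.card:ℤ)-n)*(m-n) + p*((S.card:ℤ) + ∑ l ∈ S, (l:ℤ))

def Fexp (n p : ℕ) (S : Finset ℕ) (m : ℤ) : ℤ :=
  m^2 + p*((S.card:ℤ)-n)*(m-n-1) + p*((S.card:ℤ) + ∑ l ∈ S, (l:ℤ))

lemma Eexp_nat (n p : ℕ) (S : Finset ℕ) (k : ℕ) :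
    Eexp n p S ((n:ℤ)+k) = Aexp n p S k := by unfold Eexp Aexp; ring

lemma Fexp_nat (n p : ℕ) (S : Finset ℕ) (k : ℕ) :
    Fexp n p S ((n:ℤ)+1+k) = Bexp n p S k := by unfold Fexp Bexp; ring

/-! ### qPochhammer expansion -/

lemma qPoch_expand (t : ℂ) (p N k : ℕ) :
    qPoch ((t ^ p) ^ (k + 1)) (t ^ p) N
      = ∑ S ∈ (range N).powerset, (-1:ℂ) ^ S.card * t ^ (∑ l ∈ S, p * (k + 1 + l)) := by
  classical
  unfold qPoch
  have h1 : ∀ l, 1 - (t ^ p) ^ (k+1) * (t ^ p) ^ l = (-(t ^ (p * (k + 1 + l)))) + (1:ℂ) := by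
    intro l
    rw [← pow_mul, ← pow_mul, ← pow_add]
    ring_nf
  rw [Finset.prod_congr rfl (fun l _ => h1 l), Finset.prod_add]
  refine Finset.sum_congr rfl fun S hS => ?_
  rw [Finset.prod_const_one, mul_one]
  rw [show (fun l => -(t ^ (p * (k + 1 + l)))) = (fun l => (-1) * t ^ (p * (k + 1 + l))) by
    funext l; ring]
  rw [Finset.prod_mul_distrib, Finset.prod_const, Finset.prod_pow_eq_pow_sum]

lemma term1_expand (t : ℂ) (ht : t ≠ 0) (n p k : ℕ) :
    t ^ ((n + k) ^ 2) * (t ^ p) ^ (-(n * k : ℤ)) * qPoch ((t ^ p) ^ (k + 1)) (t ^ p) (2 * n)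
      = ∑ S ∈ (range (2*n)).powerset, (-1:ℂ) ^ S.card * t ^ (Aexp n p S k) := by
  classical
  rw [qPoch_expand, Finset.mul_sum]
  refine Finset.sum_congr rfl fun S hS => ?_
  have hq : (t ^ p) ^ (-(n * k : ℤ)) = t ^ ((p : ℤ) * (-(n * k : ℤ))) := by
    rw [← zpow_natCast t p, ← zpow_mul]
  rw [hq, ← zpow_natCast t ((n+k)^2), ← zpow_natCast t (∑ l ∈ S, p * (k + 1 + l))]
  rw [show t ^ (((n + k) ^ 2 : ℕ) : ℤ) * t ^ ((p:ℤ) * (-(n * k : ℤ))) *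
      ((-1:ℂ) ^ S.card * t ^ ((∑ l ∈ S, p * (k + 1 + l) : ℕ) : ℤ))
    = (-1:ℂ) ^ S.card * (t ^ (((n + k) ^ 2 : ℕ) : ℤ) * t ^ ((p:ℤ) * (-(n * k : ℤ))) *
        t ^ ((∑ l ∈ S, p * (k + 1 + l) : ℕ) : ℤ)) by ring]
  rw [← zpow_add₀ ht, ← zpow_add₀ ht]
  congr 2
  unfold Aexp
  push_cast [Nat.cast_sum]
  have hsum : ∑ x ∈ S, ((p:ℤ) * ((k:ℤ) + 1 + (x:ℤ)))
      = (p:ℤ) * ((S.card : ℤ) * ((k:ℤ)+1) + ∑ l ∈ S, (l:ℤ)) := by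
    rw [← Finset.mul_sum]
    congr 1
    rw [Finset.sum_add_distrib, Finset.sum_const, nsmul_eq_mul]
  rw [hsum]
  ring

lemma term2_expand (t : ℂ) (ht : t ≠ 0) (n p k : ℕ) :
    t ^ ((n + k + 1) ^ 2) * (t ^ p) ^ (-(n * k : ℤ)) * qPoch ((t ^ p) ^ (k + 1)) (t ^ p) (2 * n)
      = ∑ S ∈ (range (2*n)).powerset, (-1:ℂ) ^ S.card * t ^ (Bexp n p S k) := by
  classical
  rw [qPoch_expand, Finset.mul_sum]
  refine Finset.sum_congr rfl fun S hS => ?_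
  have hq : (t ^ p) ^ (-(n * k : ℤ)) = t ^ ((p : ℤ) * (-(n * k : ℤ))) := by
    rw [← zpow_natCast t p, ← zpow_mul]
  rw [hq, ← zpow_natCast t ((n+k+1)^2), ← zpow_natCast t (∑ l ∈ S, p * (k + 1 + l))]
  rw [show t ^ (((n + k + 1) ^ 2 : ℕ) : ℤ) * t ^ ((p:ℤ) * (-(n * k : ℤ))) *
      ((-1:ℂ) ^ S.card * t ^ ((∑ l ∈ S, p * (k + 1 + l) : ℕ) : ℤ))
    = (-1:ℂ) ^ S.card * (t ^ (((n + k + 1) ^ 2 : ℕ) : ℤ) * t ^ ((p:ℤ) * (-(n * k : ℤ))) *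
        t ^ ((∑ l ∈ S, p * (k + 1 + l) : ℕ) : ℤ)) by ring]
  rw [← zpow_add₀ ht, ← zpow_add₀ ht]
  congr 2
  unfold Bexp
  push_cast [Nat.cast_sum]
  have hsum : ∑ x ∈ S, ((p:ℤ) * ((k:ℤ) + 1 + (x:ℤ)))
      = (p:ℤ) * ((S.card : ℤ) * ((k:ℤ)+1) + ∑ l ∈ S, (l:ℤ)) := by
    rw [← Finset.mul_sum]
    congr 1
    rw [Finset.sum_add_distrib, Finset.sum_const, nsmul_eq_mul]
  rw [hsum]
  ring

/-! ### The involution on subsets -/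

def inv2n (n : ℕ) (S : Finset ℕ) : Finset ℕ :=
  (Finset.range (2*n) \ S).image (fun l => 2*n - 1 - l)

lemma mem_inv2n (n : ℕ) (S : Finset ℕ) (m : ℕ) :
    m ∈ inv2n n S ↔ m < 2*n ∧ 2*n - 1 - m ∉ S := by
  unfold inv2n
  simp only [Finset.mem_image, Finset.mem_sdiff, Finset.mem_range]
  constructor
  · rintro ⟨l, ⟨hl, hlS⟩, rfl⟩
    constructor
    · omega
    · rwa [show 2*n-1-(2*n-1-l) = l by omega]
  · rintro ⟨hm, hmS⟩
    exact ⟨2*n-1-m, ⟨by omega, hmS⟩, by omega⟩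

lemma inv2n_subset (n : ℕ) (S : Finset ℕ) : inv2n n S ⊆ Finset.range (2*n) := by
  intro m hm
  rw [mem_inv2n] at hm
  exact Finset.mem_range.mpr hm.1

lemma inv2n_invol (n : ℕ) (S : Finset ℕ) (hS : S ⊆ Finset.range (2*n)) :
    inv2n n (inv2n n S) = S := by
  ext m
  rw [mem_inv2n, mem_inv2n]
  constructor
  · rintro ⟨hm, h2⟩
    by_contra hmS
    exact h2 ⟨by omega, by rwa [show 2*n-1-(2*n-1-m) = m by omega]⟩
  · intro hmS
    have hm : m < 2*n := Finset.mem_range.mp (hS hmS)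
    refine ⟨hm, fun ⟨_, h⟩ => h ?_⟩
    rwa [show 2*n-1-(2*n-1-m) = m by omega]

lemma inv2n_card_nat (n : ℕ) (S : Finset ℕ) (hS : S ⊆ Finset.range (2*n)) :
    (inv2n n S).card = 2*n - S.card := by
  unfold inv2n
  rw [Finset.card_image_of_injOn
      (by intro x hx y hy hxy; simp at hx hy hxy ⊢; omega),
    Finset.card_sdiff_of_subset hS, Finset.card_range]

lemma card_le_two_n (n : ℕ) (S : Finset ℕ) (hS : S ⊆ Finset.range (2*n)) :
    S.card ≤ 2*n := by
  have := Finset.card_le_card hS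
  rwa [Finset.card_range] at this

lemma inv2n_card (n : ℕ) (S : Finset ℕ) (hS : S ⊆ Finset.range (2*n)) :
    ((inv2n n S).card : ℤ) = 2*n - S.card := by
  rw [inv2n_card_nat n S hS]
  have := card_le_two_n n S hS
  omega

lemma sum_range_cast (n : ℕ) : ∑ l ∈ Finset.range (2*n), (l:ℤ) = (n:ℤ)*(2*(n:ℤ) - 1) := by
  have h2 : ((∑ i ∈ Finset.range (2*n), i : ℕ) : ℤ) = ∑ l ∈ Finset.range (2*n), (l:ℤ) := by
    push_cast
    rfl
  rcases Nat.eq_zero_or_pos n with h0 | h0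
  · subst h0; simp
  · have h3 := Finset.sum_range_id_mul_two (2*n)
    zify [show 1 ≤ 2*n by omega] at h3
    linarith

lemma inv2n_sum (n : ℕ) (S : Finset ℕ) (hS : S ⊆ Finset.range (2*n)) :
    (∑ l ∈ inv2n n S, (l:ℤ)) = (2*(n:ℤ)-1)*((n:ℤ) - S.card) + ∑ l ∈ S, (l:ℤ) := by
  unfold inv2n
  rw [Finset.sum_image (by intro x hx y hy hxy; simp at hx hy hxy; omega)]
  have e1 : ∑ l ∈ (Finset.range (2*n) \ S), ((2*n - 1 - l : ℕ) : ℤ)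
      = ∑ l ∈ (Finset.range (2*n) \ S), ((2*(n:ℤ) - 1) - (l:ℤ)) := by
    refine Finset.sum_congr rfl fun l hl => ?_
    simp only [Finset.mem_sdiff, Finset.mem_range] at hl
    omega
  rw [e1, Finset.sum_sub_distrib, Finset.sum_const, Finset.sum_sdiff_eq_sub hS,
    Finset.card_sdiff_of_subset hS, Finset.card_range]
  have h4 : S.card ≤ 2*n := card_le_two_n n S hS
  have h5 := sum_range_cast n
  rw [nsmul_eq_mul]
  push_cast [Nat.cast_sub h4]
  linear_combination (-1 : ℤ) * h5

lemma Fexp_inv2n (n p : ℕ) (S : Finset ℕ) (hS : S ⊆ Finset.range (2*n)) (m : ℤ) :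
    Fexp n p (inv2n n S) (m + (p:ℤ)*((S.card:ℤ)-n)) = Eexp n p S m := by
  unfold Fexp Eexp
  rw [inv2n_card n S hS, inv2n_sum n S hS]
  ring

lemma sign_inv2n (n : ℕ) (S : Finset ℕ) (hS : S ⊆ Finset.range (2*n)) :
    ((-1:ℂ)) ^ (inv2n n S).card = (-1) ^ S.card := by
  rw [inv2n_card_nat n S hS]
  have hs : S.card ≤ 2*n := card_le_two_n n S hS
  have h2 : ((-1:ℂ))^(2*n - S.card) * (-1)^S.card = 1 := by
    rw [← pow_add, Nat.sub_add_cancel hs]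
    exact Even.neg_one_pow ⟨n, by ring⟩
  have h3 : ((-1:ℂ))^S.card * (-1)^S.card = 1 := by
    rw [← pow_add]
    exact Even.neg_one_pow ⟨S.card, rfl⟩
  calc ((-1:ℂ))^(2*n - S.card) = ((-1:ℂ))^(2*n - S.card) * (((-1:ℂ))^S.card * (-1)^S.card) := by
        rw [h3, mul_one]
    _ = (((-1:ℂ))^(2*n - S.card) * (-1)^S.card) * (-1)^S.card := by ring
    _ = (-1) ^ S.card := by rw [h2, one_mul]

/-! ### The flip identity for part (b) -/

lemma qPoch_flip (t : ℂ) (ht : t ≠ 0) (p N k : ℕ) :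
    qPoch ((t⁻¹ ^ p) ^ (k + 1)) (t⁻¹ ^ p) N
      = (-1:ℂ)^N * t ^ (∑ l ∈ Finset.range N, -((p*(k+1+l) : ℕ) : ℤ))
          * qPoch ((t ^ p) ^ (k + 1)) (t ^ p) N := by
  classical
  simp only [qPoch]
  have hfac : ∀ l, (1 : ℂ) - (t⁻¹ ^ p) ^ (k+1) * (t⁻¹ ^ p) ^ l
      = (-1) * t ^ (-((p*(k+1+l) : ℕ) : ℤ)) * (1 - (t ^ p) ^ (k+1) * (t ^ p) ^ l) := by
    intro l
    have h1 : (t⁻¹ ^ p) ^ (k+1) * (t⁻¹ ^ p) ^ l = t ^ (-((p*(k+1+l) : ℕ) : ℤ)) := by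
      rw [← pow_mul, ← pow_mul, ← pow_add, inv_pow, ← zpow_natCast, ← zpow_neg]
      congr 1
      push_cast
      ring
    have h2 : (t ^ p) ^ (k+1) * (t ^ p) ^ l = t ^ ((p*(k+1+l) : ℕ)) := by
      rw [← pow_mul, ← pow_mul, ← pow_add]
      congr 1
      ring
    rw [h1, h2]
    have hM : t ^ (-((p*(k+1+l) : ℕ) : ℤ)) * t ^ ((p*(k+1+l) : ℕ)) = 1 := by
      rw [← zpow_natCast t (p*(k+1+l)), ← zpow_add₀ ht]
      simp
    linear_combination (-1 : ℂ) * hM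
  rw [Finset.prod_congr rfl (fun l _ => hfac l), Finset.prod_mul_distrib,
    Finset.prod_mul_distrib, Finset.prod_const, Finset.card_range,
    prod_zpow_eq_zpow_sum ht]

lemma term_flip (t : ℂ) (ht : t ≠ 0) (n p k Y : ℕ) :
    t ^ (-((Y:ℕ) : ℤ)) * (t ^ p) ^ (-(n * k : ℤ)) * qPoch ((t ^ p) ^ (k + 1)) (t ^ p) (2 * n)
      = (t ^ p) ^ (n * (2 * n + 1)) *
        (t⁻¹ ^ Y * (t⁻¹ ^ p) ^ (-(n * k : ℤ)) *
          qPoch ((t⁻¹ ^ p) ^ (k + 1)) (t⁻¹ ^ p) (2 * n)) := by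
  rw [qPoch_flip t ht p (2*n) k]
  have hSig : (∑ l ∈ Finset.range (2*n), -((p*(k+1+l) : ℕ) : ℤ))
      = -((p:ℤ) * (2*(n:ℤ)*((k:ℤ)+1) + (n:ℤ)*(2*(n:ℤ)-1))) := by
    rw [Finset.sum_neg_distrib]
    congr 1
    push_cast
    rw [← Finset.mul_sum]
    congr 1
    rw [Finset.sum_add_distrib, Finset.sum_add_distrib, Finset.sum_const, Finset.sum_const,
      Finset.card_range, sum_range_cast, nsmul_eq_mul, nsmul_eq_mul]
    push_cast
    ring
  rw [hSig]
  have hc : t ^ (-((Y:ℕ) : ℤ)) * (t ^ p) ^ (-(n * k : ℤ))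
      = (t ^ p) ^ (n * (2 * n + 1)) *
        (t⁻¹ ^ Y * (t⁻¹ ^ p) ^ (-(n * k : ℤ)) *
          ((-1:ℂ)^(2*n) * t ^ (-((p:ℤ) * (2*(n:ℤ)*((k:ℤ)+1) + (n:ℤ)*(2*(n:ℤ)-1)))))) := by
    have hsgn : ((-1:ℂ))^(2*n) = 1 := Even.neg_one_pow ⟨n, by ring⟩
    rw [hsgn]
    have e1 : (t ^ p) ^ (-(n * k : ℤ)) = t ^ ((p:ℤ) * (-(n * k : ℤ))) := by
      rw [← zpow_natCast t p, ← zpow_mul]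
    have e2 : (t ^ p) ^ (n * (2 * n + 1)) = t ^ (((p * (n * (2 * n + 1)) : ℕ) : ℤ)) := by
      rw [← pow_mul, zpow_natCast]
    have e3 : t⁻¹ ^ Y = t ^ (-((Y : ℕ) : ℤ)) := by
      rw [inv_pow, ← zpow_natCast, ← zpow_neg]
    have e4 : (t⁻¹ ^ p) ^ (-(n * k : ℤ)) = t ^ (-(p:ℤ) * (-(n * k : ℤ))) := by
      rw [inv_pow, ← zpow_natCast t p, ← zpow_neg, ← zpow_mul]
    rw [e1, e2, e3, e4, one_mul, ← zpow_add₀ ht, ← zpow_add₀ ht, ← zpow_add₀ ht,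
      ← zpow_add₀ ht]
    congr 1
    push_cast
    ring
  linear_combination qPoch ((t ^ p) ^ (k + 1)) (t ^ p) (2 * n) * hc

/-! ### Main theorem -/

/-- There is a Laurent polynomial `P ∈ ℤ[t,t⁻¹]` (encoded as `P₀(t)/t^d` with
`P₀ ∈ ℤ[t]`) such that, with `q := t^p`:
(a) for `0 < |t| < 1`,
`∑_{k≥0, k≡b−n (p)} t^{(n+k)²} q^{−nk} (q^{k+1};q)_{2n}
 − ∑_{k≥0, k≡b−n−1 (p)} t^{(n+k+1)²} q^{−nk} (q^{k+1};q)_{2n} = P(t)`, and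
(b) for `|t| > 1` the analogous series with `t^{−(n+k)²}`, `t^{−(n+k+1)²}` equals
`q^{n(2n+1)} P(t⁻¹)`; all four series converging absolutely. -/
theorem mod_p_theta_substitution_rational (n p : ℕ) (hp : 1 ≤ p) (b : ℤ) :
    ∃ (P : Polynomial ℤ) (d : ℕ),
      (∀ t : ℂ, 0 < ‖t‖ → ‖t‖ < 1 →
        Summable (fun k : ℕ => ‖(if (k : ℤ) ≡ b - n [ZMOD (p : ℤ)] then
            t ^ ((n + k) ^ 2) * (t ^ p) ^ (-(n * k : ℤ)) *
              qPoch ((t ^ p) ^ (k + 1)) (t ^ p) (2 * n) else 0)‖) ∧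
        Summable (fun k : ℕ => ‖(if (k : ℤ) ≡ b - n - 1 [ZMOD (p : ℤ)] then
            t ^ ((n + k + 1) ^ 2) * (t ^ p) ^ (-(n * k : ℤ)) *
              qPoch ((t ^ p) ^ (k + 1)) (t ^ p) (2 * n) else 0)‖) ∧
        (∑' k : ℕ, if (k : ℤ) ≡ b - n [ZMOD (p : ℤ)] then
            t ^ ((n + k) ^ 2) * (t ^ p) ^ (-(n * k : ℤ)) *
              qPoch ((t ^ p) ^ (k + 1)) (t ^ p) (2 * n) else 0) -
        (∑' k : ℕ, if (k : ℤ) ≡ b - n - 1 [ZMOD (p : ℤ)] then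
            t ^ ((n + k + 1) ^ 2) * (t ^ p) ^ (-(n * k : ℤ)) *
              qPoch ((t ^ p) ^ (k + 1)) (t ^ p) (2 * n) else 0)
          = Polynomial.aeval t P / t ^ d) ∧
      (∀ t : ℂ, 1 < ‖t‖ →
        Summable (fun k : ℕ => ‖(if (k : ℤ) ≡ b - n [ZMOD (p : ℤ)] then
            t ^ (-((n + k : ℤ) ^ 2)) * (t ^ p) ^ (-(n * k : ℤ)) *
              qPoch ((t ^ p) ^ (k + 1)) (t ^ p) (2 * n) else 0)‖) ∧
        Summable (fun k : ℕ => ‖(if (k : ℤ) ≡ b - n - 1 [ZMOD (p : ℤ)] then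
            t ^ (-((n + k + 1 : ℤ) ^ 2)) * (t ^ p) ^ (-(n * k : ℤ)) *
              qPoch ((t ^ p) ^ (k + 1)) (t ^ p) (2 * n) else 0)‖) ∧
        (∑' k : ℕ, if (k : ℤ) ≡ b - n [ZMOD (p : ℤ)] then
            t ^ (-((n + k : ℤ) ^ 2)) * (t ^ p) ^ (-(n * k : ℤ)) *
              qPoch ((t ^ p) ^ (k + 1)) (t ^ p) (2 * n) else 0) -
        (∑' k : ℕ, if (k : ℤ) ≡ b - n - 1 [ZMOD (p : ℤ)] then
            t ^ (-((n + k + 1 : ℤ) ^ 2)) * (t ^ p) ^ (-(n * k : ℤ)) *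
              qPoch ((t ^ p) ^ (k + 1)) (t ^ p) (2 * n) else 0)
          = (t ^ p) ^ (n * (2 * n + 1)) * (Polynomial.aeval t⁻¹ P / t⁻¹ ^ d)) := by
  classical
  set lb : Finset ℕ → ℤ := fun S => (n:ℤ) + 1 - (p:ℤ)*((S.card:ℤ) - (n:ℤ)) with hlb
  set W : Finset ℤ := Finset.Ico ((n:ℤ) - (p:ℤ)*(n:ℤ) - 1) ((n:ℤ) + (p:ℤ)*(n:ℤ) + 2) with hW
  set eps : Finset ℕ × ℤ → ℤ := fun Sm =>
    if (p:ℤ) ∣ (Sm.2 - b) then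
      (-1)^Sm.1.card * ((if (n:ℤ) ≤ Sm.2 ∧ Sm.2 < lb Sm.1 then 1 else 0)
        - (if lb Sm.1 ≤ Sm.2 ∧ Sm.2 < (n:ℤ) then 1 else 0)) else 0 with heps
  obtain ⟨P, d, hPd⟩ := laurent_pack (((range (2*n)).powerset) ×ˢ W) eps
    (fun Sm => Eexp n p Sm.1 Sm.2)
  have parta : ∀ t : ℂ, 0 < ‖t‖ → ‖t‖ < 1 →
        Summable (fun k : ℕ => ‖(if (k : ℤ) ≡ b - n [ZMOD (p : ℤ)] then
            t ^ ((n + k) ^ 2) * (t ^ p) ^ (-(n * k : ℤ)) *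
              qPoch ((t ^ p) ^ (k + 1)) (t ^ p) (2 * n) else 0)‖) ∧
        Summable (fun k : ℕ => ‖(if (k : ℤ) ≡ b - n - 1 [ZMOD (p : ℤ)] then
            t ^ ((n + k + 1) ^ 2) * (t ^ p) ^ (-(n * k : ℤ)) *
              qPoch ((t ^ p) ^ (k + 1)) (t ^ p) (2 * n) else 0)‖) ∧
        (∑' k : ℕ, if (k : ℤ) ≡ b - n [ZMOD (p : ℤ)] then
            t ^ ((n + k) ^ 2) * (t ^ p) ^ (-(n * k : ℤ)) *
              qPoch ((t ^ p) ^ (k + 1)) (t ^ p) (2 * n) else 0) -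
        (∑' k : ℕ, if (k : ℤ) ≡ b - n - 1 [ZMOD (p : ℤ)] then
            t ^ ((n + k + 1) ^ 2) * (t ^ p) ^ (-(n * k : ℤ)) *
              qPoch ((t ^ p) ^ (k + 1)) (t ^ p) (2 * n) else 0)
          = Polynomial.aeval t P / t ^ d := by
    intro t h0 h1
    have ht : t ≠ 0 := norm_pos_iff.mp h0
    have htn : ‖t‖ ≤ 1 := h1.le
    -- norm bound for the Pochhammer factor
    have hQ : ∀ k : ℕ, ‖qPoch ((t ^ p) ^ (k + 1)) (t ^ p) (2 * n)‖ ≤ 2 ^ (2 * n) := by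
      intro k
      unfold qPoch
      have hq1 : ‖t ^ p‖ ≤ 1 := by
        rw [norm_pow]; exact pow_le_one₀ (norm_nonneg t) htn
      calc ‖∏ l ∈ range (2*n), (1 - (t ^ p) ^ (k+1) * (t ^ p) ^ l)‖
          ≤ ∏ l ∈ range (2*n), ‖(1 - (t ^ p) ^ (k+1) * (t ^ p) ^ l)‖ := norm_prod_le _ _
        _ ≤ ∏ l ∈ range (2*n), (2:ℝ) := by
            refine Finset.prod_le_prod (fun _ _ => norm_nonneg _) (fun l _ => ?_)
            have c1 : ‖(t ^ p) ^ (k+1)‖ ≤ 1 := by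
              rw [norm_pow]; exact pow_le_one₀ (norm_nonneg _) hq1
            have c2 : ‖(t ^ p) ^ l‖ ≤ 1 := by
              rw [norm_pow]; exact pow_le_one₀ (norm_nonneg _) hq1
            calc ‖(1:ℂ) - (t ^ p) ^ (k+1) * (t ^ p) ^ l‖
                ≤ ‖(1:ℂ)‖ + ‖(t ^ p) ^ (k+1) * (t ^ p) ^ l‖ := norm_sub_le _ _
              _ ≤ 2 := by
                  rw [norm_one, norm_mul]
                  nlinarith [norm_nonneg ((t ^ p) ^ (k+1)), norm_nonneg ((t ^ p) ^ l)]
        _ = 2 ^ (2 * n) := by rw [Finset.prod_const, Finset.card_range]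
    -- norms of the theta factors
    have hnorm1 : ∀ k : ℕ, ‖t ^ ((n + k) ^ 2) * (t ^ p) ^ (-(n * k : ℤ))‖
        = ‖t‖ ^ ((k:ℤ)^2 + (2*(n:ℤ) - p*n)*k + (n:ℤ)^2) := by
      intro k
      rw [norm_mul, norm_pow, norm_zpow, norm_pow, ← zpow_natCast ‖t‖ ((n+k)^2),
        ← zpow_natCast ‖t‖ p, ← zpow_mul, ← zpow_add₀ (norm_ne_zero_iff.mpr ht)]
      congr 1
      push_cast
      ring
    have hnorm2 : ∀ k : ℕ, ‖t ^ ((n + k + 1) ^ 2) * (t ^ p) ^ (-(n * k : ℤ))‖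
        = ‖t‖ ^ ((k:ℤ)^2 + (2*(n:ℤ) + 2 - p*n)*k + ((n:ℤ)+1)^2) := by
      intro k
      rw [norm_mul, norm_pow, norm_zpow, norm_pow, ← zpow_natCast ‖t‖ ((n+k+1)^2),
        ← zpow_natCast ‖t‖ p, ← zpow_mul, ← zpow_add₀ (norm_ne_zero_iff.mpr ht)]
      congr 1
      push_cast
      ring
    have hsum1 : Summable (fun k : ℕ => ‖(if (k : ℤ) ≡ b - n [ZMOD (p : ℤ)] then
        t ^ ((n + k) ^ 2) * (t ^ p) ^ (-(n * k : ℤ)) *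
          qPoch ((t ^ p) ^ (k + 1)) (t ^ p) (2 * n) else 0)‖) := by
      apply summable_quad_of_le t ht h1 (2*(n:ℤ) - p*n) ((n:ℤ)^2) (2 ^ (2*n))
      intro k
      by_cases hc : (k : ℤ) ≡ b - n [ZMOD (p : ℤ)]
      · rw [if_pos hc, norm_mul, hnorm1 k, mul_comm ((2:ℝ) ^ (2*n)) _]
        exact mul_le_mul_of_nonneg_left (hQ k) (zpow_nonneg (norm_nonneg t) _)
      · rw [if_neg hc, norm_zero]
        positivity
    have hsum2 : Summable (fun k : ℕ => ‖(if (k : ℤ) ≡ b - n - 1 [ZMOD (p : ℤ)] then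
        t ^ ((n + k + 1) ^ 2) * (t ^ p) ^ (-(n * k : ℤ)) *
          qPoch ((t ^ p) ^ (k + 1)) (t ^ p) (2 * n) else 0)‖) := by
      apply summable_quad_of_le t ht h1 (2*(n:ℤ) + 2 - p*n) (((n:ℤ)+1)^2) (2 ^ (2*n))
      intro k
      by_cases hc : (k : ℤ) ≡ b - n - 1 [ZMOD (p : ℤ)]
      · rw [if_pos hc, norm_mul, hnorm2 k, mul_comm ((2:ℝ) ^ (2*n)) _]
        exact mul_le_mul_of_nonneg_left (hQ k) (zpow_nonneg (norm_nonneg t) _)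
      · rw [if_neg hc, norm_zero]
        positivity
    refine ⟨hsum1, hsum2, ?_⟩
    -- local series
    set φ : Finset ℕ → ℕ → ℂ := fun S k =>
      if (k : ℤ) ≡ b - n [ZMOD (p : ℤ)] then (-1:ℂ)^S.card * t ^ (Aexp n p S k) else 0 with hφ
    set ψ : Finset ℕ → ℕ → ℂ := fun S k =>
      if (k : ℤ) ≡ b - n - 1 [ZMOD (p : ℤ)] then (-1:ℂ)^S.card * t ^ (Bexp n p S k) else 0 with hψ
    set h : Finset ℕ → ℤ → ℂ := fun S m =>
      if (p:ℤ) ∣ (m - b) then (-1:ℂ)^S.card * t ^ (Eexp n p S m) else 0 with hh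
    set g2 : Finset ℕ → ℤ → ℂ := fun S m =>
      if (n:ℤ) + 1 ≤ m then
        (if (p:ℤ) ∣ (m - b) then (-1:ℂ)^S.card * t ^ (Fexp n p S m) else 0) else 0 with hg2
    have hφs : ∀ S : Finset ℕ, Summable (φ S) := by
      intro S
      apply Summable.of_norm
      apply summable_quad_of_le t ht h1 (2*(n:ℤ) + p*((S.card:ℤ) - n))
        ((n:ℤ)^2 + p*((S.card:ℤ) + ∑ l ∈ S, (l:ℤ))) 1
      intro k
      rw [one_mul]
      simp only [hφ]
      by_cases hc : (k : ℤ) ≡ b - n [ZMOD (p : ℤ)]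
      · rw [if_pos hc, norm_mul, norm_pow, norm_neg, norm_one, one_pow, one_mul, norm_zpow]
        apply le_of_eq
        congr 1
        unfold Aexp
        push_cast
        ring
      · rw [if_neg hc, norm_zero]
        positivity
    have hψs : ∀ S : Finset ℕ, Summable (ψ S) := by
      intro S
      apply Summable.of_norm
      apply summable_quad_of_le t ht h1 (2*(n:ℤ) + 2 + p*((S.card:ℤ) - n))
        (((n:ℤ)+1)^2 + p*((S.card:ℤ) + ∑ l ∈ S, (l:ℤ))) 1
      intro k
      rw [one_mul]
      simp only [hψ]
      by_cases hc : (k : ℤ) ≡ b - n - 1 [ZMOD (p : ℤ)]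
      · rw [if_pos hc, norm_mul, norm_pow, norm_neg, norm_one, one_pow, one_mul, norm_zpow]
        apply le_of_eq
        congr 1
        unfold Bexp
        push_cast
        ring
      · rw [if_neg hc, norm_zero]
        positivity
    have hG : ∀ S : Finset ℕ, ∀ a : ℤ, Summable (fun m : ℤ => if a ≤ m then h S m else 0) := by
      intro S a
      apply summable_indicator_quad t ht h1 ((p:ℤ)*((S.card:ℤ)-n))
        ((p:ℤ)*((S.card:ℤ) + ∑ l ∈ S, (l:ℤ)) - (p:ℤ)*((S.card:ℤ)-n)*n) a
      intro m
      simp only [hh]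
      by_cases hc : (p:ℤ) ∣ (m - b)
      · rw [if_pos hc, norm_mul, norm_pow, norm_neg, norm_one, one_pow, one_mul, norm_zpow]
        apply le_of_eq
        congr 1
        unfold Eexp
        ring
      · rw [if_neg hc, norm_zero]
        positivity
    -- step 1 : expand the first tsum
    have hT1 : (∑' k : ℕ, if (k : ℤ) ≡ b - n [ZMOD (p : ℤ)] then
        t ^ ((n + k) ^ 2) * (t ^ p) ^ (-(n * k : ℤ)) *
          qPoch ((t ^ p) ^ (k + 1)) (t ^ p) (2 * n) else 0)
        = ∑ S ∈ (range (2*n)).powerset, ∑' k : ℕ, φ S k := by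
      rw [← Summable.tsum_finsetSum (fun S _ => hφs S)]
      refine tsum_congr fun k => ?_
      by_cases hc : (k : ℤ) ≡ b - n [ZMOD (p : ℤ)]
      · rw [if_pos hc, term1_expand t ht n p k]
        exact Finset.sum_congr rfl fun S _ => by rw [hφ]; simp only [if_pos hc]
      · rw [if_neg hc]
        symm
        exact Finset.sum_eq_zero fun S _ => by rw [hφ]; simp only [if_neg hc]
    have hT2 : (∑' k : ℕ, if (k : ℤ) ≡ b - n - 1 [ZMOD (p : ℤ)] then
        t ^ ((n + k + 1) ^ 2) * (t ^ p) ^ (-(n * k : ℤ)) *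
          qPoch ((t ^ p) ^ (k + 1)) (t ^ p) (2 * n) else 0)
        = ∑ S ∈ (range (2*n)).powerset, ∑' k : ℕ, ψ S k := by
      rw [← Summable.tsum_finsetSum (fun S _ => hψs S)]
      refine tsum_congr fun k => ?_
      by_cases hc : (k : ℤ) ≡ b - n - 1 [ZMOD (p : ℤ)]
      · rw [if_pos hc, term2_expand t ht n p k]
        exact Finset.sum_congr rfl fun S _ => by rw [hψ]; simp only [if_pos hc]
      · rw [if_neg hc]
        symm
        exact Finset.sum_eq_zero fun S _ => by rw [hψ]; simp only [if_neg hc]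
    -- step 2 : reindex over ℤ
    have hT3 : ∀ S : Finset ℕ, (∑' k : ℕ, φ S k)
        = ∑' m : ℤ, (if (n:ℤ) ≤ m then h S m else 0) := by
      intro S
      have hinj : Function.Injective (fun k : ℕ => (n:ℤ) + k) := fun x y hxy => by
        simpa using hxy
      have hpt : ∀ k : ℕ, φ S k
          = (fun m : ℤ => if (n:ℤ) ≤ m then h S m else 0) ((n:ℤ) + k) := by
        intro k
        simp only [hφ, hh]
        rw [if_pos (show (n:ℤ) ≤ (n:ℤ) + k by omega)]
        refine if_congr ?_ ?_ rfl
        · rw [Int.modEq_iff_dvd, show (n:ℤ) + k - b = -((b - (n:ℤ)) - (k:ℤ)) by ring, dvd_neg]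
        · rw [Eexp_nat n p S k]
      rw [tsum_congr hpt]
      have hsupp : Function.support (fun m : ℤ => if (n:ℤ) ≤ m then h S m else 0)
          ⊆ Set.range (fun k : ℕ => (n:ℤ) + k) := by
        intro m hm
        simp only [Function.mem_support] at hm
        rcases le_or_gt (n:ℤ) m with hle | hlt
        · exact ⟨(m - n).toNat, by simp; omega⟩
        · exact absurd (if_neg (by omega)) hm
      exact hinj.tsum_eq (f := fun m : ℤ => if (n:ℤ) ≤ m then h S m else 0) hsupp
    have hT4 : ∀ S : Finset ℕ, (∑' k : ℕ, ψ S k) = ∑' m : ℤ, g2 S m := by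
      intro S
      have hinj : Function.Injective (fun k : ℕ => (n:ℤ) + 1 + k) := fun x y hxy => by
        simpa using hxy
      have hpt : ∀ k : ℕ, ψ S k = g2 S ((n:ℤ) + 1 + k) := by
        intro k
        simp only [hψ, hg2]
        rw [if_pos (show (n:ℤ) + 1 ≤ (n:ℤ) + 1 + k by omega)]
        refine if_congr ?_ ?_ rfl
        · rw [Int.modEq_iff_dvd,
            show (n:ℤ) + 1 + k - b = -((b - (n:ℤ) - 1) - (k:ℤ)) by ring, dvd_neg]
        · rw [Fexp_nat n p S k]
      rw [tsum_congr hpt]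
      have hsupp : Function.support (g2 S) ⊆ Set.range (fun k : ℕ => (n:ℤ) + 1 + k) := by
        intro m hm
        simp only [Function.mem_support] at hm
        rcases le_or_gt ((n:ℤ)+1) m with hle | hlt
        · exact ⟨(m - n - 1).toNat, by simp; omega⟩
        · refine absurd ?_ hm
          simp only [hg2]
          exact if_neg (by omega)
      exact hinj.tsum_eq (f := g2 S) hsupp
    -- step 3 : the involution
    have hT5 : ∑ S ∈ (range (2*n)).powerset, (∑' m : ℤ, g2 S m)
        = ∑ S ∈ (range (2*n)).powerset, (∑' m : ℤ, g2 (inv2n n S) m) :=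
      Finset.sum_nbij' (inv2n n) (inv2n n)
        (fun S _ => mem_powerset.mpr (inv2n_subset n S))
        (fun S _ => mem_powerset.mpr (inv2n_subset n S))
        (fun S hS => inv2n_invol n S (mem_powerset.mp hS))
        (fun S hS => inv2n_invol n S (mem_powerset.mp hS))
        (fun S hS => by rw [inv2n_invol n S (mem_powerset.mp hS)])
    -- step 4 : shift
    have hT6 : ∀ S : Finset ℕ, S ⊆ range (2*n) → (∑' m : ℤ, g2 (inv2n n S) m)
        = ∑' m : ℤ, (if lb S ≤ m then h S m else 0) := by
      intro S hS
      have hpt : ∀ m : ℤ, (if lb S ≤ m then h S m else 0)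
          = g2 (inv2n n S) ((Equiv.addRight ((p:ℤ)*((S.card:ℤ)-(n:ℤ)))) m) := by
        intro m
        simp only [hh, hg2, Equiv.coe_addRight, hlb]
        refine if_congr ?_ (if_congr ?_ ?_ rfl) rfl
        · constructor <;> intro h' <;> linarith
        · have hd : (p:ℤ) ∣ (p:ℤ)*((S.card:ℤ)-(n:ℤ)) := Dvd.intro _ rfl
          constructor
          · intro h'
            have h2 := h'.add hd
            rwa [show m - b + (p:ℤ)*((S.card:ℤ)-(n:ℤ))
              = m + (p:ℤ)*((S.card:ℤ)-(n:ℤ)) - b by ring] at h2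
          · intro h'
            have h2 := h'.sub hd
            rwa [show m + (p:ℤ)*((S.card:ℤ)-(n:ℤ)) - b - (p:ℤ)*((S.card:ℤ)-(n:ℤ))
              = m - b by ring] at h2
        · rw [sign_inv2n n S hS, Fexp_inv2n n p S hS m]
      rw [tsum_congr hpt, Equiv.tsum_eq]
    -- step 5 : assemble
    rw [hT1, hT2, Finset.sum_congr rfl (fun S _ => hT3 S),
      Finset.sum_congr rfl (fun S _ => hT4 S), hT5,
      Finset.sum_congr rfl (fun S hS => hT6 S (mem_powerset.mp hS)),
      ← Finset.sum_sub_distrib,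
      Finset.sum_congr rfl (fun S _ => tsum_shift_diff (h S) (hG S) (n:ℤ) (lb S)),
      ← hPd t ht, Finset.sum_product]
    refine Finset.sum_congr rfl fun S hS => ?_
    have hSsub := mem_powerset.mp hS
    have hcard : (S.card:ℤ) ≤ 2*(n:ℤ) := by
      have := card_le_two_n n S hSsub
      exact_mod_cast this
    have hcard0 : (0:ℤ) ≤ (S.card:ℤ) := Int.natCast_nonneg _
    have hp0 : (0:ℤ) ≤ (p:ℤ) := Int.natCast_nonneg _
    have hα1 : (p:ℤ)*((S.card:ℤ)-(n:ℤ)) ≤ (p:ℤ)*(n:ℤ) :=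
      mul_le_mul_of_nonneg_left (by linarith) hp0
    have hα2 : -((p:ℤ)*(n:ℤ)) ≤ (p:ℤ)*((S.card:ℤ)-(n:ℤ)) := by
      rw [← mul_neg]
      exact mul_le_mul_of_nonneg_left (by linarith) hp0
    have hsub1 : Finset.Ico (n:ℤ) (lb S) ⊆ W := by
      intro m hm
      rw [Finset.mem_Ico] at hm
      rw [hW, Finset.mem_Ico]
      simp only [hlb] at hm
      constructor <;> linarith [hm.1, hm.2]
    have hsub2 : Finset.Ico (lb S) (n:ℤ) ⊆ W := by
      intro m hm
      rw [Finset.mem_Ico] at hm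
      rw [hW, Finset.mem_Ico]
      simp only [hlb] at hm
      constructor <;> linarith [hm.1, hm.2]
    symm
    have e1 : ∀ m ∈ W, ((eps (S, m) : ℤ) : ℂ) * t ^ (Eexp n p S m)
        = (if m ∈ Finset.Ico (n:ℤ) (lb S) then h S m else 0)
          - (if m ∈ Finset.Ico (lb S) (n:ℤ) then h S m else 0) := by
      intro m _
      simp only [heps, hh, Finset.mem_Ico]
      split_ifs <;> push_cast <;> first | ring | (exfalso; omega)
    calc ∑ m ∈ W, ((eps (S, m) : ℤ) : ℂ) * t ^ (Eexp n p S m)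
        = ∑ m ∈ W, ((if m ∈ Finset.Ico (n:ℤ) (lb S) then h S m else 0)
          - (if m ∈ Finset.Ico (lb S) (n:ℤ) then h S m else 0)) := Finset.sum_congr rfl e1
      _ = (∑ m ∈ W, if m ∈ Finset.Ico (n:ℤ) (lb S) then h S m else 0)
          - ∑ m ∈ W, if m ∈ Finset.Ico (lb S) (n:ℤ) then h S m else 0 :=
            Finset.sum_sub_distrib _ _
      _ = (∑ m ∈ Finset.Ico (n:ℤ) (lb S), h S m) - ∑ m ∈ Finset.Ico (lb S) (n:ℤ), h S m := by
            rw [Finset.sum_ite_mem, Finset.sum_ite_mem,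
              Finset.inter_eq_right.mpr hsub1, Finset.inter_eq_right.mpr hsub2]
  refine ⟨P, d, parta, ?_⟩
  intro t htb
  have ht : t ≠ 0 := by
    intro hh
    rw [hh, norm_zero] at htb
    linarith
  have hti : t⁻¹ ≠ 0 := inv_ne_zero ht
  have h0' : 0 < ‖t⁻¹‖ := norm_pos_iff.mpr hti
  have h1' : ‖t⁻¹‖ < 1 := by
    rw [norm_inv]
    exact inv_lt_one_of_one_lt₀ htb
  obtain ⟨hs1, hs2, heq⟩ := parta t⁻¹ h0' h1'
  have hflip1 : ∀ k : ℕ, (if (k : ℤ) ≡ b - n [ZMOD (p : ℤ)] then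
      t ^ (-((n + k : ℤ) ^ 2)) * (t ^ p) ^ (-(n * k : ℤ)) *
        qPoch ((t ^ p) ^ (k + 1)) (t ^ p) (2 * n) else 0)
      = (t ^ p) ^ (n * (2 * n + 1)) * (if (k : ℤ) ≡ b - n [ZMOD (p : ℤ)] then
          t⁻¹ ^ ((n + k) ^ 2) * (t⁻¹ ^ p) ^ (-(n * k : ℤ)) *
            qPoch ((t⁻¹ ^ p) ^ (k + 1)) (t⁻¹ ^ p) (2 * n) else 0) := by
    intro k
    split_ifs with hc
    · rw [show t ^ (-((n + k : ℤ) ^ 2)) = t ^ (-((((n + k) ^ 2 : ℕ)) : ℤ)) by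
        congr 1 <;> push_cast <;> ring_nf]
      exact term_flip t ht n p k ((n + k) ^ 2)
    · rw [mul_zero]
  have hflip2 : ∀ k : ℕ, (if (k : ℤ) ≡ b - n - 1 [ZMOD (p : ℤ)] then
      t ^ (-((n + k + 1 : ℤ) ^ 2)) * (t ^ p) ^ (-(n * k : ℤ)) *
        qPoch ((t ^ p) ^ (k + 1)) (t ^ p) (2 * n) else 0)
      = (t ^ p) ^ (n * (2 * n + 1)) * (if (k : ℤ) ≡ b - n - 1 [ZMOD (p : ℤ)] then
          t⁻¹ ^ ((n + k + 1) ^ 2) * (t⁻¹ ^ p) ^ (-(n * k : ℤ)) *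
            qPoch ((t⁻¹ ^ p) ^ (k + 1)) (t⁻¹ ^ p) (2 * n) else 0) := by
    intro k
    split_ifs with hc
    · rw [show t ^ (-((n + k + 1 : ℤ) ^ 2)) = t ^ (-((((n + k + 1) ^ 2 : ℕ)) : ℤ)) by
        congr 1 <;> push_cast <;> ring_nf]
      exact term_flip t ht n p k ((n + k + 1) ^ 2)
    · rw [mul_zero]
  refine ⟨?_, ?_, ?_⟩
  · refine Summable.congr (hs1.mul_left ‖(t ^ p) ^ (n * (2 * n + 1))‖) fun k => ?_
    rw [← norm_mul, ← hflip1 k]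
  · refine Summable.congr (hs2.mul_left ‖(t ^ p) ^ (n * (2 * n + 1))‖) fun k => ?_
    rw [← norm_mul, ← hflip2 k]
  · rw [tsum_congr hflip1, tsum_congr hflip2, tsum_mul_left, tsum_mul_left,
      ← mul_sub, heq]
end

section
/- Fix a complex number q with 0 < |q| < 1 and let (a_i)_{i≥0} be a sequence of complex numbers such that the doubly-indexed family ( a_i · q^{−i(j−i)} C_q(j+i, 2i) · (q^{j²} − q^{(j+1)²}) ) over pairs 0 ≤ i ≤ j is absolutely summable. Define f_j := ∑_{i=0}^{j} q^{−i(j−i)} C_q(j+i, 2i) a_i. Then the series ∑_{i≥0} a_i · q^{i²}/(q^{i+1};q)_i and ∑_{j≥0} f_j · (q^{j²} − q^{(j+1)²}) both converge and are equal. -/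
namespace MOSaux

variable {q : ℂ}

lemma one_sub_pow_ne (hq1 : ‖q‖ < 1) {n : ℕ} (hn : n ≠ 0) : (1 : ℂ) - q ^ n ≠ 0 := by
  intro h
  have hqn : q ^ n = 1 := by linear_combination -h
  have h2 : ‖q ^ n‖ < 1 := by
    rw [norm_pow]
    calc ‖q‖ ^ n ≤ ‖q‖ ^ 1 :=
      pow_le_pow_of_le_one (norm_nonneg q) hq1.le (Nat.one_le_iff_ne_zero.mpr hn)
    _ < 1 := by simpa using hq1
  rw [hqn] at h2; simp at h2

lemma qPoch_q_ne (hq1 : ‖q‖ < 1) (m : ℕ) : qPoch q q m ≠ 0 := by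
  unfold qPoch
  rw [Finset.prod_ne_zero_iff]
  intro l _
  have h : (1 : ℂ) - q * q ^ l = 1 - q ^ (l + 1) := by ring
  rw [h]
  exact one_sub_pow_ne hq1 (Nat.succ_ne_zero l)

lemma qPoch_pow_ne (hq1 : ‖q‖ < 1) {s : ℕ} (hs : s ≠ 0) (m : ℕ) : qPoch (q ^ s) q m ≠ 0 := by
  unfold qPoch
  rw [Finset.prod_ne_zero_iff]
  intro l _
  have h : (1 : ℂ) - q ^ s * q ^ l = 1 - q ^ (s + l) := by rw [← pow_add]
  rw [h]
  exact one_sub_pow_ne hq1 (by omega)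

lemma qPoch_succ (x : ℂ) (b : ℕ) : qPoch x q (b + 1) = qPoch x q b * (1 - x * q ^ b) :=
  Finset.prod_range_succ _ b

lemma qPoch_shift (x : ℂ) (b : ℕ) : qPoch x q (b + 1) = (1 - x) * qPoch (x * q) q b := by
  unfold qPoch
  rw [Finset.prod_range_succ']
  rw [show (1 - x * q ^ 0) = 1 - x by simp]
  rw [mul_comm]
  congr 1
  exact Finset.prod_congr rfl fun l _ => by ring

lemma qPoch_split (m n : ℕ) : qPoch q q (m + n) = qPoch q q m * qPoch (q ^ (m + 1)) q n := by
  unfold qPoch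
  rw [Finset.prod_range_add]
  congr 1
  exact Finset.prod_congr rfl fun l _ => by rw [← pow_add]; ring_nf

noncomputable def trm (q : ℂ) (a b k : ℕ) : ℂ :=
  q ^ (k ^ 2 + a * k) * qPoch (q ^ (k + 1)) q b

lemma trm_norm_le (hq1 : ‖q‖ < 1) (a b k : ℕ) : ‖trm q a b k‖ ≤ 2 ^ b * ‖q‖ ^ k := by
  unfold trm qPoch
  rw [norm_mul, norm_pow]
  have h1 : ‖q‖ ^ (k ^ 2 + a * k) ≤ ‖q‖ ^ k := by
    apply pow_le_pow_of_le_one (norm_nonneg q) hq1.le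
    have : k ≤ k ^ 2 := Nat.le_self_pow two_ne_zero k
    omega
  have h2 : ‖∏ l ∈ Finset.range b, (1 - q ^ (k + 1) * q ^ l)‖ ≤ 2 ^ b := by
    rw [norm_prod]
    calc ∏ l ∈ Finset.range b, ‖1 - q ^ (k + 1) * q ^ l‖
        ≤ ∏ l ∈ Finset.range b, 2 := by
          apply Finset.prod_le_prod (fun l _ => norm_nonneg _)
          intro l _
          calc ‖1 - q ^ (k + 1) * q ^ l‖ ≤ ‖(1 : ℂ)‖ + ‖q ^ (k + 1) * q ^ l‖ := norm_sub_le _ _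
          _ ≤ 1 + 1 := by
              rw [norm_one, ← pow_add, norm_pow]
              have := pow_le_one₀ (norm_nonneg q) hq1.le (n := k + 1 + l)
              linarith
          _ = 2 := by norm_num
      _ = 2 ^ b := by rw [Finset.prod_const, Finset.card_range]
  calc ‖q‖ ^ (k ^ 2 + a * k) * ‖∏ l ∈ Finset.range b, (1 - q ^ (k + 1) * q ^ l)‖
      ≤ ‖q‖ ^ k * 2 ^ b :=
        mul_le_mul h1 h2 (norm_nonneg _) (pow_nonneg (norm_nonneg q) k)
    _ = 2 ^ b * ‖q‖ ^ k := by ring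

lemma trm_summable (hq1 : ‖q‖ < 1) (a b : ℕ) : Summable (trm q a b) :=
  Summable.of_norm_bounded ((summable_geometric_of_lt_one (norm_nonneg q) hq1).mul_left _)
    (trm_norm_le hq1 a b)

noncomputable def Gs (q : ℂ) (a b : ℕ) : ℂ := ∑' k, trm q a b k

lemma hasSum_Gs (hq1 : ‖q‖ < 1) (a b : ℕ) : HasSum (trm q a b) (Gs q a b) :=
  (trm_summable hq1 a b).hasSum

lemma r1 (hq1 : ‖q‖ < 1) (a b : ℕ) :
    Gs q a (b + 1) = Gs q a b - q ^ (b + 1) * Gs q (a + 1) b := by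
  refine (hasSum_Gs hq1 a (b + 1)).unique ?_
  refine HasSum.congr_fun
    ((hasSum_Gs hq1 a b).sub ((hasSum_Gs hq1 (a + 1) b).mul_left (q ^ (b + 1)))) fun k => ?_
  simp only [trm, qPoch_succ]
  ring

lemma r2 (hq1 : ‖q‖ < 1) (a b : ℕ) :
    Gs q a b = Gs q (a + 1) b + q ^ (a + 1) * Gs q (a + 2) (b + 1) := by
  set h : ℕ → ℂ := fun k => trm q a b k - trm q (a + 1) b k with hh
  have hs1 : HasSum h (Gs q a b - Gs q (a + 1) b) :=
    (hasSum_Gs hq1 a b).sub (hasSum_Gs hq1 (a + 1) b)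
  have hshift : ∀ k, h (k + 1) = q ^ (a + 1) * trm q (a + 2) (b + 1) k := by
    intro k
    have key : qPoch (q ^ (k + 1)) q (b + 1) = (1 - q ^ (k + 1)) * qPoch (q ^ (k + 2)) q b := by
      have := qPoch_shift (q := q) (q ^ (k + 1)) b
      rw [this, ← pow_succ]
    simp only [hh, trm, key]
    ring
  have hs2 : HasSum (fun k => h (k + 1)) (q ^ (a + 1) * Gs q (a + 2) (b + 1)) := by
    refine HasSum.congr_fun ((hasSum_Gs hq1 (a + 2) (b + 1)).mul_left (q ^ (a + 1)))
      fun k => hshift k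
  have hs3 := (hasSum_nat_add_iff 1).mp hs2
  have h0 : ∑ i ∈ Finset.range 1, h i = 0 := by
    simp [hh, trm]
  rw [h0, add_zero] at hs3
  have := hs1.unique hs3
  linear_combination this

lemma r3 (hq1 : ‖q‖ < 1) (a b : ℕ) :
    Gs q a b = Gs q (a + 1) b + q ^ (a + 1) * Gs q (a + 2) b
      - q ^ (a + 1) * q ^ (b + 1) * Gs q (a + 3) b := by
  have h1 := r2 hq1 a b
  have h2 := r1 hq1 (a + 2) b
  have h3 : Gs q (a + 2 + 1) b = Gs q (a + 3) b := rfl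
  rw [h3] at h2
  linear_combination h1 + q ^ (a + 1) * h2

lemma r1' (hq1 : ‖q‖ < 1) (a a' b b' : ℕ) (ha : a' = a + 1) (hb : b' = b + 1) :
    Gs q a b' = Gs q a b - q ^ b' * Gs q a' b := by
  subst ha hb; exact r1 hq1 a b

lemma r3' (hq1 : ‖q‖ < 1) (a a1 a2 a3 b : ℕ) (h1 : a1 = a + 1) (h2 : a2 = a + 2)
    (h3 : a3 = a + 3) :
    Gs q a b = Gs q a1 b + q ^ (a + 1) * Gs q a2 b - q ^ (a + 1) * q ^ (b + 1) * Gs q a3 b := by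
  subst h1 h2 h3; exact r3 hq1 a b

lemma tendsto_qpow_sq (hq1 : ‖q‖ < 1) :
    Filter.Tendsto (fun k : ℕ => (q ^ (k ^ 2) : ℂ)) Filter.atTop (nhds 0) := by
  have hb : ∀ k : ℕ, ‖(q ^ (k ^ 2) : ℂ)‖ ≤ ‖q‖ ^ k := by
    intro k
    rw [norm_pow]
    apply pow_le_pow_of_le_one (norm_nonneg q) hq1.le
    exact Nat.le_self_pow two_ne_zero k
  exact squeeze_zero_norm hb (tendsto_pow_atTop_nhds_zero_of_lt_one (norm_nonneg q) hq1)

lemma hasSum_telescope (hq1 : ‖q‖ < 1) :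
    HasSum (fun k : ℕ => (q ^ (k ^ 2) - q ^ ((k + 1) ^ 2) : ℂ)) 1 := by
  have hb : ∀ k : ℕ, ‖(q ^ (k ^ 2) : ℂ)‖ ≤ ‖q‖ ^ k := by
    intro k
    rw [norm_pow]
    apply pow_le_pow_of_le_one (norm_nonneg q) hq1.le
    exact Nat.le_self_pow two_ne_zero k
  have hc : Summable (fun k : ℕ => (q ^ (k ^ 2) : ℂ)) :=
    Summable.of_norm_bounded (summable_geometric_of_lt_one (norm_nonneg q) hq1) hb
  have hc1 : Summable (fun k : ℕ => (q ^ ((k + 1) ^ 2) : ℂ)) := by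
    have h := (summable_nat_add_iff (f := fun k : ℕ => (q ^ (k ^ 2) : ℂ)) 1).mpr hc
    exact h
  have hsb : Summable (fun k : ℕ => (q ^ (k ^ 2) - q ^ ((k + 1) ^ 2) : ℂ)) := hc.sub hc1
  have h1 : Filter.Tendsto (fun n => ∑ k ∈ Finset.range n, (q ^ (k ^ 2) - q ^ ((k + 1) ^ 2) : ℂ))
      Filter.atTop (nhds 1) := by
    have heq : ∀ n, ∑ k ∈ Finset.range n, (q ^ (k ^ 2) - q ^ ((k + 1) ^ 2) : ℂ)
        = 1 - q ^ (n ^ 2) := by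
      intro n
      rw [Finset.sum_range_sub' (fun k => (q ^ (k ^ 2) : ℂ)) n]
      norm_num
    simp only [heq]
    simpa using tendsto_const_nhds.sub (tendsto_qpow_sq hq1)
  have h2 := hsb.hasSum.tendsto_sum_nat
  have h3 : ∑' k : ℕ, (q ^ (k ^ 2) - q ^ ((k + 1) ^ 2) : ℂ) = 1 := tendsto_nhds_unique h2 h1
  exact h3 ▸ hsb.hasSum

lemma phi (hq1 : ‖q‖ < 1) : ∀ i : ℕ,
    Gs q i (2 * i) - q ^ (2 * i + 1) * Gs q (i + 2) (2 * i) = qPoch q q i := by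
  intro i
  induction i with
  | zero =>
    have hGs : HasSum (fun k => trm q 0 (2 * 0) k - q ^ (2 * 0 + 1) * trm q 2 (2 * 0) k)
        (Gs q 0 (2 * 0) - q ^ (2 * 0 + 1) * Gs q 2 (2 * 0)) :=
      (hasSum_Gs hq1 0 (2 * 0)).sub ((hasSum_Gs hq1 2 (2 * 0)).mul_left _)
    have heq : ∀ k, trm q 0 (2 * 0) k - q ^ (2 * 0 + 1) * trm q 2 (2 * 0) k
        = q ^ (k ^ 2) - q ^ ((k + 1) ^ 2) := by
      intro k
      simp only [trm, Nat.mul_zero, qPoch]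
      simp only [Finset.range_zero, Finset.prod_empty]
      ring
    have h1 : HasSum (fun k => trm q 0 (2 * 0) k - q ^ (2 * 0 + 1) * trm q 2 (2 * 0) k) 1 :=
      HasSum.congr_fun (hasSum_telescope hq1) fun k => heq k
    have := hGs.unique h1
    rw [this]
    simp [qPoch]
  | succ i ih =>
    have key : Gs q (i + 1) (2 * i + 2) - q ^ (2 * i + 3) * Gs q (i + 3) (2 * i + 2)
        = qPoch q q (i + 1) := by
      have hZ1 := r1' hq1 (i + 1) (i + 2) (2 * i + 1) (2 * i + 2) rfl rfl
      have hZ3 := r1' hq1 (i + 3) (i + 4) (2 * i + 1) (2 * i + 2) rfl rfl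
      have hY1 := r1' hq1 (i + 1) (i + 2) (2 * i) (2 * i + 1) rfl rfl
      have hY2 := r1' hq1 (i + 2) (i + 3) (2 * i) (2 * i + 1) rfl rfl
      have hY3 := r1' hq1 (i + 3) (i + 4) (2 * i) (2 * i + 1) rfl rfl
      have hY4 := r1' hq1 (i + 4) (i + 5) (2 * i) (2 * i + 1) rfl rfl
      have hC0 := r3' hq1 i (i + 1) (i + 2) (i + 3) (2 * i) rfl rfl rfl
      have hC1 := r3' hq1 (i + 1) (i + 2) (i + 3) (i + 4) (2 * i) rfl rfl rfl
      have hC2 := r3' hq1 (i + 2) (i + 3) (i + 4) (i + 5) (2 * i) rfl rfl rfl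
      have hP : qPoch q q (i + 1) = qPoch q q i * (1 - q * q ^ i) := qPoch_succ q i
      linear_combination hZ1 - q ^ (2 * i + 3) * hZ3 + hY1 - q ^ (2 * i + 2) * hY2
        - q ^ (2 * i + 3) * hY3 + q ^ (4 * i + 5) * hY4 - (1 - q ^ (i + 1)) * hC0
        + q ^ (i + 1) * hC1 - q ^ (3 * i + 2) * hC2 + (1 - q ^ (i + 1)) * ih - hP
    have e1 : 2 * (i + 1) = 2 * i + 2 := by ring
    rw [e1]
    exact key

lemma hasSum_row (hq0 : q ≠ 0) (hq1 : ‖q‖ < 1) (i : ℕ) :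
    HasSum (fun j : ℕ => if i ≤ j then
        (q ^ (-(i * (j - i) : ℤ)) * qBinom q (j + i) (2 * i)) *
          (q ^ (j ^ 2) - q ^ ((j + 1) ^ 2)) else 0)
      (q ^ (i ^ 2) / qPoch (q ^ (i + 1)) q i) := by
  have hΦ : HasSum (fun k => trm q i (2 * i) k - q ^ (2 * i + 1) * trm q (i + 2) (2 * i) k)
      (qPoch q q i) := by
    have h := (hasSum_Gs hq1 i (2 * i)).sub
      ((hasSum_Gs hq1 (i + 2) (2 * i)).mul_left (q ^ (2 * i + 1)))
    rwa [phi hq1 i] at h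
  have h2 := hΦ.mul_left (q ^ (i ^ 2) / qPoch q q (2 * i))
  have hval : q ^ (i ^ 2) / qPoch q q (2 * i) * qPoch q q i
      = q ^ (i ^ 2) / qPoch (q ^ (i + 1)) q i := by
    have hsplit : qPoch q q (2 * i) = qPoch q q i * qPoch (q ^ (i + 1)) q i := by
      have h2i : 2 * i = i + i := by ring
      rw [h2i, qPoch_split]
    rw [hsplit]
    have hne1 := qPoch_q_ne hq1 i
    have hne2 := qPoch_pow_ne hq1 (Nat.succ_ne_zero i) i
    field_simp
  rw [hval] at h2
  refine (Function.Injective.hasSum_iff (g := fun k => i + k) (fun a b h => add_left_cancel h) ?_).mp ?_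
  · intro x hx
    have hnle : ¬ i ≤ x := by
      intro hle
      exact hx ⟨x - i, by show i + (x - i) = x; omega⟩
    simp [hnle]
  · refine HasSum.congr_fun h2 fun k => ?_
    show (if i ≤ i + k then _ else 0) = _
    rw [if_pos (Nat.le_add_right i k)]
    have hz : (-(i * ((i + k : ℕ) - i) : ℤ)) = -((i * k : ℕ) : ℤ) := by push_cast; ring
    rw [hz, zpow_neg, zpow_natCast]
    have hbin : qBinom q ((i + k) + i) (2 * i)
        = (qPoch q q k * qPoch (q ^ (k + 1)) q (2 * i)) / (qPoch q q (2 * i) * qPoch q q k) := by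
      unfold qBinom
      have hs1 : (i + k) + i = k + 2 * i := by ring
      have hs2 : (i + k) + i - 2 * i = k := by omega
      rw [hs2, hs1, qPoch_split]
    rw [hbin]
    unfold trm
    have hk := qPoch_q_ne hq1 k
    have h2i := qPoch_q_ne hq1 (2 * i)
    have hqik : (q : ℂ) ^ (i * k) ≠ 0 := pow_ne_zero _ hq0
    field_simp
    ring

end MOSaux

open MOSaux

/-- Analytic content of the `−1`-surgery formula: if the double family
`a_i q^{−i(j−i)} C_q(j+i,2i) (q^{j²} − q^{(j+1)²})` over pairs `0 ≤ i ≤ j`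
is absolutely summable and `f_j := ∑_{i=0}^{j} q^{−i(j−i)} C_q(j+i,2i) a_i`, then
`∑_i a_i q^{i²}/(q^{i+1};q)_i` and `∑_j f_j (q^{j²} − q^{(j+1)²})` both converge
and are equal. -/
theorem minus_one_surgery_two_bases (q : ℂ) (hq0 : 0 < ‖q‖) (hq1 : ‖q‖ < 1)
    (a f : ℕ → ℂ)
    (hsum : Summable fun p : ℕ × ℕ =>
      ‖(if p.1 ≤ p.2 then
          a p.1 * (q ^ (-(p.1 * (p.2 - p.1) : ℤ)) * qBinom q (p.2 + p.1) (2 * p.1)) *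
            (q ^ (p.2 ^ 2) - q ^ ((p.2 + 1) ^ 2))
        else 0 : ℂ)‖)
    (hf : ∀ j : ℕ, f j = ∑ i ∈ Finset.range (j + 1),
        q ^ (-(i * (j - i) : ℤ)) * qBinom q (j + i) (2 * i) * a i) :
    Summable (fun i : ℕ => a i * (q ^ (i ^ 2) / qPoch (q ^ (i + 1)) q i)) ∧
    Summable (fun j : ℕ => f j * (q ^ (j ^ 2) - q ^ ((j + 1) ^ 2))) ∧
    ∑' i : ℕ, a i * (q ^ (i ^ 2) / qPoch (q ^ (i + 1)) q i)
      = ∑' j : ℕ, f j * (q ^ (j ^ 2) - q ^ ((j + 1) ^ 2)) := by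
  have hq : q ≠ 0 := norm_pos_iff.mp hq0
  set F : ℕ × ℕ → ℂ := fun p =>
    if p.1 ≤ p.2 then
      a p.1 * (q ^ (-(p.1 * (p.2 - p.1) : ℤ)) * qBinom q (p.2 + p.1) (2 * p.1)) *
        (q ^ (p.2 ^ 2) - q ^ ((p.2 + 1) ^ 2))
    else 0 with hF
  have hFsummable : Summable F := Summable.of_norm hsum
  have hFsum : HasSum F (∑' p, F p) := hFsummable.hasSum
  -- rows
  have hrow : ∀ i : ℕ, HasSum (fun j => F (i, j))
      (a i * (q ^ (i ^ 2) / qPoch (q ^ (i + 1)) q i)) := by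
    intro i
    have h := (hasSum_row hq hq1 i).mul_left (a i)
    refine HasSum.congr_fun h fun j => ?_
    simp only [hF]
    by_cases hij : i ≤ j
    · rw [if_pos hij, if_pos hij]
      ring
    · rw [if_neg hij, if_neg hij, mul_zero]
  have hRow : HasSum (fun i => a i * (q ^ (i ^ 2) / qPoch (q ^ (i + 1)) q i)) (∑' p, F p) :=
    hFsum.prod_fiberwise hrow
  -- columns
  have hcol : ∀ j : ℕ, HasSum (fun i => F (i, j))
      (f j * (q ^ (j ^ 2) - q ^ ((j + 1) ^ 2))) := by
    intro j
    have hfin : ∀ i ∉ Finset.range (j + 1), F (i, j) = 0 := by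
      intro i hi
      simp only [Finset.mem_range] at hi
      have : ¬ i ≤ j := by omega
      simp [hF, this]
    have h : HasSum (fun i => F (i, j)) (∑ i ∈ Finset.range (j + 1), F (i, j)) :=
      hasSum_sum_of_ne_finset_zero hfin
    have heq : ∑ i ∈ Finset.range (j + 1), F (i, j)
        = f j * (q ^ (j ^ 2) - q ^ ((j + 1) ^ 2)) := by
      rw [hf j, Finset.sum_mul]
      refine Finset.sum_congr rfl fun i hi => ?_
      simp only [Finset.mem_range] at hi
      have hij : i ≤ j := by omega
      simp only [hF, if_pos hij]
      ring
    rwa [heq] at h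
  have hswap : HasSum (F ∘ (Equiv.prodComm ℕ ℕ)) (∑' p, F p) :=
    (Equiv.hasSum_iff (Equiv.prodComm ℕ ℕ)).mpr hFsum
  have hCol : HasSum (fun j => f j * (q ^ (j ^ 2) - q ^ ((j + 1) ^ 2))) (∑' p, F p) :=
    hswap.prod_fiberwise fun j => hcol j
  exact ⟨hRow.summable, hCol.summable, hRow.tsum_eq.trans hCol.tsum_eq.symm⟩
end
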